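/- arXiv:1110.1791 — 9 statements merged into one kernel-verified Lean document; each statement's English description precedes it below -/
import Mathlib

section
/- Assume conditions (P) and (S), and define τ = (τ₁, τ₂) by τ_i = sup{θ_i : θ ∈ 𝒟^(1) ∩ 𝒟^(2)} for i = 1, 2. Then: in Category I, τ = (θ^(1,Γ)₁, θ^(2,Γ)₂); in Category II, τ = θ̃^(2,r); in Category III, τ = θ̃^(1,r). -/
set_option maxHeartbeats 1000000


open Matrix Set

noncomputable section

abbrev V : Type := Fin 2 → ℝ

def gam (S : Matrix (Fin 2) (Fin 2) ℝ) (μ : V) (θ : V) : ℝ :=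
  -(1/2) * (θ ⬝ᵥ S.mulVec θ) - μ ⬝ᵥ θ

def gam1 (R : Matrix (Fin 2) (Fin 2) ℝ) (θ : V) : ℝ := R 0 0 * θ 0 + R 1 0 * θ 1
def gam2 (R : Matrix (Fin 2) (Fin 2) ℝ) (θ : V) : ℝ := R 0 1 * θ 0 + R 1 1 * θ 1

def condP (R : Matrix (Fin 2) (Fin 2) ℝ) : Prop :=
  0 < R 0 0 ∧ 0 < R 1 1 ∧ 0 < R 0 0 * R 1 1 - R 0 1 * R 1 0

def condS (μ : V) (R : Matrix (Fin 2) (Fin 2) ℝ) : Prop :=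
  R 1 1 * μ 0 - R 0 1 * μ 1 < 0 ∧ R 0 0 * μ 1 - R 1 0 * μ 0 < 0

def pvec1 (R : Matrix (Fin 2) (Fin 2) ℝ) : V := ![R 1 1, -(R 0 1)]
def pvec2 (R : Matrix (Fin 2) (Fin 2) ℝ) : V := ![-(R 1 0), R 0 0]

def θray1 (S : Matrix (Fin 2) (Fin 2) ℝ) (μ : V) (R : Matrix (Fin 2) (Fin 2) ℝ) : V :=
  (-2 * (μ ⬝ᵥ pvec1 R) / (pvec1 R ⬝ᵥ S.mulVec (pvec1 R))) • pvec1 R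

def θray2 (S : Matrix (Fin 2) (Fin 2) ℝ) (μ : V) (R : Matrix (Fin 2) (Fin 2) ℝ) : V :=
  (-2 * (μ ⬝ᵥ pvec2 R) / (pvec2 R ⬝ᵥ S.mulVec (pvec2 R))) • pvec2 R

def Gam (S : Matrix (Fin 2) (Fin 2) ℝ) (μ : V) : Set V := {θ | 0 < gam S μ θ}

def ltc (θ θ' : V) : Prop := ∀ i, θ i < θ' i

def Gmax (S : Matrix (Fin 2) (Fin 2) ℝ) (μ : V) : Set V :=
  {θ | ∃ θ' ∈ Gam S μ, ltc θ θ'}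

def Dset (S : Matrix (Fin 2) (Fin 2) ℝ) (μ : V) (i : Fin 2) (c : ℝ) : Set V :=
  {θ | ∃ θ' ∈ Gam S μ, ltc θ θ' ∧ θ' i < c}



def Gs (s00 s01 s11 a0 a1 x y : ℝ) : ℝ :=
  -(1/2)*(s00*x^2 + 2*s01*x*y + s11*y^2) - a0*x - a1*y

section Core
variable {s00 s01 s11 a0 a1 : ℝ}

lemma quad_pos (h0 : 0 < s00) (hd : 0 < s00*s11 - s01^2) {x y : ℝ}
    (hxy : x ≠ 0 ∨ y ≠ 0) : 0 < s00*x^2 + 2*s01*x*y + s11*y^2 := by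
  rcases eq_or_ne y 0 with hy | hy
  · subst hy
    have hx : x ≠ 0 := by tauto
    have : 0 < x^2 := by positivity
    nlinarith
  · have h1 : 0 < (s00*x + s01*y)^2 + (s00*s11 - s01^2)*y^2 := by positivity
    nlinarith [sq_nonneg (s00*x + s01*y)]

lemma quad_nonneg (h0 : 0 < s00) (hd : 0 < s00*s11 - s01^2) (x y : ℝ) :
    0 ≤ s00*x^2 + 2*s01*x*y + s11*y^2 := by
  nlinarith [sq_nonneg (s00*x + s01*y), sq_nonneg y]

lemma quad_eq_zero (h0 : 0 < s00) (hd : 0 < s00*s11 - s01^2) {x y : ℝ}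
    (h : s00*x^2 + 2*s01*x*y + s11*y^2 = 0) : x = 0 ∧ y = 0 := by
  by_contra hc
  have hxy : x ≠ 0 ∨ y ≠ 0 := by tauto
  have := quad_pos h0 hd hxy
  linarith

lemma Gshift0 (x y d : ℝ) : Gs s00 s01 s11 a0 a1 (x+d) y =
    Gs s00 s01 s11 a0 a1 x y - d*(s00*x + s01*y + a0) - d^2*s00/2 := by
  unfold Gs; ring

lemma Gshift1 (x y d : ℝ) : Gs s00 s01 s11 a0 a1 x (y+d) =
    Gs s00 s01 s11 a0 a1 x y - d*(s01*x + s11*y + a1) - d^2*s11/2 := by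
  unfold Gs; ring


lemma root_id {s00 s01 s11 a0 a1 x y g b r d : ℝ}
    (hg : Gs s00 s01 s11 a0 a1 x y = g) (hb : b = s00*x + s01*y + a0)
    (hrsq : r^2 = b^2 + 2*s00*g) (hd : s00*d = r - b) (h0 : s00 ≠ 0) :
    Gs s00 s01 s11 a0 a1 (x+d) y = 0 := by
  rw [Gshift0, hg, ← hb]
  have h2 : 2*s00*(g - d*b - d^2*s00/2) = 0 := by
    linear_combination (-1:ℝ)*hrsq + (-(s00*d) - (r+b))*hd
  have h3 : (2:ℝ)*s00 ≠ 0 := by simp [h0]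
  rcases mul_eq_zero.mp h2 with h | h
  · exact absurd h h3
  · linarith

lemma root_id1 {s00 s01 s11 a0 a1 x y g b r d : ℝ}
    (hg : Gs s00 s01 s11 a0 a1 x y = g) (hb : b = s01*x + s11*y + a1)
    (hrsq : r^2 = b^2 + 2*s11*g) (hd : s11*d = r - b) (h1 : s11 ≠ 0) :
    Gs s00 s01 s11 a0 a1 x (y+d) = 0 := by
  rw [Gshift1, hg, ← hb]
  have h2 : 2*s11*(g - d*b - d^2*s11/2) = 0 := by
    linear_combination (-1:ℝ)*hrsq + (-(s11*d) - (r+b))*hd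
  have h3 : (2:ℝ)*s11 ≠ 0 := by simp [h1]
  rcases mul_eq_zero.mp h2 with h | h
  · exact absurd h h3
  · linarith

lemma rightroot_exists (h0 : 0 < s00) {x y : ℝ} (hg : 0 < Gs s00 s01 s11 a0 a1 x y) :
    ∃ x', x < x' ∧ Gs s00 s01 s11 a0 a1 x' y = 0 := by
  set g := Gs s00 s01 s11 a0 a1 x y with hgdef
  set b := s00*x + s01*y + a0 with hb
  set r := Real.sqrt (b^2 + 2*s00*g) with hr
  have hrsq : r^2 = b^2 + 2*s00*g := Real.sq_sqrt (by nlinarith)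
  have hrpos : b < r := by
    have h1 : 0 ≤ r := Real.sqrt_nonneg _
    nlinarith
  have hs : s00 ≠ 0 := ne_of_gt h0
  have hδ : 0 < (r - b)/s00 := div_pos (by linarith) h0
  have hδs : s00 * ((r - b)/s00) = r - b := by field_simp
  set δ := (r - b)/s00 with hδdef
  refine ⟨x + δ, by linarith, ?_⟩
  exact root_id hgdef.symm hb hrsq hδs hs

lemma uproot_exists (h1 : 0 < s11) {x y : ℝ} (hg : 0 < Gs s00 s01 s11 a0 a1 x y) :
    ∃ y', y < y' ∧ Gs s00 s01 s11 a0 a1 x y' = 0 := by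
  set g := Gs s00 s01 s11 a0 a1 x y with hgdef
  set b := s01*x + s11*y + a1 with hb
  set r := Real.sqrt (b^2 + 2*s11*g) with hr
  have hrsq : r^2 = b^2 + 2*s11*g := Real.sq_sqrt (by nlinarith)
  have hrpos : b < r := by
    have hnn : 0 ≤ r := Real.sqrt_nonneg _
    nlinarith
  have hs : s11 ≠ 0 := ne_of_gt h1
  have hδ : 0 < (r - b)/s11 := div_pos (by linarith) h1
  have hδs : s11 * ((r - b)/s11) = r - b := by field_simp
  set δ := (r - b)/s11 with hδdef
  refine ⟨y + δ, by linarith, ?_⟩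
  exact root_id1 hgdef.symm hb hrsq hδs hs

lemma rightRootMax (h0 : 0 < s00) {z0 z1 x : ℝ}
    (hz : Gs s00 s01 s11 a0 a1 z0 z1 = 0)
    (hder : 0 ≤ s00*z0 + s01*z1 + a0)
    (hx : 0 ≤ Gs s00 s01 s11 a0 a1 x z1) : x ≤ z0 := by
  by_contra hc
  push_neg at hc
  have key : Gs s00 s01 s11 a0 a1 x z1 =
      Gs s00 s01 s11 a0 a1 z0 z1 - (x - z0)*(s00*z0 + s01*z1 + a0) - (x-z0)^2*s00/2 := by
    unfold Gs; ring
  have h1 : 0 < x - z0 := by linarith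
  nlinarith [mul_nonneg h1.le hder, mul_pos (mul_pos h1 h1) h0]


variable {s00 s01 s11 a0 a1 : ℝ}

lemma Gseg (x y x' y' t : ℝ) : Gs s00 s01 s11 a0 a1 (x + t*(x'-x)) (y + t*(y'-y)) =
    (1-t)*(Gs s00 s01 s11 a0 a1 x y) + t*(Gs s00 s01 s11 a0 a1 x' y')
    + (t*(1-t)/2)*(s00*(x'-x)^2 + 2*s01*(x'-x)*(y'-y) + s11*(y'-y)^2) := by
  unfold Gs; ring

lemma maxchar1 (h0 : 0 < s00) (h11 : 0 < s11) {m0 m1 : ℝ}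
    (hm : Gs s00 s01 s11 a0 a1 m0 m1 = 0)
    (hmax : ∀ x y, Gs s00 s01 s11 a0 a1 x y = 0 → x ≤ m0) :
    s01*m0 + s11*m1 + a1 = 0 ∧ 0 ≤ s00*m0 + s01*m1 + a0 := by
  constructor
  · by_contra hk
    set km := s01*m0 + s11*m1 + a1 with hkm
    have hG : Gs s00 s01 s11 a0 a1 m0 (m1 + (-km/s11)) = km^2/(2*s11) := by
      rw [Gshift1, hm, ← hkm]
      field_simp; ring
    have hGpos : 0 < Gs s00 s01 s11 a0 a1 m0 (m1 + (-km/s11)) := by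
      rw [hG]
      have hk' : km ≠ 0 := hk
      positivity
    obtain ⟨x', hx', hx0⟩ := rightroot_exists h0 hGpos
    have := hmax x' _ hx0
    linarith
  · by_contra hk
    push_neg at hk
    set hm0 := s00*m0 + s01*m1 + a0 with hhm
    have hG : Gs s00 s01 s11 a0 a1 (m0 + (-hm0/s00)) m1 = hm0^2/(2*s00) := by
      rw [Gshift0, hm, ← hhm]
      field_simp; ring
    have hGpos : 0 < Gs s00 s01 s11 a0 a1 (m0 + (-hm0/s00)) m1 := by
      rw [hG]
      have : hm0 ≠ 0 := by intro h; rw [h] at hk; simp at hk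
      positivity
    obtain ⟨x', hx', hx0⟩ := rightroot_exists h0 hGpos
    have h2 := hmax x' _ hx0
    have h3 : 0 < -hm0/s00 := div_pos (by linarith) h0
    linarith

lemma maxchar2 (h0 : 0 < s00) (h11 : 0 < s11) {M0 M1 : ℝ}
    (hM : Gs s00 s01 s11 a0 a1 M0 M1 = 0)
    (hmax : ∀ x y, Gs s00 s01 s11 a0 a1 x y = 0 → y ≤ M1) :
    s00*M0 + s01*M1 + a0 = 0 ∧ 0 ≤ s01*M0 + s11*M1 + a1 := by
  constructor
  · by_contra hk
    set hm0 := s00*M0 + s01*M1 + a0 with hhm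
    have hG : Gs s00 s01 s11 a0 a1 (M0 + (-hm0/s00)) M1 = hm0^2/(2*s00) := by
      rw [Gshift0, hM, ← hhm]
      field_simp; ring
    have hGpos : 0 < Gs s00 s01 s11 a0 a1 (M0 + (-hm0/s00)) M1 := by
      rw [hG]
      have hk' : hm0 ≠ 0 := hk
      positivity
    obtain ⟨y', hy', hy0⟩ := uproot_exists h11 hGpos
    have := hmax _ y' hy0
    linarith
  · by_contra hk
    push_neg at hk
    set km := s01*M0 + s11*M1 + a1 with hkm
    have hG : Gs s00 s01 s11 a0 a1 M0 (M1 + (-km/s11)) = km^2/(2*s11) := by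
      rw [Gshift1, hM, ← hkm]
      field_simp; ring
    have hGpos : 0 < Gs s00 s01 s11 a0 a1 M0 (M1 + (-km/s11)) := by
      rw [hG]
      have : km ≠ 0 := by intro h; rw [h] at hk; simp at hk
      positivity
    obtain ⟨y', hy', hy0⟩ := uproot_exists h11 hGpos
    have h2 := hmax _ y' hy0
    have h3 : 0 < -km/s11 := div_pos (by linarith) h11
    linarith

lemma maxchar1_strict (h0 : 0 < s00) (h11 : 0 < s11) (hd : 0 < s00*s11 - s01^2)
    (hmu : ¬(a0 = 0 ∧ a1 = 0)) {m0 m1 : ℝ}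
    (hm : Gs s00 s01 s11 a0 a1 m0 m1 = 0)
    (hmax : ∀ x y, Gs s00 s01 s11 a0 a1 x y = 0 → x ≤ m0) :
    0 < s00*m0 + s01*m1 + a0 := by
  obtain ⟨hk, hh⟩ := maxchar1 h0 h11 hm hmax
  rcases hh.lt_or_eq with h | h
  · exact h
  · exfalso
    have hq : s00*m0^2 + 2*s01*m0*m1 + s11*m1^2 = 0 := by
      unfold Gs at hm
      linear_combination 2*hm + 2*m0*(h.symm) + 2*m1*hk
    obtain ⟨h1, h2⟩ := quad_eq_zero h0 hd hq
    rw [h1, h2] at hk h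
    simp at hk h
    exact hmu ⟨h.symm, hk⟩

lemma maxchar2_strict (h0 : 0 < s00) (h11 : 0 < s11) (hd : 0 < s00*s11 - s01^2)
    (hmu : ¬(a0 = 0 ∧ a1 = 0)) {M0 M1 : ℝ}
    (hM : Gs s00 s01 s11 a0 a1 M0 M1 = 0)
    (hmax : ∀ x y, Gs s00 s01 s11 a0 a1 x y = 0 → y ≤ M1) :
    0 < s01*M0 + s11*M1 + a1 := by
  obtain ⟨hk, hh⟩ := maxchar2 h0 h11 hM hmax
  rcases hh.lt_or_eq with h | h
  · exact h
  · exfalso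
    have hq : s00*M0^2 + 2*s01*M0*M1 + s11*M1^2 = 0 := by
      unfold Gs at hM
      linear_combination 2*hM + 2*M0*hk + 2*M1*(h.symm)
    obtain ⟨h1, h2⟩ := quad_eq_zero h0 hd hq
    rw [h1, h2] at hk h
    simp at hk h
    exact hmu ⟨hk, h.symm⟩

lemma topuniq (h0 : 0 < s00) (h11 : 0 < s11) {M0 M1 v0 : ℝ}
    (hM : Gs s00 s01 s11 a0 a1 M0 M1 = 0)
    (hmax : ∀ x y, Gs s00 s01 s11 a0 a1 x y = 0 → y ≤ M1)
    (hv : Gs s00 s01 s11 a0 a1 v0 M1 = 0) : v0 = M0 := by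
  by_contra hne
  have hmid : Gs s00 s01 s11 a0 a1 ((v0+M0)/2) M1 = (s00/8)*(v0-M0)^2 := by
    unfold Gs at hv hM ⊢
    linear_combination (1/2)*hv + (1/2)*hM
  have hpos : 0 < Gs s00 s01 s11 a0 a1 ((v0+M0)/2) M1 := by
    rw [hmid]
    have : v0 - M0 ≠ 0 := sub_ne_zero.mpr hne
    positivity
  obtain ⟨y', hy', hy0⟩ := uproot_exists h11 hpos
  have := hmax _ _ hy0
  linarith


variable {s00 s01 s11 a0 a1 r00 r01 r10 r11 : ℝ}
variable {m0 m1 M0 M1 u0 u1 w0 w1 z0 z1 g10 g11 g20 g21 : ℝ}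


variable {s00 s01 s11 a0 a1 r00 r01 r10 r11 : ℝ}

lemma gam2u_pos (hr00 : 0 < r00) (hrd : 0 < r00*r11 - r01*r10) {u0 u1 : ℝ}
    (hu1 : 0 < u1) (hline : r00*u0 + r10*u1 = 0) : 0 < r01*u0 + r11*u1 := by
  have h : r00*(r01*u0 + r11*u1) = (r00*r11 - r01*r10)*u1 := by
    linear_combination r01 * hline
  nlinarith

lemma gam1w_pos (hr11 : 0 < r11) (hrd : 0 < r00*r11 - r01*r10) {w0 w1 : ℝ}
    (hw0 : 0 < w0) (hline : r01*w0 + r11*w1 = 0) : 0 < r00*w0 + r10*w1 := by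
  have h : r11*(r00*w0 + r10*w1) = (r00*r11 - r01*r10)*w0 := by
    linear_combination r10 * hline
  nlinarith

/-- Case A crossing construction : from `u ≤ m` and `γ₂(m) ≤ 0 < γ₂(u)` deduce `u ≤ w`. -/
lemma crossingA (hs00 : 0 < s00) (hsd : 0 < s00*s11 - s01^2)
    (hr11 : 0 < r11) (hS1 : r11*a0 - r01*a1 < 0)
    {u0 u1 m0 m1 w0 w1 : ℝ}
    (hu1 : 0 < u1)
    (hγ2u : 0 < r01*u0 + r11*u1) (hγ2m : r01*m0 + r11*m1 ≤ 0)
    (hu0m : u0 ≤ m0) (hu1m : u1 ≤ m1)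
    (hu_gam : Gs s00 s01 s11 a0 a1 u0 u1 = 0)
    (hm_gam : Gs s00 s01 s11 a0 a1 m0 m1 = 0)
    (hw_line : r01*w0 + r11*w1 = 0)
    (hw_gam : Gs s00 s01 s11 a0 a1 w0 w1 = 0)
    (hw0 : 0 < w0) :
    u0 ≤ w0 ∧ u1 ≤ w1 := by
  have hr11' : r11 ≠ 0 := ne_of_gt hr11
  have hQ1pos : 0 < s00*r11^2 + 2*s01*r11*(-r01) + s11*(-r01)^2 :=
    quad_pos hs00 hsd (Or.inl (ne_of_gt hr11))
  set Q1 := s00*r11^2 + 2*s01*r11*(-r01) + s11*(-r01)^2 with hQ1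
  set L1 := r11*a0 - r01*a1 with hL1
  have hparam : ∀ b0 b1 : ℝ, r01*b0 + r11*b1 = 0 →
      Gs s00 s01 s11 a0 a1 b0 b1 = (b0/r11)*(-(b0/r11)*Q1/2 - L1) := by
    intro b0 b1 hline
    have hb1 : b1 = -(r01*b0)/r11 := by field_simp; linarith
    rw [hb1, hQ1, hL1]
    unfold Gs
    field_simp
    ring
  have hwval : -(w0/r11)*Q1/2 - L1 = 0 := by
    have h := hparam w0 w1 hw_line
    rw [hw_gam] at h
    have hβpos : 0 < w0/r11 := div_pos hw0 hr11
    rcases mul_eq_zero.mp h.symm with h' | h'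
    · exact absurd h' (ne_of_gt hβpos)
    · exact h'
  set D := (r01*u0 + r11*u1) - (r01*m0 + r11*m1) with hD
  have hDpos : 0 < D := by rw [hD]; linarith
  set α := (r01*u0 + r11*u1)/D with hα
  have hα0 : 0 < α := div_pos hγ2u hDpos
  have hα1 : α ≤ 1 := by rw [hα, div_le_one hDpos]; linarith
  have hαD : α*D = r01*u0 + r11*u1 := by rw [hα]; field_simp
  have hqline : r01*(u0 + α*(m0-u0)) + r11*(u1 + α*(m1-u1)) = 0 := by
    have h : r01*(u0 + α*(m0-u0)) + r11*(u1 + α*(m1-u1))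
        = (r01*u0 + r11*u1) - α*D := by rw [hD]; ring
    rw [h, hαD]; ring
  have hqG : 0 ≤ Gs s00 s01 s11 a0 a1 (u0 + α*(m0-u0)) (u1 + α*(m1-u1)) := by
    rw [Gseg, hu_gam, hm_gam]
    have hquad := quad_nonneg hs00 hsd (m0-u0) (m1-u1)
    have h2 : 0 ≤ α*(1-α) := mul_nonneg hα0.le (by linarith)
    nlinarith [mul_nonneg h2 hquad]
  have hq0u : u0 ≤ u0 + α*(m0-u0) := by
    nlinarith [mul_nonneg hα0.le (by linarith : (0:ℝ) ≤ m0 - u0)]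
  have hq1u : u1 ≤ u1 + α*(m1-u1) := by
    nlinarith [mul_nonneg hα0.le (by linarith : (0:ℝ) ≤ m1 - u1)]
  set q0 := u0 + α*(m0-u0)
  set q1 := u1 + α*(m1-u1)
  have hGq := hparam q0 q1 hqline
  rw [hGq] at hqG
  set β := q0/r11 with hβ
  have hβr11 : β*r11 = q0 := by rw [hβ]; field_simp
  have hq1β : q1 = -β*r01 := by
    rw [hβ]; field_simp; linarith [hqline]
  have hβpos : 0 < β := by
    rcases lt_trichotomy β 0 with h | h | h
    · exfalso
      have hF : 0 < -β*Q1/2 - L1 := by nlinarith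
      nlinarith [mul_neg_of_neg_of_pos h hF]
    · exfalso
      rw [h] at hq1β
      simp at hq1β
      nlinarith
    · exact h
  have hfac : 0 ≤ -β*Q1/2 - L1 := by
    by_contra hcc
    push_neg at hcc
    nlinarith [mul_neg_of_pos_of_neg hβpos hcc]
  have hβw : β ≤ w0/r11 := by
    have h4 : β*Q1 ≤ (w0/r11)*Q1 := by linarith
    exact le_of_mul_le_mul_right h4 hQ1pos
  have hr01neg : r01 < 0 := by
    by_contra hcc
    push_neg at hcc
    have h5 : 0 ≤ β*r01 := mul_nonneg hβpos.le hcc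
    have h6 : 0 < q1 := lt_of_lt_of_le hu1 hq1u
    rw [hq1β] at h6
    linarith
  have hw1β : w1 = -(w0/r11)*r01 := by field_simp; linarith [hw_line]
  constructor
  · calc u0 ≤ q0 := hq0u
      _ = β*r11 := hβr11.symm
      _ ≤ (w0/r11)*r11 := mul_le_mul_of_nonneg_right hβw hr11.le
      _ = w0 := by field_simp
  · have h6 : β*(-r01) ≤ (w0/r11)*(-r01) := mul_le_mul_of_nonneg_right hβw (by linarith)
    calc u1 ≤ q1 := hq1u
      _ = -β*r01 := hq1β
      _ ≤ -(w0/r11)*r01 := by linarith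
      _ = w1 := hw1β.symm

/-- F2 : if the ray point u lies (componentwise) below the ray point w then h(u) ≤ 0. -/
lemma F2core (hs00 : 0 < s00) (hsd : 0 < s00*s11 - s01^2)
    (hr00 : 0 < r00) (hr11 : 0 < r11)
    {u0 u1 w0 w1 : ℝ}
    (hu_line : r00*u0 + r10*u1 = 0)
    (hu_gam : Gs s00 s01 s11 a0 a1 u0 u1 = 0)
    (hu1 : 0 < u1)
    (hγ1w : 0 < r00*w0 + r10*w1)
    (hw_gam : Gs s00 s01 s11 a0 a1 w0 w1 = 0)
    (huw0 : u0 ≤ w0) (huw1 : u1 ≤ w1) :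
    s00*u0 + s01*u1 + a0 ≤ 0 := by
  by_contra hc
  push_neg at hc
  have hdne : w0 - u0 ≠ 0 ∨ w1 - u1 ≠ 0 := by
    by_contra hcc
    push_neg at hcc
    have e0 : w0 = u0 := by linarith [sub_eq_zero.mp hcc.1]
    have e1 : w1 = u1 := by linarith [sub_eq_zero.mp hcc.2]
    rw [e0, e1] at hγ1w
    linarith
  have hQd : 0 < s00*(w0-u0)^2 + 2*s01*(w0-u0)*(w1-u1) + s11*(w1-u1)^2 :=
    quad_pos hs00 hsd hdne
  have had : (s00*u0 + s01*u1 + a0)*(w0-u0) + (s01*u0 + s11*u1 + a1)*(w1-u1)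
      = -(s00*(w0-u0)^2 + 2*s01*(w0-u0)*(w1-u1) + s11*(w1-u1)^2)/2 := by
    unfold Gs at hu_gam hw_gam
    linear_combination hu_gam - hw_gam
  have hau : (s00*u0 + s01*u1 + a0)*u0 + (s01*u0 + s11*u1 + a1)*u1
      = (s00*u0^2 + 2*s01*u0*u1 + s11*u1^2)/2 := by
    unfold Gs at hu_gam
    linear_combination -hu_gam
  have hQu : 0 < s00*u0^2 + 2*s01*u0*u1 + s11*u1^2 :=
    quad_pos hs00 hsd (Or.inr (ne_of_gt hu1))
  have hd0 : 0 ≤ w0 - u0 := by linarith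
  have hd1A1 : (s01*u0 + s11*u1 + a1)*(w1-u1) < 0 := by
    nlinarith [mul_nonneg hc.le hd0]
  have hA1neg : s01*u0 + s11*u1 + a1 < 0 := by nlinarith
  have hd1pos : 0 < w1 - u1 := by nlinarith
  have hcrossud : 0 < u0*(w1-u1) - u1*(w0-u0) := by nlinarith
  have hcross : 0 < u0*w1 - u1*w0 := by nlinarith
  have hid : r00*r11*(u0*w1 - u1*w0) = -(u1*r11*(r00*w0 + r10*w1)) := by
    linear_combination (r11*w1) * hu_line
  nlinarith [mul_pos (mul_pos hr00 hr11) hcross, mul_pos (mul_pos hu1 hr11) hγ1w]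

/-- Case B : w1 < m1 and h(w) ≥ 0. -/
lemma hwB (hs00 : 0 < s00) (hsd : 0 < s00*s11 - s01^2)
    (hr11 : 0 < r11)
    {w0 w1 m0 m1 : ℝ}
    (hγ2m : 0 < r01*m0 + r11*m1)
    (hw_line : r01*w0 + r11*w1 = 0)
    (hw_gam : Gs s00 s01 s11 a0 a1 w0 w1 = 0)
    (hw0 : 0 < w0) (hw1 : 0 < w1)
    (hm_gam : Gs s00 s01 s11 a0 a1 m0 m1 = 0)
    (hw0m0 : w0 ≤ m0)
    (hkm : s01*m0 + s11*m1 + a1 = 0)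
    (hhm : 0 < s00*m0 + s01*m1 + a0) :
    w1 < m1 ∧ 0 ≤ s00*w0 + s01*w1 + a0 := by
  have hr01neg : r01 < 0 := by nlinarith [hw_line]
  have he1 : w1 < m1 := by nlinarith [hw_line]
  refine ⟨he1, ?_⟩
  by_contra hbc
  push_neg at hbc
  have hQe : 0 < s00*(m0-w0)^2 + 2*s01*(m0-w0)*(m1-w1) + s11*(m1-w1)^2 :=
    quad_pos hs00 hsd (Or.inr (by intro h; nlinarith [sub_eq_zero.mp h]))
  have hbe : (s00*w0 + s01*w1 + a0)*(m0-w0) + (s01*w0 + s11*w1 + a1)*(m1-w1)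
      = -(s00*(m0-w0)^2 + 2*s01*(m0-w0)*(m1-w1) + s11*(m1-w1)^2)/2 := by
    unfold Gs at hw_gam hm_gam
    linear_combination hw_gam - hm_gam
  have hce : (s00*m0 + s01*m1 + a0)*(m0-w0) + (s01*m0 + s11*m1 + a1)*(m1-w1)
      = (s00*(m0-w0)^2 + 2*s01*(m0-w0)*(m1-w1) + s11*(m1-w1)^2)/2 := by
    unfold Gs at hw_gam hm_gam
    linear_combination hw_gam - hm_gam
  have he0pos : 0 < m0 - w0 := by
    rw [hkm] at hce
    nlinarith
  have hbwdot : (s00*w0 + s01*w1 + a0)*w0 + (s01*w0 + s11*w1 + a1)*w1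
      = (s00*w0^2 + 2*s01*w0*w1 + s11*w1^2)/2 := by
    unfold Gs at hw_gam
    linear_combination -hw_gam
  have hQw : 0 < s00*w0^2 + 2*s01*w0*w1 + s11*w1^2 :=
    quad_pos hs00 hsd (Or.inl (ne_of_gt hw0))
  have hYneg : (s00*w0 + s01*w1 + a0)*((m0-w0)*w1 - w0*(m1-w1)) < 0 := by
    have hY : (s00*w0 + s01*w1 + a0)*((m0-w0)*w1 - w0*(m1-w1)) =
        ((s00*w0 + s01*w1 + a0)*(m0-w0) + (s01*w0 + s11*w1 + a1)*(m1-w1))*w1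
        - ((s00*w0 + s01*w1 + a0)*w0 + (s01*w0 + s11*w1 + a1)*w1)*(m1-w1) := by ring
    rw [hY, hbe, hbwdot]
    nlinarith
  have hcross : 0 < (m0-w0)*w1 - w0*(m1-w1) := by
    rcases lt_trichotomy ((m0-w0)*w1 - w0*(m1-w1)) 0 with h | h | h
    · exfalso; nlinarith [mul_pos_of_neg_of_neg hbc h]
    · exfalso; rw [h] at hYneg; simp at hYneg
    · exact h
  have hid : r11*(m1*w0 - m0*w1) = (r01*m0 + r11*m1)*w0 - (r01*w0 + r11*w1)*m0 := by ring
  rw [hw_line] at hid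
  have hcross2 : 0 < m1*w0 - m0*w1 := by nlinarith [mul_pos hγ2m hw0]
  nlinarith

/-- root-sum : other root has opposite derivative sign. -/
lemma rootsum (hs00 : 0 < s00) {u0 u1 z0 : ℝ}
    (hu_gam : Gs s00 s01 s11 a0 a1 u0 u1 = 0)
    (hz_gam : Gs s00 s01 s11 a0 a1 z0 u1 = 0)
    (hne : z0 ≠ u0)
    (hhu : s00*u0 + s01*u1 + a0 ≤ 0) :
    0 ≤ s00*z0 + s01*u1 + a0 := by
  have hfac : (z0 - u0) * (s00*(z0+u0) + 2*(s01*u1 + a0)) = 0 := by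
    unfold Gs at hz_gam hu_gam
    linear_combination 2*hu_gam - 2*hz_gam
  rcases mul_eq_zero.mp hfac with h' | h'
  · exact absurd (sub_eq_zero.mp h') hne
  · nlinarith

/-- monotone comparison of right roots along increasing heights. -/
lemma rightroot_mono (hs00 : 0 < s00) (hsd : 0 < s00*s11 - s01^2)
    {z0 z1 w0 w1 m0 m1 : ℝ}
    (hz_gam : Gs s00 s01 s11 a0 a1 z0 z1 = 0)
    (hw_gam : Gs s00 s01 s11 a0 a1 w0 w1 = 0)
    (hm_gam : Gs s00 s01 s11 a0 a1 m0 m1 = 0)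
    (hbw : 0 ≤ s00*w0 + s01*w1 + a0)
    (hz1w1 : z1 ≤ w1) (hw1m1 : w1 ≤ m1)
    (hz0m0 : z0 ≤ m0) :
    z0 ≤ w0 := by
  rcases eq_or_lt_of_le hz1w1 with heq | hlt
  · exact rightRootMax hs00 hw_gam hbw (by rw [← heq]; rw [hz_gam])
  · set t := (w1 - z1)/(m1 - z1) with ht
    have hden : 0 < m1 - z1 := by linarith
    have ht0 : 0 < t := div_pos (by linarith) hden
    have ht1 : t ≤ 1 := by rw [ht, div_le_one hden]; linarith
    have htv : t*(m1 - z1) = w1 - z1 := by rw [ht]; field_simp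
    have hpG : 0 ≤ Gs s00 s01 s11 a0 a1 (z0 + t*(m0-z0)) (z1 + t*(m1-z1)) := by
      rw [Gseg, hz_gam, hm_gam]
      have hquad := quad_nonneg hs00 hsd (m0-z0) (m1-z1)
      have h2 : 0 ≤ t*(1-t) := mul_nonneg ht0.le (by linarith)
      nlinarith [mul_nonneg h2 hquad]
    have hp1 : z1 + t*(m1-z1) = w1 := by rw [htv]; ring
    rw [hp1] at hpG
    have h3 := rightRootMax hs00 hw_gam hbw hpG
    nlinarith [mul_nonneg ht0.le (by linarith : (0:ℝ) ≤ m0 - z0)]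

/-- the upper bound property for points strictly below the level c2. -/
lemma UBcore (hs00 : 0 < s00) (hsd : 0 < s00*s11 - s01^2)
    {z0 z1 m0 m1 : ℝ}
    (hz_gam : Gs s00 s01 s11 a0 a1 z0 z1 = 0)
    (hhz : 0 ≤ s00*z0 + s01*z1 + a0)
    (hz1m1 : z1 ≤ m1)
    (hm_gam : Gs s00 s01 s11 a0 a1 m0 m1 = 0)
    (hm_max : ∀ x y, Gs s00 s01 s11 a0 a1 x y = 0 → x ≤ m0)
    (hz0m0 : z0 ≤ m0)
    {x y : ℝ} (hxy : 0 < Gs s00 s01 s11 a0 a1 x y) (hyl : y < z1) :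
    x ≤ z0 := by
  rcases eq_or_lt_of_le hz1m1 with heq | hlt
  · have hm0z0 : m0 ≤ z0 := by
      apply rightRootMax hs00 hz_gam hhz
      rw [heq, hm_gam]
    obtain ⟨x', hx', hx0⟩ := rightroot_exists hs00 hxy
    have := hm_max x' y hx0
    linarith
  · set t := (z1 - y)/(m1 - y) with ht
    have hden : 0 < m1 - y := by linarith
    have ht0 : 0 < t := div_pos (by linarith) hden
    have ht1 : t < 1 := by rw [ht, div_lt_one hden]; linarith
    have htv : t*(m1 - y) = z1 - y := by rw [ht]; field_simp
    have hpG : 0 ≤ Gs s00 s01 s11 a0 a1 (x + t*(m0-x)) (y + t*(m1-y)) := by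
      rw [Gseg, hm_gam]
      have hquad := quad_nonneg hs00 hsd (m0-x) (m1-y)
      have h2 : 0 ≤ t*(1-t) := mul_nonneg ht0.le (by linarith)
      nlinarith [mul_nonneg (by linarith : (0:ℝ) ≤ 1-t) hxy.le]
    have hp1 : y + t*(m1-y) = z1 := by rw [htv]; ring
    rw [hp1] at hpG
    have hple := rightRootMax hs00 hz_gam hhz hpG
    by_contra hcx
    push_neg at hcx
    nlinarith [mul_pos (by linarith : (0:ℝ) < 1-t) (by linarith : (0:ℝ) < x - z0),
      mul_nonneg ht0.le (by linarith : (0:ℝ) ≤ m0 - z0)]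



variable {s00 s01 s11 a0 a1 r00 r01 r10 r11 : ℝ}

/-- The main analytic core for Category II. -/
lemma coreII {m0 m1 M0 M1 u0 u1 w0 w1 z0 z1 g10 g11 g20 g21 : ℝ}
    (hs00 : 0 < s00) (hs11 : 0 < s11) (hsd : 0 < s00*s11 - s01^2)
    (hmu : ¬(a0 = 0 ∧ a1 = 0))
    (hr00 : 0 < r00) (hr11 : 0 < r11) (hrd : 0 < r00*r11 - r01*r10)
    (hS1 : r11*a0 - r01*a1 < 0)
    (hm_gam : Gs s00 s01 s11 a0 a1 m0 m1 = 0)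
    (hm_max : ∀ x y, Gs s00 s01 s11 a0 a1 x y = 0 → x ≤ m0)
    (hM_gam : Gs s00 s01 s11 a0 a1 M0 M1 = 0)
    (hM_max : ∀ x y, Gs s00 s01 s11 a0 a1 x y = 0 → y ≤ M1)
    (hu_line : r00*u0 + r10*u1 = 0)
    (hu_gam : Gs s00 s01 s11 a0 a1 u0 u1 = 0)
    (hu1 : 0 < u1)
    (hw_line : r01*w0 + r11*w1 = 0)
    (hw_gam : Gs s00 s01 s11 a0 a1 w0 w1 = 0)
    (hw0 : 0 < w0)
    (hz : (u0 = M0 ∧ u1 = M1 ∧ z0 = M0 ∧ z1 = M1) ∨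
      (Gs s00 s01 s11 a0 a1 z0 z1 = 0 ∧ z1 = u1 ∧ z0 ≠ u0))
    (hg1 : (r01*m0 + r11*m1 ≤ 0 ∧ g10 = m0 ∧ g11 = m1) ∨
      (0 < r01*m0 + r11*m1 ∧ g10 = w0 ∧ g11 = w1))
    (hg2 : (r00*M0 + r10*M1 ≤ 0 ∧ g20 = M0 ∧ g21 = M1) ∨
      (0 < r00*M0 + r10*M1 ∧ g20 = u0 ∧ g21 = u1))
    (hcII0 : g20 ≤ g10) (hcII1 : g21 ≤ g11) :
    Gs s00 s01 s11 a0 a1 z0 z1 = 0 ∧ z1 = g21 ∧ z0 ≤ g10 ∧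
    (∀ x y, 0 < Gs s00 s01 s11 a0 a1 x y → y < g21 → x ≤ z0) := by
  obtain ⟨hkm, _⟩ := maxchar1 hs00 hs11 hm_gam hm_max
  have hhm : 0 < s00*m0 + s01*m1 + a0 := maxchar1_strict hs00 hs11 hsd hmu hm_gam hm_max
  obtain ⟨hhM, _⟩ := maxchar2 hs00 hs11 hM_gam hM_max
  have hγ2u : 0 < r01*u0 + r11*u1 := gam2u_pos hr00 hrd hu1 hu_line
  have hγ1w : 0 < r00*w0 + r10*w1 := gam1w_pos hr11 hrd hw0 hw_line
  have hu1M1 : u1 ≤ M1 := hM_max u0 u1 hu_gam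
  have hw0m0 : w0 ≤ m0 := hm_max w0 w1 hw_gam
  have hg11gam : Gs s00 s01 s11 a0 a1 g10 g11 = 0 := by
    rcases hg1 with ⟨_, h1, h2⟩ | ⟨_, h1, h2⟩ <;> rw [h1, h2] <;> assumption
  -- step T2
  have hγ1M : 0 < r00*M0 + r10*M1 := by
    by_contra hng
    push_neg at hng
    have hb1 : g20 = M0 ∧ g21 = M1 := by
      rcases hg2 with ⟨_, h1, h2⟩ | ⟨h1, _, _⟩
      · exact ⟨h1, h2⟩
      · linarith
    have hg11M1 : g11 = M1 := le_antisymm (hM_max _ _ hg11gam) (by linarith [hb1.2])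
    rw [hg11M1] at hg11gam
    have hg10M0 : g10 = M0 := topuniq hs00 hs11 hM_gam hM_max hg11gam
    rcases hg1 with ⟨_, h1, h2⟩ | ⟨_, h1, h2⟩
    · have e1 : m0 = M0 := by rw [← h1]; exact hg10M0
      have e2 : m1 = M1 := by rw [← h2]; exact hg11M1
      rw [e1, e2] at hkm hhm
      linarith
    · have e1 : w0 = M0 := by rw [← h1]; exact hg10M0
      have e2 : w1 = M1 := by rw [← h2]; exact hg11M1
      rw [e1, e2] at hγ1w
      linarith
  have hb2 : g20 = u0 ∧ g21 = u1 := by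
    rcases hg2 with ⟨h1, _, _⟩ | ⟨_, h1, h2⟩
    · linarith
    · exact ⟨h1, h2⟩
  rw [hb2.1] at hcII0
  rw [hb2.2] at hcII1
  -- u ≤ w and u1 ≤ m1
  have key_uw : u0 ≤ w0 ∧ u1 ≤ w1 ∧ u1 ≤ m1 := by
    rcases hg1 with ⟨hγ2m, h1, h2⟩ | ⟨hγ2m, h1, h2⟩
    · rw [h1] at hcII0
      rw [h2] at hcII1
      obtain ⟨c0, c1⟩ := crossingA hs00 hsd hr11 hS1 hu1 hγ2u hγ2m hcII0 hcII1
        hu_gam hm_gam hw_line hw_gam hw0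
      exact ⟨c0, c1, hcII1⟩
    · rw [h1] at hcII0
      rw [h2] at hcII1
      have hw1 : 0 < w1 := lt_of_lt_of_le hu1 hcII1
      obtain ⟨hB1, _⟩ := hwB hs00 hsd hr11 hγ2m hw_line hw_gam hw0 hw1 hm_gam hw0m0 hkm hhm
      exact ⟨hcII0, hcII1, by linarith⟩
  obtain ⟨huw0, huw1, hu1m1⟩ := key_uw
  have hhu : s00*u0 + s01*u1 + a0 ≤ 0 :=
    F2core hs00 hsd hr00 hr11 hu_line hu_gam hu1 hγ1w hw_gam huw0 huw1
  -- z facts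
  have hz_gam : Gs s00 s01 s11 a0 a1 z0 z1 = 0 := by
    rcases hz with ⟨_, _, h3, h4⟩ | ⟨h, _, _⟩
    · rw [h3, h4]; exact hM_gam
    · exact h
  have hz1u1 : z1 = u1 := by
    rcases hz with ⟨_, h2, _, h4⟩ | ⟨_, h, _⟩
    · rw [h4, ← h2]
    · exact h
  have hhz : 0 ≤ s00*z0 + s01*z1 + a0 := by
    rcases hz with ⟨h1, h2, h3, h4⟩ | ⟨h, h2, h3⟩
    · rw [h3, h4, hhM]
    · rw [h2] at h ⊢
      exact rootsum hs00 hu_gam h h3 hhu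
  have hz0m0 : z0 ≤ m0 := hm_max z0 z1 hz_gam
  have hz1m1 : z1 ≤ m1 := by rw [hz1u1]; exact hu1m1
  -- F3
  have hF3 : z0 ≤ g10 := by
    rcases hg1 with ⟨_, h1, _⟩ | ⟨hγ2m, h1, h2⟩
    · rw [h1]; exact hz0m0
    · rw [h1]
      have hw1 : 0 < w1 := by
        have : u1 ≤ g11 := hcII1
        rw [h2] at this
        linarith
      obtain ⟨hwm1, hbw⟩ := hwB hs00 hsd hr11 hγ2m hw_line hw_gam hw0 hw1 hm_gam hw0m0 hkm hhm
      refine rightroot_mono hs00 hsd hz_gam hw_gam hm_gam hbw ?_ hwm1.le hz0m0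
      rw [hz1u1]
      have : u1 ≤ g11 := hcII1
      rw [h2] at this
      exact this
  refine ⟨hz_gam, by rw [hz1u1, hb2.2], hF3, ?_⟩
  intro x y hxy hyl
  rw [hb2.2] at hyl
  exact UBcore hs00 hsd hz_gam hhz hz1m1 hm_gam hm_max hz0m0 hxy (by rw [hz1u1]; exact hyl)



end Core

section Bridge

lemma ray_zero_scalar {n q : ℝ} (hq : q ≠ 0) : -((-2*n/q)^2/2)*q - (-2*n/q)*n = 0 := by
  field_simp
  ring

lemma gam_eq {S : Matrix (Fin 2) (Fin 2) ℝ} (hSsym : S.IsSymm) (μ θ : V) :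
    gam S μ θ = Gs (S 0 0) (S 0 1) (S 1 1) (μ 0) (μ 1) (θ 0) (θ 1) := by
  have h10 : S 1 0 = S 0 1 := by
    have := congrFun (congrFun hSsym.eq 0) 1
    simpa [Matrix.transpose] using this
  simp only [gam, Gs, Matrix.mulVec, dotProduct, Fin.sum_univ_two]
  rw [h10]; ring

lemma posdef_scalars {S : Matrix (Fin 2) (Fin 2) ℝ} (hSpd : S.PosDef) :
    0 < S 0 0 ∧ 0 < S 1 1 ∧ 0 < S 0 0 * S 1 1 - (S 0 1)^2 := by
  have h10 : S 1 0 = S 0 1 := by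
    have := congrFun (congrFun hSpd.1.eq 0) 1
    simpa [Matrix.transpose] using this
  have h1 : 0 < S 0 0 := by
    have := hSpd.dotProduct_mulVec_pos (x := ![1, 0]) (by
      intro h
      have := congrFun h 0
      simp at this)
    simpa [Matrix.mulVec, dotProduct, Fin.sum_univ_two] using this
  have h2 : 0 < S 1 1 := by
    have := hSpd.dotProduct_mulVec_pos (x := ![0, 1]) (by
      intro h
      have := congrFun h 1
      simp at this)
    simpa [Matrix.mulVec, dotProduct, Fin.sum_univ_two] using this
  refine ⟨h1, h2, ?_⟩
  have h3 := hSpd.dotProduct_mulVec_pos (x := ![S 0 1, -(S 0 0)]) (by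
    intro h
    have := congrFun h 1
    simp at this
    exact absurd this (ne_of_gt h1))
  simp [Matrix.mulVec, dotProduct, Fin.sum_univ_two] at h3
  rw [h10] at h3
  nlinarith [h3]

lemma ray2_props {S R : Matrix (Fin 2) (Fin 2) ℝ} {μ : V}
    (hSpd : S.PosDef) (hSsym : S.IsSymm) (hP : condP R) (hS : condS μ R) :
    R 0 0 * (θray2 S μ R 0) + R 1 0 * (θray2 S μ R 1) = 0 ∧
    0 < θray2 S μ R 1 ∧ gam S μ (θray2 S μ R) = 0 := by
  obtain ⟨hs00, hs11, hsd⟩ := posdef_scalars hSpd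
  have h10 : S 1 0 = S 0 1 := by
    have := congrFun (congrFun hSsym.eq 0) 1
    simpa [Matrix.transpose] using this
  have hQpos : 0 < pvec2 R ⬝ᵥ S.mulVec (pvec2 R) := by
    have h := quad_pos hs00 hsd (x := -(R 1 0)) (y := R 0 0) (Or.inr (ne_of_gt hP.1))
    simp [pvec2, Matrix.mulVec, dotProduct, Fin.sum_univ_two]
    rw [h10]
    nlinarith [h]
  have hnum : μ ⬝ᵥ pvec2 R < 0 := by
    simp [pvec2, dotProduct, Fin.sum_univ_two]
    have := hS.2
    nlinarith [hS.2]
  have hcpos : 0 < -2 * (μ ⬝ᵥ pvec2 R) / (pvec2 R ⬝ᵥ S.mulVec (pvec2 R)) :=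
    div_pos (by linarith) hQpos
  refine ⟨?_, ?_, ?_⟩
  · simp [θray2, pvec2]
    ring
  · have : θray2 S μ R 1 = (-2 * (μ ⬝ᵥ pvec2 R) / (pvec2 R ⬝ᵥ S.mulVec (pvec2 R))) * R 0 0 := by
      simp [θray2, pvec2]
    rw [this]
    exact mul_pos hcpos hP.1
  · have hsmul : ∀ c : ℝ, gam S μ (c • pvec2 R) =
        -(c^2/2) * (pvec2 R ⬝ᵥ S.mulVec (pvec2 R)) - c * (μ ⬝ᵥ pvec2 R) := by
      intro c
      simp [gam, Matrix.mulVec, dotProduct, Fin.sum_univ_two, pvec2]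
      ring
    have h := hsmul (-2 * (μ ⬝ᵥ pvec2 R) / (pvec2 R ⬝ᵥ S.mulVec (pvec2 R)))
    have h2 : gam S μ (θray2 S μ R) =
        -((-2 * (μ ⬝ᵥ pvec2 R) / (pvec2 R ⬝ᵥ S.mulVec (pvec2 R)))^2/2) * (pvec2 R ⬝ᵥ S.mulVec (pvec2 R))
        - (-2 * (μ ⬝ᵥ pvec2 R) / (pvec2 R ⬝ᵥ S.mulVec (pvec2 R))) * (μ ⬝ᵥ pvec2 R) := h
    rw [h2]
    exact ray_zero_scalar (ne_of_gt hQpos)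

lemma ray1_props {S R : Matrix (Fin 2) (Fin 2) ℝ} {μ : V}
    (hSpd : S.PosDef) (hSsym : S.IsSymm) (hP : condP R) (hS : condS μ R) :
    R 0 1 * (θray1 S μ R 0) + R 1 1 * (θray1 S μ R 1) = 0 ∧
    0 < θray1 S μ R 0 ∧ gam S μ (θray1 S μ R) = 0 := by
  obtain ⟨hs00, hs11, hsd⟩ := posdef_scalars hSpd
  have h10 : S 1 0 = S 0 1 := by
    have := congrFun (congrFun hSsym.eq 0) 1
    simpa [Matrix.transpose] using this
  have hQpos : 0 < pvec1 R ⬝ᵥ S.mulVec (pvec1 R) := by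
    have h := quad_pos hs00 hsd (x := R 1 1) (y := -(R 0 1)) (Or.inl (ne_of_gt hP.2.1))
    simp [pvec1, Matrix.mulVec, dotProduct, Fin.sum_univ_two]
    rw [h10]
    nlinarith [h]
  have hnum : μ ⬝ᵥ pvec1 R < 0 := by
    simp [pvec1, dotProduct, Fin.sum_univ_two]
    nlinarith [hS.1]
  have hcpos : 0 < -2 * (μ ⬝ᵥ pvec1 R) / (pvec1 R ⬝ᵥ S.mulVec (pvec1 R)) :=
    div_pos (by linarith) hQpos
  refine ⟨?_, ?_, ?_⟩
  · simp [θray1, pvec1]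
    ring
  · have : θray1 S μ R 0 = (-2 * (μ ⬝ᵥ pvec1 R) / (pvec1 R ⬝ᵥ S.mulVec (pvec1 R))) * R 1 1 := by
      simp [θray1, pvec1]
    rw [this]
    exact mul_pos hcpos hP.2.1
  · have hsmul : ∀ c : ℝ, gam S μ (c • pvec1 R) =
        -(c^2/2) * (pvec1 R ⬝ᵥ S.mulVec (pvec1 R)) - c * (μ ⬝ᵥ pvec1 R) := by
      intro c
      simp [gam, Matrix.mulVec, dotProduct, Fin.sum_univ_two, pvec1]
      ring
    have h := hsmul (-2 * (μ ⬝ᵥ pvec1 R) / (pvec1 R ⬝ᵥ S.mulVec (pvec1 R)))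
    have h2 : gam S μ (θray1 S μ R) =
        -((-2 * (μ ⬝ᵥ pvec1 R) / (pvec1 R ⬝ᵥ S.mulVec (pvec1 R)))^2/2) * (pvec1 R ⬝ᵥ S.mulVec (pvec1 R))
        - (-2 * (μ ⬝ᵥ pvec1 R) / (pvec1 R ⬝ᵥ S.mulVec (pvec1 R))) * (μ ⬝ᵥ pvec1 R) := h
    rw [h2]
    exact ray_zero_scalar (ne_of_gt hQpos)

end Bridge

section Sup
variable {S : Matrix (Fin 2) (Fin 2) ℝ} {μ : V} {c1 c2 : ℝ}

lemma mem_DD {P : V} (hP : P ∈ Gam S μ) (h0 : P 0 < c1) (h1 : P 1 < c2) {ε : ℝ} (hε : 0 < ε) :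
    (fun j => P j - ε) ∈ Dset S μ 0 c1 ∩ Dset S μ 1 c2 :=
  ⟨⟨P, hP, fun i => sub_lt_self _ hε, h0⟩, ⟨P, hP, fun i => sub_lt_self _ hε, h1⟩⟩

lemma bddE (i : Fin 2) :
    BddAbove ((fun θ => θ i) '' (Dset S μ 0 c1 ∩ Dset S μ 1 c2)) := by
  fin_cases i
  · refine ⟨c1, ?_⟩
    rintro x ⟨θ, ⟨⟨θ', _, hlt, hcap⟩, _⟩, rfl⟩
    exact le_of_lt (lt_trans (hlt 0) hcap)
  · refine ⟨c2, ?_⟩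
    rintro x ⟨θ, ⟨_, ⟨θ', _, hlt, hcap⟩⟩, rfl⟩
    exact le_of_lt (lt_trans (hlt 1) hcap)

lemma ub_cap0 (hne : ((fun θ : V => θ 0) '' (Dset S μ 0 c1 ∩ Dset S μ 1 c2)).Nonempty) :
    sSup ((fun θ : V => θ 0) '' (Dset S μ 0 c1 ∩ Dset S μ 1 c2)) ≤ c1 := by
  refine csSup_le hne ?_
  rintro x ⟨θ, ⟨⟨θ', _, hlt, hcap⟩, _⟩, rfl⟩
  exact le_of_lt (lt_trans (hlt 0) hcap)

lemma ub_cap1 (hne : ((fun θ : V => θ 1) '' (Dset S μ 0 c1 ∩ Dset S μ 1 c2)).Nonempty) :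
    sSup ((fun θ : V => θ 1) '' (Dset S μ 0 c1 ∩ Dset S μ 1 c2)) ≤ c2 := by
  refine csSup_le hne ?_
  rintro x ⟨θ, ⟨_, ⟨θ', _, hlt, hcap⟩⟩, rfl⟩
  exact le_of_lt (lt_trans (hlt 1) hcap)

lemma ub_cross0 {K : ℝ}
    (hne : ((fun θ : V => θ 0) '' (Dset S μ 0 c1 ∩ Dset S μ 1 c2)).Nonempty)
    (hK : ∀ y : V, y ∈ Gam S μ → y 1 < c2 → y 0 ≤ K) :
    sSup ((fun θ : V => θ 0) '' (Dset S μ 0 c1 ∩ Dset S μ 1 c2)) ≤ K := by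
  refine csSup_le hne ?_
  rintro x ⟨θ, ⟨_, ⟨θ', hΓ, hlt, hcap⟩⟩, rfl⟩
  exact le_trans (le_of_lt (hlt 0)) (hK θ' hΓ hcap)

lemma ub_cross1 {K : ℝ}
    (hne : ((fun θ : V => θ 1) '' (Dset S μ 0 c1 ∩ Dset S μ 1 c2)).Nonempty)
    (hK : ∀ y : V, y ∈ Gam S μ → y 0 < c1 → y 1 ≤ K) :
    sSup ((fun θ : V => θ 1) '' (Dset S μ 0 c1 ∩ Dset S μ 1 c2)) ≤ K := by
  refine csSup_le hne ?_
  rintro x ⟨θ, ⟨⟨θ', hΓ, hlt, hcap⟩, _⟩, rfl⟩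
  exact le_trans (le_of_lt (hlt 1)) (hK θ' hΓ hcap)

lemma lb_mem {P : V} (hP : P ∈ Gam S μ) (h0 : P 0 < c1) (h1 : P 1 < c2) (i : Fin 2) :
    P i ≤ sSup ((fun θ : V => θ i) '' (Dset S μ 0 c1 ∩ Dset S μ 1 c2)) := by
  refine le_of_forall_pos_le_add ?_
  intro ε hε
  have hmem : P i - ε ∈ (fun θ : V => θ i) '' (Dset S μ 0 c1 ∩ Dset S μ 1 c2) :=
    ⟨fun j => P j - ε, mem_DD hP h0 h1 hε, rfl⟩
  have := le_csSup (bddE i) hmem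
  linarith

lemma lb_boundary (hSpd : S.PosDef) (hSsym : S.IsSymm) {z W : V}
    (hz : 0 ≤ gam S μ z) (hz0 : z 0 ≤ c1) (hz1 : z 1 ≤ c2)
    (hW : W ∈ Gam S μ) (hW0 : W 0 < c1) (hW1 : W 1 < c2) (i : Fin 2) :
    z i ≤ sSup ((fun θ : V => θ i) '' (Dset S μ 0 c1 ∩ Dset S μ 1 c2)) := by
  obtain ⟨hs00, hs11, hsd⟩ := posdef_scalars hSpd
  refine le_of_forall_pos_le_add ?_
  intro ε hε
  obtain ⟨B, hB, hBpos⟩ : ∃ B, B = |z 0 - W 0| + |z 1 - W 1| + 1 ∧ 0 < B :=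
    ⟨_, rfl, by positivity⟩
  obtain ⟨σ, hσ0, hσ1, hσB⟩ : ∃ σ, 0 < σ ∧ σ ≤ 1 ∧ σ*B ≤ ε/2 :=
    ⟨min 1 ((ε/2)/B), lt_min one_pos (div_pos (by linarith) hBpos), min_le_left _ _,
      (le_div_iff₀ hBpos).mp (min_le_right _ _)⟩
  set P : V := fun j => z j + σ*(W j - z j) with hPd
  have hPΓ : P ∈ Gam S μ := by
    have hgz : 0 ≤ Gs (S 0 0) (S 0 1) (S 1 1) (μ 0) (μ 1) (z 0) (z 1) := by
      rw [← gam_eq hSsym]; exact hz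
    have hgW : 0 < Gs (S 0 0) (S 0 1) (S 1 1) (μ 0) (μ 1) (W 0) (W 1) := by
      rw [← gam_eq hSsym]; exact hW
    have hP0 : P 0 = z 0 + σ*(W 0 - z 0) := rfl
    have hP1 : P 1 = z 1 + σ*(W 1 - z 1) := rfl
    show 0 < gam S μ P
    rw [gam_eq hSsym, hP0, hP1, Gseg]
    have hquad := quad_nonneg hs00 hsd (W 0 - z 0) (W 1 - z 1)
    have h2 : 0 ≤ σ*(1-σ) := mul_nonneg hσ0.le (by linarith)
    nlinarith [mul_nonneg h2 hquad, mul_nonneg (by linarith : (0:ℝ) ≤ 1-σ) hgz]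
  have hP0c : P 0 < c1 := by
    have hP0 : P 0 = z 0 + σ*(W 0 - z 0) := rfl
    rw [hP0]
    nlinarith [mul_nonneg (by linarith : (0:ℝ) ≤ 1-σ) (by linarith : (0:ℝ) ≤ c1 - z 0),
      mul_pos hσ0 (by linarith : (0:ℝ) < c1 - W 0)]
  have hP1c : P 1 < c2 := by
    have hP1 : P 1 = z 1 + σ*(W 1 - z 1) := rfl
    rw [hP1]
    nlinarith [mul_nonneg (by linarith : (0:ℝ) ≤ 1-σ) (by linarith : (0:ℝ) ≤ c2 - z 1),
      mul_pos hσ0 (by linarith : (0:ℝ) < c2 - W 1)]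
  have hlb := lb_mem hPΓ hP0c hP1c i
  have hPi : P i = z i + σ*(W i - z i) := rfl
  have hzi : z i - P i ≤ ε/2 := by
    rw [hPi]
    have h4 : z i - (z i + σ*(W i - z i)) = σ*(z i - W i) := by ring
    rw [h4]
    have h3 : σ*(z i - W i) ≤ σ*B := by
      apply mul_le_mul_of_nonneg_left _ hσ0.le
      fin_cases i
      · have := le_abs_self (z 0 - W 0)
        have := abs_nonneg (z 1 - W 1)
        rw [hB]; simp; linarith
      · have := le_abs_self (z 1 - W 1)
        have := abs_nonneg (z 0 - W 0)
        rw [hB]; simp; linarith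
    linarith
  linarith

lemma exists_W (hSpd : S.PosDef) (hSsym : S.IsSymm) (hμ : μ ≠ 0)
    (hc1 : 0 < c1) (hc2 : 0 < c2) :
    ∃ W : V, W ∈ Gam S μ ∧ W 0 < c1 ∧ W 1 < c2 := by
  obtain ⟨hs00, hs11, hsd⟩ := posdef_scalars hSpd
  set N := (μ 0)^2 + (μ 1)^2 with hN
  have hNpos : 0 < N := by
    rcases (by
      by_contra hc
      push_neg at hc
      apply hμ
      funext j
      fin_cases j <;> simp <;> tauto : μ 0 ≠ 0 ∨ μ 1 ≠ 0) with h | h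
    · positivity
    · positivity
  set Q := S 0 0 * (μ 0)^2 + 2 * S 0 1 * (μ 0) * (μ 1) + S 1 1 * (μ 1)^2 with hQ
  have hQpos : 0 < Q := by
    apply quad_pos hs00 hsd
    by_contra hc
    push_neg at hc
    apply hμ
    funext j
    fin_cases j <;> simp [hc.1, hc.2]
  set k := N/Q with hk
  have hkpos : 0 < k := div_pos hNpos hQpos
  have hkQ : k*Q = N := by rw [hk]; field_simp
  set δ := min 1 (min (c1/(k*|μ 0|+1)) (c2/(k*|μ 1|+1))) with hδ
  have hd1 : 0 < c1/(k*|μ 0|+1) := div_pos hc1 (by positivity)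
  have hd2 : 0 < c2/(k*|μ 1|+1) := div_pos hc2 (by positivity)
  have hδ0 : 0 < δ := lt_min one_pos (lt_min hd1 hd2)
  have hδ1 : δ ≤ 1 := min_le_left _ _
  refine ⟨fun j => -(δ*k)*μ j, ?_, ?_, ?_⟩
  · show 0 < gam S μ _
    rw [gam_eq hSsym]
    have hval : Gs (S 0 0) (S 0 1) (S 1 1) (μ 0) (μ 1) (-(δ*k)*μ 0) (-(δ*k)*μ 1)
        = δ*k*N - δ^2*k*(k*Q)/2 := by
      rw [hN, hQ]; unfold Gs; ring
    rw [hval, hkQ]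
    have hδ2 : δ^2 ≤ δ := by nlinarith
    have h5 : δ^2*(k*N) ≤ δ*(k*N) :=
      mul_le_mul_of_nonneg_right hδ2 (mul_nonneg hkpos.le hNpos.le)
    nlinarith [mul_pos (mul_pos hδ0 hkpos) hNpos]
  · show -(δ*k)*μ 0 < c1
    have h1 : -(δ*k)*μ 0 ≤ δ*k*|μ 0| := by
      have := neg_abs_le (μ 0)
      nlinarith [mul_pos hδ0 hkpos]
    have h2 : δ*(k*|μ 0|+1) ≤ c1 := by
      have h3 : δ ≤ c1/(k*|μ 0|+1) := le_trans (min_le_right _ _) (min_le_left _ _)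
      rw [← le_div_iff₀ (by positivity : (0:ℝ) < k*|μ 0|+1)]
      exact h3
    nlinarith
  · show -(δ*k)*μ 1 < c2
    have h1 : -(δ*k)*μ 1 ≤ δ*k*|μ 1| := by
      have := neg_abs_le (μ 1)
      nlinarith [mul_pos hδ0 hkpos]
    have h2 : δ*(k*|μ 1|+1) ≤ c2 := by
      have h3 : δ ≤ c2/(k*|μ 1|+1) := le_trans (min_le_right _ _) (min_le_right _ _)
      rw [← le_div_iff₀ (by positivity : (0:ℝ) < k*|μ 1|+1)]
      exact h3
    nlinarith

end Sup

/-- identification of `τ = (τ₁, τ₂)` in the three categories (eq. (3.20)). -/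
theorem stmt_3
    (S R : Matrix (Fin 2) (Fin 2) ℝ) (μ : V)
    (hSpd : S.PosDef) (hSsym : S.IsSymm) (hμ : μ ≠ 0)
    (hP : condP R) (hS : condS μ R)
    (θmax1 θmax2 tθ1r tθ2r : V)
    (hmax1 : gam S μ θmax1 = 0 ∧ ∀ θ, gam S μ θ = 0 → θ 0 ≤ θmax1 0)
    (hmax2 : gam S μ θmax2 = 0 ∧ ∀ θ, gam S μ θ = 0 → θ 1 ≤ θmax2 1)
    (htθ1r : (θray1 S μ R = θmax1 ∧ tθ1r = θmax1) ∨
      (θray1 S μ R ≠ θmax1 ∧ gam S μ tθ1r = 0 ∧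
        tθ1r 0 = θray1 S μ R 0 ∧ tθ1r 1 ≠ θray1 S μ R 1))
    (htθ2r : (θray2 S μ R = θmax2 ∧ tθ2r = θmax2) ∨
      (θray2 S μ R ≠ θmax2 ∧ gam S μ tθ2r = 0 ∧
        tθ2r 1 = θray2 S μ R 1 ∧ tθ2r 0 ≠ θray2 S μ R 0))
    (θΓ1 θΓ2 : V)
    (hθΓ1 : θΓ1 = if gam2 R θmax1 ≤ 0 then θmax1 else θray1 S μ R)
    (hθΓ2 : θΓ2 = if gam1 R θmax2 ≤ 0 then θmax2 else θray2 S μ R)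
    (τ : V)
    (hτ : ∀ i, τ i = sSup ((fun θ => θ i) ''
      (Dset S μ 0 (θΓ1 0) ∩ Dset S μ 1 (θΓ2 1)))) :
    -- Category I
    (θΓ2 0 < θΓ1 0 → θΓ1 1 < θΓ2 1 → τ 0 = θΓ1 0 ∧ τ 1 = θΓ2 1) ∧
    -- Category II
    ((∀ i, θΓ2 i ≤ θΓ1 i) → τ = tθ2r) ∧
    -- Category III
    ((∀ i, θΓ1 i ≤ θΓ2 i) → τ = tθ1r) := by
  obtain ⟨hs00, hs11, hsd⟩ := posdef_scalars hSpd
  have hgam : ∀ θ : V, gam S μ θ =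
      Gs (S 0 0) (S 0 1) (S 1 1) (μ 0) (μ 1) (θ 0) (θ 1) := gam_eq hSsym μ
  have hgam' : ∀ θ : V, gam S μ θ =
      Gs (S 1 1) (S 0 1) (S 0 0) (μ 1) (μ 0) (θ 1) (θ 0) := by
    intro θ; rw [hgam]; unfold Gs; ring
  obtain ⟨hP1, hP2, hP3⟩ := hP
  obtain ⟨hS1, hS2⟩ := hS
  have hmu : ¬(μ 0 = 0 ∧ μ 1 = 0) := by
    intro h; apply hμ; funext j; fin_cases j <;> simp [h.1, h.2]
  obtain ⟨hu_line, hu1, hu_gam⟩ := ray2_props hSpd hSsym ⟨hP1, hP2, hP3⟩ ⟨hS1, hS2⟩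
  obtain ⟨hw_line, hw0, hw_gam⟩ := ray1_props hSpd hSsym ⟨hP1, hP2, hP3⟩ ⟨hS1, hS2⟩
  have hu_gamS : Gs (S 0 0) (S 0 1) (S 1 1) (μ 0) (μ 1) (θray2 S μ R 0) (θray2 S μ R 1) = 0 := by
    rw [← hgam]; exact hu_gam
  have hw_gamS : Gs (S 0 0) (S 0 1) (S 1 1) (μ 0) (μ 1) (θray1 S μ R 0) (θray1 S μ R 1) = 0 := by
    rw [← hgam]; exact hw_gam
  have hm_gam : Gs (S 0 0) (S 0 1) (S 1 1) (μ 0) (μ 1) (θmax1 0) (θmax1 1) = 0 := by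
    rw [← hgam]; exact hmax1.1
  have hM_gam : Gs (S 0 0) (S 0 1) (S 1 1) (μ 0) (μ 1) (θmax2 0) (θmax2 1) = 0 := by
    rw [← hgam]; exact hmax2.1
  have hm_max : ∀ x y, Gs (S 0 0) (S 0 1) (S 1 1) (μ 0) (μ 1) x y = 0 → x ≤ θmax1 0 := by
    intro x y h
    have h2 := hmax1.2 ![x, y] (by rw [hgam]; simpa using h)
    simpa using h2
  have hM_max : ∀ x y, Gs (S 0 0) (S 0 1) (S 1 1) (μ 0) (μ 1) x y = 0 → y ≤ θmax2 1 := by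
    intro x y h
    have h2 := hmax2.2 ![x, y] (by rw [hgam]; simpa using h)
    simpa using h2
  -- positivity of the two caps
  have hc1pos : 0 < θΓ1 0 := by
    rw [hθΓ1]; split_ifs with h
    · exact lt_of_lt_of_le hw0 (hm_max _ _ hw_gamS)
    · exact hw0
  have hc2pos : 0 < θΓ2 1 := by
    rw [hθΓ2]; split_ifs with h
    · exact lt_of_lt_of_le hu1 (hM_max _ _ hu_gamS)
    · exact hu1
  have hθΓ1gam : gam S μ θΓ1 = 0 := by
    rw [hθΓ1]; split_ifs with h
    · exact hmax1.1
    · exact hw_gam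
  have hθΓ2gam : gam S μ θΓ2 = 0 := by
    rw [hθΓ2]; split_ifs with h
    · exact hmax2.1
    · exact hu_gam
  obtain ⟨W, hWΓ, hW0, hW1⟩ := exists_W hSpd hSsym hμ hc1pos hc2pos
  have hne : ∀ i : Fin 2,
      ((fun θ : V => θ i) '' (Dset S μ 0 (θΓ1 0) ∩ Dset S μ 1 (θΓ2 1))).Nonempty :=
    fun i => ⟨(fun j => W j - 1) i, ⟨fun j => W j - 1, mem_DD hWΓ hW0 hW1 one_pos, rfl⟩⟩
  -- branch data for θΓ1 θΓ2
  have hg1 : (R 0 1 * θmax1 0 + R 1 1 * θmax1 1 ≤ 0 ∧ θΓ1 0 = θmax1 0 ∧ θΓ1 1 = θmax1 1) ∨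
      (0 < R 0 1 * θmax1 0 + R 1 1 * θmax1 1 ∧ θΓ1 0 = θray1 S μ R 0 ∧ θΓ1 1 = θray1 S μ R 1) := by
    by_cases h : gam2 R θmax1 ≤ 0
    · left
      refine ⟨by simpa [gam2] using h, ?_, ?_⟩ <;> rw [hθΓ1, if_pos h]
    · right
      push_neg at h
      refine ⟨by simpa [gam2] using h, ?_, ?_⟩ <;> rw [hθΓ1, if_neg (by simpa [gam2, not_le] using h)]
  have hg2 : (R 0 0 * θmax2 0 + R 1 0 * θmax2 1 ≤ 0 ∧ θΓ2 0 = θmax2 0 ∧ θΓ2 1 = θmax2 1) ∨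
      (0 < R 0 0 * θmax2 0 + R 1 0 * θmax2 1 ∧ θΓ2 0 = θray2 S μ R 0 ∧ θΓ2 1 = θray2 S μ R 1) := by
    by_cases h : gam1 R θmax2 ≤ 0
    · left
      refine ⟨by simpa [gam1] using h, ?_, ?_⟩ <;> rw [hθΓ2, if_pos h]
    · right
      push_neg at h
      refine ⟨by simpa [gam1] using h, ?_, ?_⟩ <;> rw [hθΓ2, if_neg (by simpa [gam1, not_le] using h)]
  refine ⟨?_, ?_, ?_⟩
  · -- Category I
    intro hI0 hI1
    constructor
    · rw [hτ 0]
      exact le_antisymm (ub_cap0 (hne 0))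
        (lb_boundary hSpd hSsym hθΓ1gam.ge le_rfl hI1.le hWΓ hW0 hW1 0)
    · rw [hτ 1]
      exact le_antisymm (ub_cap1 (hne 1))
        (lb_boundary hSpd hSsym hθΓ2gam.ge hI0.le le_rfl hWΓ hW0 hW1 1)
  · -- Category II
    intro hcat
    have hz : (θray2 S μ R 0 = θmax2 0 ∧ θray2 S μ R 1 = θmax2 1 ∧
        tθ2r 0 = θmax2 0 ∧ tθ2r 1 = θmax2 1) ∨
        (Gs (S 0 0) (S 0 1) (S 1 1) (μ 0) (μ 1) (tθ2r 0) (tθ2r 1) = 0 ∧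
          tθ2r 1 = θray2 S μ R 1 ∧ tθ2r 0 ≠ θray2 S μ R 0) := by
      rcases htθ2r with ⟨h1, h2⟩ | ⟨_, h2, h3, h4⟩
      · exact Or.inl ⟨by rw [h1], by rw [h1], by rw [h2], by rw [h2]⟩
      · exact Or.inr ⟨by rw [← hgam]; exact h2, h3, h4⟩
    obtain ⟨hzgam, hz1, hz0le, hUB⟩ := coreII hs00 hs11 hsd hmu hP1 hP2 hP3 hS1
      hm_gam hm_max hM_gam hM_max hu_line hu_gamS hu1 hw_line hw_gamS hw0
      hz hg1 hg2 (hcat 0) (hcat 1)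
    have hzgamV : gam S μ tθ2r = 0 := by rw [hgam]; exact hzgam
    have h0 : τ 0 = tθ2r 0 := by
      rw [hτ 0]
      refine le_antisymm (ub_cross0 (hne 0) ?_)
        (lb_boundary hSpd hSsym hzgamV.ge hz0le hz1.le hWΓ hW0 hW1 0)
      intro y hyΓ hycap
      have hyg : 0 < Gs (S 0 0) (S 0 1) (S 1 1) (μ 0) (μ 1) (y 0) (y 1) := by
        rw [← hgam]; exact hyΓ
      exact hUB (y 0) (y 1) hyg hycap
    have h1 : τ 1 = tθ2r 1 := by
      rw [hτ 1]
      refine le_antisymm ?_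
        (lb_boundary hSpd hSsym hzgamV.ge hz0le hz1.le hWΓ hW0 hW1 1)
      rw [hz1]
      exact ub_cap1 (hne 1)
    funext i
    fin_cases i
    · exact h0
    · exact h1
  · -- Category III (mirror of II)
    intro hcat
    have hz' : (θray1 S μ R 1 = θmax1 1 ∧ θray1 S μ R 0 = θmax1 0 ∧
        tθ1r 1 = θmax1 1 ∧ tθ1r 0 = θmax1 0) ∨
        (Gs (S 1 1) (S 0 1) (S 0 0) (μ 1) (μ 0) (tθ1r 1) (tθ1r 0) = 0 ∧
          tθ1r 0 = θray1 S μ R 0 ∧ tθ1r 1 ≠ θray1 S μ R 1) := by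
      rcases htθ1r with ⟨h1, h2⟩ | ⟨_, h2, h3, h4⟩
      · exact Or.inl ⟨by rw [h1], by rw [h1], by rw [h2], by rw [h2]⟩
      · exact Or.inr ⟨by rw [← hgam']; exact h2, h3, h4⟩
    have hm_max' : ∀ x y, Gs (S 1 1) (S 0 1) (S 0 0) (μ 1) (μ 0) x y = 0 → x ≤ θmax2 1 := by
      intro x y h
      have h2 := hmax2.2 ![y, x] (by rw [hgam']; simpa using h)
      simpa using h2
    have hM_max' : ∀ x y, Gs (S 1 1) (S 0 1) (S 0 0) (μ 1) (μ 0) x y = 0 → y ≤ θmax1 0 := by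
      intro x y h
      have h2 := hmax1.2 ![y, x] (by rw [hgam']; simpa using h)
      simpa using h2
    have hm_gam' : Gs (S 1 1) (S 0 1) (S 0 0) (μ 1) (μ 0) (θmax2 1) (θmax2 0) = 0 := by
      rw [← hgam']; exact hmax2.1
    have hM_gam' : Gs (S 1 1) (S 0 1) (S 0 0) (μ 1) (μ 0) (θmax1 1) (θmax1 0) = 0 := by
      rw [← hgam']; exact hmax1.1
    have hu_gam' : Gs (S 1 1) (S 0 1) (S 0 0) (μ 1) (μ 0) (θray1 S μ R 1) (θray1 S μ R 0) = 0 := by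
      rw [← hgam']; exact hw_gam
    have hw_gam' : Gs (S 1 1) (S 0 1) (S 0 0) (μ 1) (μ 0) (θray2 S μ R 1) (θray2 S μ R 0) = 0 := by
      rw [← hgam']; exact hu_gam
    have hg1' : (R 1 0 * θmax2 1 + R 0 0 * θmax2 0 ≤ 0 ∧ θΓ2 1 = θmax2 1 ∧ θΓ2 0 = θmax2 0) ∨
        (0 < R 1 0 * θmax2 1 + R 0 0 * θmax2 0 ∧ θΓ2 1 = θray2 S μ R 1 ∧ θΓ2 0 = θray2 S μ R 0) := by
      rcases hg2 with ⟨h1, h2, h3⟩ | ⟨h1, h2, h3⟩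
      · exact Or.inl ⟨by linarith, h3, h2⟩
      · exact Or.inr ⟨by linarith, h3, h2⟩
    have hg2' : (R 1 1 * θmax1 1 + R 0 1 * θmax1 0 ≤ 0 ∧ θΓ1 1 = θmax1 1 ∧ θΓ1 0 = θmax1 0) ∨
        (0 < R 1 1 * θmax1 1 + R 0 1 * θmax1 0 ∧ θΓ1 1 = θray1 S μ R 1 ∧ θΓ1 0 = θray1 S μ R 0) := by
      rcases hg1 with ⟨h1, h2, h3⟩ | ⟨h1, h2, h3⟩
      · exact Or.inl ⟨by linarith, h3, h2⟩
      · exact Or.inr ⟨by linarith, h3, h2⟩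
    obtain ⟨hzgam, hz1, hz0le, hUB⟩ := coreII (s00 := S 1 1) (s01 := S 0 1) (s11 := S 0 0)
      (a0 := μ 1) (a1 := μ 0) (r00 := R 1 1) (r01 := R 1 0) (r10 := R 0 1) (r11 := R 0 0)
      hs11 hs00 (by nlinarith [hsd]) (fun h => hmu ⟨h.2, h.1⟩)
      hP2 hP1 (by nlinarith [hP3]) hS2
      hm_gam' hm_max' hM_gam' hM_max'
      (by linarith [hw_line]) hu_gam' hw0
      (by linarith [hu_line]) hw_gam' hu1
      hz' hg1' hg2' (hcat 1) (hcat 0)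
    have hzgamV : gam S μ tθ1r = 0 := by rw [hgam']; exact hzgam
    have h0 : τ 0 = tθ1r 0 := by
      rw [hτ 0]
      refine le_antisymm ?_
        (lb_boundary hSpd hSsym hzgamV.ge hz1.le hz0le hWΓ hW0 hW1 0)
      rw [hz1]
      exact ub_cap0 (hne 0)
    have h1 : τ 1 = tθ1r 1 := by
      rw [hτ 1]
      refine le_antisymm (ub_cross1 (hne 1) ?_)
        (lb_boundary hSpd hSsym hzgamV.ge hz1.le hz0le hWΓ hW0 hW1 1)
      intro y hyΓ hycap
      have hyg : 0 < Gs (S 1 1) (S 0 1) (S 0 0) (μ 1) (μ 0) (y 1) (y 0) := by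
        rw [← hgam']; exact hyΓ
      exact hUB (y 1) (y 0) hyg hycap
    funext i
    fin_cases i
    · exact h0
    · exact h1
end
end

section
/- Let Σ be a 2×2 real symmetric positive definite matrix, μ ∈ ℝ² with μ ≠ 0, and v ∈ ℝ² with v₁ ≥ 0, v₂ ≥ 0 and v ≠ 0. Then sup{⟨v, θ⟩ : θ ∈ ℝ², γ(θ) ≥ 0} = sqrt(⟨μ, Σ⁻¹μ⟩ · ⟨v, Σ⁻¹v⟩) − ⟨μ, Σ⁻¹v⟩, and the supremum is attained at the point θ^(v,Γ) = Σ⁻¹(σ v − μ), where σ = sqrt(⟨Σ⁻¹μ, μ⟩ / ⟨Σ⁻¹v, v⟩). -/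
open Matrix Set

noncomputable section

lemma dot_symm (S : Matrix (Fin 2) (Fin 2) ℝ) (hS : S.IsSymm) (x y : V) :
    x ⬝ᵥ S.mulVec y = y ⬝ᵥ S.mulVec x := by
  rw [Matrix.dotProduct_mulVec, ← Matrix.vecMul_transpose, hS.eq, dotProduct_comm]

lemma cs (S : Matrix (Fin 2) (Fin 2) ℝ) (hS : S.PosDef) (hSsym : S.IsSymm) (x y : V) :
    (x ⬝ᵥ S.mulVec y)^2 ≤ (x ⬝ᵥ S.mulVec x) * (y ⬝ᵥ S.mulVec y) := by
  by_cases hx : x = 0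
  · simp [hx]
  have ha : 0 < x ⬝ᵥ S.mulVec x := by simpa using hS.dotProduct_mulVec_pos hx
  set a := x ⬝ᵥ S.mulVec x with hadef
  set b := x ⬝ᵥ S.mulVec y with hbdef
  have hz : 0 ≤ (a • y - b • x) ⬝ᵥ S.mulVec (a • y - b • x) := by
    rcases eq_or_ne (a • y - b • x) 0 with h | h
    · simp [h]
    · exact le_of_lt (by simpa using hS.dotProduct_mulVec_pos h)
  have hyx : y ⬝ᵥ S.mulVec x = b := dot_symm S hSsym y x ▸ rfl
  have hexp : (a • y - b • x) ⬝ᵥ S.mulVec (a • y - b • x)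
      = a^2 * (y ⬝ᵥ S.mulVec y) - a * b^2 := by
    simp only [Matrix.mulVec_sub, Matrix.mulVec_smul, sub_dotProduct,
      dotProduct_sub, smul_dotProduct, dotProduct_smul,
      smul_eq_mul]
    rw [dot_symm S hSsym y x]
    ring
  rw [hexp] at hz
  nlinarith [hz, ha]

/-- `sup{⟨v,θ⟩ : γ(θ) ≥ 0} = √(⟨μ,Σ⁻¹μ⟩⟨v,Σ⁻¹v⟩) − ⟨μ,Σ⁻¹v⟩`,
attained at `θ^(v,Γ) = Σ⁻¹(σv − μ)` (Lemma 4.1). -/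
theorem stmt_5
    (S : Matrix (Fin 2) (Fin 2) ℝ) (μ v : V)
    (hSpd : S.PosDef) (hSsym : S.IsSymm) (hμ : μ ≠ 0)
    (hv1 : 0 ≤ v 0) (hv2 : 0 ≤ v 1) (hv : v ≠ 0)
    (σ : ℝ) (hσ : σ = Real.sqrt ((S⁻¹.mulVec μ ⬝ᵥ μ) / (S⁻¹.mulVec v ⬝ᵥ v)))
    (θvΓ : V) (hθvΓ : θvΓ = S⁻¹.mulVec (σ • v - μ)) :
    sSup ((fun θ => v ⬝ᵥ θ) '' {θ | 0 ≤ gam S μ θ}) =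
      Real.sqrt ((μ ⬝ᵥ S⁻¹.mulVec μ) * (v ⬝ᵥ S⁻¹.mulVec v)) - μ ⬝ᵥ S⁻¹.mulVec v ∧
    v ⬝ᵥ θvΓ =
      Real.sqrt ((μ ⬝ᵥ S⁻¹.mulVec μ) * (v ⬝ᵥ S⁻¹.mulVec v)) - μ ⬝ᵥ S⁻¹.mulVec v ∧
    IsGreatest ((fun θ => v ⬝ᵥ θ) '' {θ | 0 ≤ gam S μ θ}) (v ⬝ᵥ θvΓ) := by
  set A := S⁻¹ with hAdef
  have hA : A.PosDef := hSpd.inv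
  have hAsym : A.IsSymm := by
    rw [Matrix.IsSymm, hAdef, Matrix.transpose_nonsing_inv, hSsym.eq]
  have hSAone : S * A = 1 := Matrix.mul_nonsing_inv S hSpd.det_pos.ne'.isUnit
  have hSA : ∀ x : V, S.mulVec (A.mulVec x) = x := by
    intro x
    rw [Matrix.mulVec_mulVec, hSAone, Matrix.one_mulVec]
  set m := μ ⬝ᵥ A.mulVec μ with hmdef
  set w := v ⬝ᵥ A.mulVec v with hwdef
  set c := μ ⬝ᵥ A.mulVec v with hcdef
  have hm : 0 < m := by simpa [hmdef] using hA.dotProduct_mulVec_pos hμ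
  have hw : 0 < w := by simpa [hwdef] using hA.dotProduct_mulVec_pos hv
  -- σ facts
  have hσ' : σ = Real.sqrt (m / w) := by
    rw [hσ, dotProduct_comm (A.mulVec μ) μ, dotProduct_comm (A.mulVec v) v]
  have hσnn : 0 ≤ σ := hσ' ▸ Real.sqrt_nonneg _
  have hσsq : σ^2 = m / w := by
    rw [hσ', Real.sq_sqrt (by positivity)]
  have hσw : σ * w = Real.sqrt (m * w) := by
    have h1 : (σ * w)^2 = m * w := by
      rw [mul_pow, hσsq]; field_simp
    rw [← h1, Real.sqrt_sq (by positivity)]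
  -- value of v ⬝ᵥ θvΓ
  have hθ : θvΓ = σ • A.mulVec v - A.mulVec μ := by
    rw [hθvΓ, Matrix.mulVec_sub, Matrix.mulVec_smul]
  have hval : v ⬝ᵥ θvΓ = Real.sqrt (m * w) - c := by
    rw [hθ, dotProduct_sub, dotProduct_smul, smul_eq_mul, ← hwdef,
      dot_symm A hAsym v μ, ← hcdef, hσw]
  -- membership: gam S μ θvΓ = 0
  have hmem : θvΓ ∈ {θ : V | 0 ≤ gam S μ θ} := by
    have hSθ : S.mulVec θvΓ = σ • v - μ := by rw [hθvΓ, hSA]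
    have h1 : θvΓ ⬝ᵥ S.mulVec θvΓ = σ^2 * w - 2 * σ * c + m := by
      rw [hSθ, hθvΓ, dotProduct_comm]
      simp only [Matrix.mulVec_sub, Matrix.mulVec_smul, sub_dotProduct,
        dotProduct_sub, smul_dotProduct, dotProduct_smul, smul_eq_mul]
      rw [dot_symm A hAsym v μ]
      ring
    have h2 : μ ⬝ᵥ θvΓ = σ * c - m := by
      rw [hθ, dotProduct_sub, dotProduct_smul, smul_eq_mul, ← hcdef, ← hmdef]
    have hσ2w : σ^2 * w = m := by rw [hσsq]; field_simp
    simp only [mem_setOf_eq, gam, h1, h2, hσ2w]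
    nlinarith [hσ2w]
  -- upper bound
  have hub : ∀ r ∈ (fun θ => v ⬝ᵥ θ) '' {θ : V | 0 ≤ gam S μ θ},
      r ≤ Real.sqrt (m * w) - c := by
    rintro r ⟨θ, hθmem, rfl⟩
    simp only [mem_setOf_eq, gam] at hθmem
    set x := θ + A.mulVec μ with hxdef
    have hxSx : x ⬝ᵥ S.mulVec x ≤ m := by
      have e1 : θ ⬝ᵥ S.mulVec (A.mulVec μ) = μ ⬝ᵥ θ := by
        rw [hSA, dotProduct_comm]
      have e2 : (A.mulVec μ) ⬝ᵥ S.mulVec θ = μ ⬝ᵥ θ := by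
        rw [dot_symm S hSsym, e1]
      have e3 : (A.mulVec μ) ⬝ᵥ S.mulVec (A.mulVec μ) = m := by
        rw [hSA, dotProduct_comm]
      have hexp : x ⬝ᵥ S.mulVec x
          = θ ⬝ᵥ S.mulVec θ + 2 * (μ ⬝ᵥ θ) + m := by
        rw [hxdef]
        simp only [Matrix.mulVec_add, add_dotProduct, dotProduct_add]
        rw [e1, e2, e3]; ring
      rw [hexp]; linarith
    have hySy : (A.mulVec v) ⬝ᵥ S.mulVec (A.mulVec v) = w := by
      rw [hSA, dotProduct_comm]
    have hvx : v ⬝ᵥ x = (A.mulVec v) ⬝ᵥ S.mulVec x := by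
      rw [dot_symm S hSsym, hSA, dotProduct_comm]
    have hcs := cs S hSpd hSsym (A.mulVec v) x
    rw [hySy] at hcs
    have hxnn : 0 ≤ x ⬝ᵥ S.mulVec x := by
      rcases eq_or_ne x 0 with h | h
      · simp [h]
      · exact le_of_lt (by simpa using hSpd.dotProduct_mulVec_pos h)
    have hcs2 : ((A.mulVec v) ⬝ᵥ S.mulVec x)^2 ≤ m * w := by
      nlinarith [hcs, hxSx, hw.le, hxnn]
    have hle : (A.mulVec v) ⬝ᵥ S.mulVec x ≤ Real.sqrt (m * w) := by
      calc (A.mulVec v) ⬝ᵥ S.mulVec x ≤ |(A.mulVec v) ⬝ᵥ S.mulVec x| := le_abs_self _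
        _ = Real.sqrt (((A.mulVec v) ⬝ᵥ S.mulVec x)^2) := (Real.sqrt_sq_eq_abs _).symm
        _ ≤ Real.sqrt (m * w) := Real.sqrt_le_sqrt hcs2
    have hvθ : v ⬝ᵥ θ = v ⬝ᵥ x - c := by
      rw [hxdef, dotProduct_add, dot_symm A hAsym v μ, ← hcdef]; ring
    show v ⬝ᵥ θ ≤ _
    rw [hvθ, hvx]
    linarith
  have hgr : IsGreatest ((fun θ => v ⬝ᵥ θ) '' {θ : V | 0 ≤ gam S μ θ}) (v ⬝ᵥ θvΓ) := by
    constructor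
    · exact ⟨θvΓ, hmem, rfl⟩
    · intro r hr
      rw [hval]
      exact hub r hr
  refine ⟨?_, hval, hgr⟩
  rw [hgr.csSup_eq, hval]
end
end

section
/- Let Σ be a 2×2 real symmetric positive definite matrix, e = (1, 0) and n = (0, 1). Then every a ∈ ℝ² has the decomposition a = (⟨Σ⁻¹a, e⟩ / ⟨Σ⁻¹e, e⟩) e + (⟨a, n⟩ / ⟨Σn, n⟩) Σn, and the reflected vector ã = (⟨Σ⁻¹a, e⟩ / ⟨Σ⁻¹e, e⟩) e − (⟨a, n⟩ / ⟨Σn, n⟩) Σn satisfies ⟨ã, Σ⁻¹ã⟩ = ⟨a, Σ⁻¹a⟩ and ⟨Σ⁻¹ã, e⟩ = ⟨Σ⁻¹a, e⟩. -/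
open Matrix Set

noncomputable section

/-- orthogonal decomposition of a vector `a` in the basis `{e, Σn}` w.r.t. the
inner product `⟨Σ⁻¹·,·⟩`, and the properties of the reflected vector `ã`
(eqs. (4.5), (4.6), (4.11)). -/
theorem stmt_9
    (S : Matrix (Fin 2) (Fin 2) ℝ)
    (hSpd : S.PosDef) (hSsym : S.IsSymm)
    (e n : V) (he : e = ![1, 0]) (hn : n = ![0, 1])
    (a : V)
    (ta : V)
    (hta : ta = ((S⁻¹.mulVec a ⬝ᵥ e) / (S⁻¹.mulVec e ⬝ᵥ e)) • e -
      ((a ⬝ᵥ n) / (S.mulVec n ⬝ᵥ n)) • S.mulVec n) :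
    a = ((S⁻¹.mulVec a ⬝ᵥ e) / (S⁻¹.mulVec e ⬝ᵥ e)) • e +
        ((a ⬝ᵥ n) / (S.mulVec n ⬝ᵥ n)) • S.mulVec n ∧
    ta ⬝ᵥ S⁻¹.mulVec ta = a ⬝ᵥ S⁻¹.mulVec a ∧
    S⁻¹.mulVec ta ⬝ᵥ e = S⁻¹.mulVec a ⬝ᵥ e := by
  have hdet : 0 < S.det := hSpd.det_pos
  have h11 : 0 < S 1 1 := by
    have := hSpd.dotProduct_mulVec_pos (x := ![0, 1]) (by
      intro h
      have := congrFun h 1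
      simp at this)
    simpa [dotProduct, Matrix.mulVec, Fin.sum_univ_two] using this
  have hsym : S 0 1 = S 1 0 := by
    have := congrFun (congrFun hSsym.eq 0) 1
    simpa [Matrix.transpose_apply] using this.symm
  have hdet' : S.det = S 0 0 * S 1 1 - S 0 1 * S 1 0 := Matrix.det_fin_two S
  have hdet0 : S 0 0 * S 1 1 - S 0 1 * S 1 0 ≠ 0 := by rw [← hdet']; exact hdet.ne'
  have hinv : S⁻¹ = S.det⁻¹ • !![S 1 1, -(S 0 1); -(S 1 0), S 0 0] := by
    rw [Matrix.inv_def, Matrix.adjugate_fin_two]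
    simp [Ring.inverse_eq_inv, Matrix.etaExpand_eq]
  subst he hn hta
  refine ⟨?_, ?_, ?_⟩
  · funext i
    fin_cases i <;>
      simp [hinv, Matrix.mulVec, dotProduct, Fin.sum_univ_two, hdet'] <;>
      (field_simp; try ring)
  · simp [hinv, Matrix.mulVec, dotProduct, Fin.sum_univ_two, hdet']
    field_simp
    rw [hsym]
    ring
  · simp [hinv, Matrix.mulVec, dotProduct, Fin.sum_univ_two, hdet']
    field_simp
    rw [hsym]
    ring
end
end

section
/- Let Σ be a 2×2 real symmetric positive definite matrix and μ ∈ ℝ². Let θ ∈ ℝ² satisfy γ(θ) = 0, set a = Σθ + μ, and let ã = (⟨Σ⁻¹a, e⟩ / ⟨Σ⁻¹e, e⟩) e − (⟨a, n⟩ / ⟨Σn, n⟩) Σn, where e = (1, 0) and n = (0, 1). Then the point θ̃ = Σ⁻¹(ã − μ) satisfies γ(θ̃) = 0 and θ̃₁ = θ₁; moreover, θ̃ = θ if and only if ⟨a, n⟩ = 0, i.e., if and only if the second component of Σθ + μ is zero. -/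
open Matrix Set

noncomputable section

/-- the point `θ̃ = Σ⁻¹(ã − μ)` is on the ellipse, has the same first
coordinate as `θ`, and coincides with `θ` iff the normal at `θ` is horizontal. -/
theorem stmt_10
    (S : Matrix (Fin 2) (Fin 2) ℝ) (μ θ : V)
    (hSpd : S.PosDef) (hSsym : S.IsSymm)
    (hθ : gam S μ θ = 0)
    (e n : V) (he : e = ![1, 0]) (hn : n = ![0, 1])
    (a : V) (ha : a = S.mulVec θ + μ)
    (ta : V)
    (hta : ta = ((S⁻¹.mulVec a ⬝ᵥ e) / (S⁻¹.mulVec e ⬝ᵥ e)) • e -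
      ((a ⬝ᵥ n) / (S.mulVec n ⬝ᵥ n)) • S.mulVec n)
    (tθ : V) (htθ : tθ = S⁻¹.mulVec (ta - μ)) :
    gam S μ tθ = 0 ∧ tθ 0 = θ 0 ∧ (tθ = θ ↔ (S.mulVec θ + μ) 1 = 0) := by
  have hq : S 1 0 = S 0 1 := hSsym.apply 0 1
  have hr : 0 < S 1 1 := by
    have := hSpd.dotProduct_mulVec_pos (x := ![0,1]) (by intro h; simpa using congrFun h 1)
    simpa [dotProduct, Matrix.mulVec, Fin.sum_univ_two] using this
  have hd : (0:ℝ) < S 0 0 * S 1 1 - S 0 1 * S 0 1 := by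
    have := hSpd.det_pos
    rwa [Matrix.det_fin_two, hq] at this
  have hdet : S.det = S 0 0 * S 1 1 - S 0 1 * S 0 1 := by
    rw [Matrix.det_fin_two, hq]
  have hSinv : S⁻¹ = (S.det)⁻¹ • !![S 1 1, -(S 0 1); -(S 1 0), S 0 0] := by
    rw [Matrix.inv_def, Matrix.adjugate_fin_two, Ring.inverse_eq_inv]
  have L0 : tθ 0 = θ 0 := by
    rw [htθ, hta, ha, he, hn, hSinv]
    simp only [Matrix.mulVec, dotProduct, Fin.sum_univ_two, hq, hdet,
      Matrix.smul_apply, Matrix.cons_val_zero, Matrix.cons_val_one, Matrix.head_cons,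
      Matrix.cons_val', Matrix.empty_val', Matrix.cons_val_fin_one, Matrix.head_fin_const,
      Pi.add_apply, Pi.sub_apply, Pi.smul_apply, smul_eq_mul, Matrix.of_apply]
    have e4 : S 0 0 * S 1 1 - S 0 1 * S 0 1 ≠ 0 := hd.ne'
    have e5 : S 1 1 ≠ 0 := hr.ne'
    simp only [mul_one, mul_zero, add_zero, zero_add]
    generalize hD : S 0 0 * S 1 1 - S 0 1 * S 0 1 = D at *
    field_simp
    subst hD
    ring
  have L1 : tθ 1 = -(θ 1) - 2*(S 0 1 * θ 0 + μ 1)/(S 1 1) := by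
    rw [htθ, hta, ha, he, hn, hSinv]
    simp only [Matrix.mulVec, dotProduct, Fin.sum_univ_two, hq, hdet,
      Matrix.smul_apply, Matrix.cons_val_zero, Matrix.cons_val_one, Matrix.head_cons,
      Matrix.cons_val', Matrix.empty_val', Matrix.cons_val_fin_one, Matrix.head_fin_const,
      Pi.add_apply, Pi.sub_apply, Pi.smul_apply, smul_eq_mul, Matrix.of_apply]
    have e4 : S 0 0 * S 1 1 - S 0 1 * S 0 1 ≠ 0 := hd.ne'
    have e5 : S 1 1 ≠ 0 := hr.ne'
    simp only [mul_one, mul_zero, add_zero, zero_add]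
    generalize hD : S 0 0 * S 1 1 - S 0 1 * S 0 1 = D at *
    field_simp
    subst hD
    ring
  have ha1 : (S.mulVec θ + μ) 1 = S 0 1 * θ 0 + S 1 1 * θ 1 + μ 1 := by
    simp [Matrix.mulVec, dotProduct, Fin.sum_univ_two, hq]
  refine ⟨?_, L0, ?_⟩
  · have : gam S μ tθ = gam S μ θ := by
      unfold gam
      simp only [Matrix.mulVec, dotProduct, Fin.sum_univ_two, hq, L0, L1]
      field_simp
      ring
    rw [this, hθ]
  · constructor
    · intro h
      have h1 := congrFun h 1
      rw [L1] at h1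
      rw [ha1]
      field_simp at h1
      linarith
    · intro h
      rw [ha1] at h
      funext i
      fin_cases i
      · exact L0
      · show tθ 1 = θ 1
        rw [L1]
        field_simp
        linarith
end
end

section
/- Assume conditions (P) and (S). Then the second component of n^Γ(θ̃^(1,r)) = Σθ̃^(1,r) + μ is strictly positive if and only if γ₂(θ^(1,max)) > 0 (equivalently, face F₂ is reflective if and only if the condition θ^(1,max) ∈ ∂Γ₁, i.e. γ₂(θ^(1,max)) ≤ 0, is not satisfied). -/
open Matrix Set

noncomputable section
set_option maxHeartbeats 1600000

/-- Characterization of the point maximizing the first coordinate on the ellipse. -/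
lemma key_max (a b c m0 m1 X Y : ℝ) (hc : 0 < c) (hD : 0 < a*c - b*b)
    (h0 : -(1/2) * (a*X*X + 2*b*X*Y + c*Y*Y) - (m0*X + m1*Y) = 0)
    (hmax : ∀ x y : ℝ, -(1/2) * (a*x*x + 2*b*x*y + c*y*y) - (m0*x + m1*y) = 0 → x ≤ X) :
    ∃ r : ℝ, 0 ≤ r ∧ r*r = (b*m1 - c*m0)^2 + (a*c - b*b)*m1^2 ∧
      (a*c - b*b)*X = (b*m1 - c*m0) + r ∧ b*X + c*Y + m1 = 0 := by
  have hΔ : 0 ≤ (b*m1 - c*m0)^2 + (a*c - b*b)*m1^2 :=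
    add_nonneg (sq_nonneg _) (mul_nonneg hD.le (sq_nonneg _))
  obtain ⟨r, hr0, hr2⟩ : ∃ r:ℝ, 0 ≤ r ∧ r*r = (b*m1 - c*m0)^2 + (a*c - b*b)*m1^2 :=
    ⟨Real.sqrt _, Real.sqrt_nonneg _, Real.mul_self_sqrt hΔ⟩
  have hDne : (a*c - b*b) ≠ 0 := ne_of_gt hD
  have hcne : c ≠ 0 := ne_of_gt hc
  obtain ⟨X', hDX'⟩ : ∃ x, (a*c - b*b) * x = (b*m1 - c*m0) + r :=
    ⟨((b*m1 - c*m0) + r)/(a*c - b*b), by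
      field_simp
      exact mul_div_cancel_left₀ _ (show a*c - b^2 ≠ 0 by intro h; apply hDne; nlinarith)⟩
  obtain ⟨Y', hcY'⟩ : ∃ y, c * y = -(b*X' + m1) := ⟨(-(b*X' + m1))/c, by field_simp⟩
  have h2 : (2*c*(a*c - b*b)) *
      (-(1/2) * (a*X'*X' + 2*b*X'*Y' + c*Y'*Y') - (m0*X' + m1*Y')) = 0 := by
    linear_combination (-(((a*c - b*b))*X' - (b*m1 - c*m0) + r)) * hDX'
      + (-((a*c - b*b)*(c*Y' + b*X' + m1))) * hcY' + (-1) * hr2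
  have h0' : -(1/2) * (a*X'*X' + 2*b*X'*Y' + c*Y'*Y') - (m0*X' + m1*Y') = 0 :=
    (mul_eq_zero.mp h2).resolve_left (ne_of_gt (mul_pos (mul_pos two_pos hc) hD))
  have hle : X' ≤ X := hmax X' Y' h0'
  have hDXge : (b*m1 - c*m0) + r ≤ (a*c - b*b)*X := by
    rw [← hDX']
    exact mul_le_mul_of_nonneg_left hle hD.le
  have hPhiX : -((a*c - b*b))*X*X + 2*(b*m1 - c*m0)*X + m1*m1 = (b*X + c*Y + m1)^2 := by
    linear_combination (2*c) * h0
  have hxge : r ≤ (a*c - b*b)*X - (b*m1 - c*m0) := by linarith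
  have h3 : r*r ≤ ((a*c - b*b)*X - (b*m1 - c*m0)) * ((a*c - b*b)*X - (b*m1 - c*m0)) :=
    mul_le_mul hxge hxge hr0 (hr0.trans hxge)
  have h4 : (a*c - b*b) * ((b*X + c*Y + m1)^2)
      = r*r - ((a*c - b*b)*X - (b*m1 - c*m0))^2 := by
    linear_combination (-(a*c - b*b)) * hPhiX - hr2
  have h40 : (a*c - b*b) * ((b*X + c*Y + m1)^2) = 0 :=
    le_antisymm (by rw [h4]; nlinarith [h3]) (mul_nonneg hD.le (sq_nonneg _))
  have hw2 : (b*X + c*Y + m1)^2 = 0 := (mul_eq_zero.mp h40).resolve_left hDne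
  have hw : b*X + c*Y + m1 = 0 := by
    have := sq_eq_zero_iff.mp hw2
    linarith [this]
  have h5 : ((a*c - b*b)*X - (b*m1 - c*m0))^2 = r*r := by
    rw [h40] at h4
    linarith [h4]
  have hxr : (a*c - b*b)*X - (b*m1 - c*m0) = r := by
    have hfac : ((a*c - b*b)*X - (b*m1 - c*m0) - r)
        * ((a*c - b*b)*X - (b*m1 - c*m0) + r) = 0 := by linear_combination h5
    rcases mul_eq_zero.mp hfac with h | h
    · linarith
    · linarith
  exact ⟨r, hr0, hr2, by linarith, hw⟩

/-- Sign relation: `A < 0 ↔ 0 < γ₂(θmax)`. -/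
lemma key_sign (a b c m0 m1 p q X Y r : ℝ) (hc : 0 < c) (hD : 0 < a*c - b*b)
    (hq : 0 < q) (he : m0*q - m1*p < 0) (hX : 0 < X) (hr0 : 0 ≤ r)
    (hr2 : r*r = (b*m1 - c*m0)^2 + (a*c - b*b)*m1^2)
    (hDX : (a*c - b*b)*X = (b*m1 - c*m0) + r)
    (hgm : b*X + c*Y + m1 = 0) :
    (2*(m0*q - m1*p)*(c*p - b*q) + m1*(a*q^2 - 2*b*p*q + c*p^2) < 0 ↔ 0 < p*X + q*Y) := by
  have ht : 0 < q*r - c*(m0*q - m1*p) := by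
    nlinarith [mul_nonneg hq.le hr0, mul_pos hc (show (0:ℝ) < -(m0*q - m1*p) by linarith)]
  have h5 : ((a*c - b*b)*c) * ((p*X + q*Y)*(q*r - c*(m0*q - m1*p))
      + (2*(m0*q - m1*p)*(c*p - b*q) + m1*(a*q^2 - 2*b*p*q + c*p^2))*X) = 0 := by
    linear_combination ((a*c - b*b)*q*(q*r - c*(m0*q - m1*p))) * hgm
      + ((c*p - b*q)*q*(r + (a*c - b*b)*X - (b*m1 - c*m0))
          - (a*c - b*b)*q*((c*p - b*q)*X - q*m1)) * hDX
      + ((c*p - b*q)*q) * hr2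
  have h6 : (p*X + q*Y)*(q*r - c*(m0*q - m1*p))
      = -((2*(m0*q - m1*p)*(c*p - b*q) + m1*(a*q^2 - 2*b*p*q + c*p^2))*X) := by
    have h7 := (mul_eq_zero.mp h5).resolve_left (ne_of_gt (mul_pos hD hc))
    linarith [h7]
  constructor
  · intro hA
    nlinarith [h6, ht, mul_pos (neg_pos.mpr hA) hX]
  · intro hG
    nlinarith [h6, mul_pos hG ht, hX]

/-- face `F₂` is reflective (i.e. the second component of
`n^Γ(θ̃^(1,r)) = Σθ̃^(1,r) + μ` is positive) iff `γ₂(θ^(1,max)) > 0`. -/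
theorem stmt_11
    (S R : Matrix (Fin 2) (Fin 2) ℝ) (μ : V)
    (hSpd : S.PosDef) (hSsym : S.IsSymm) (hμ : μ ≠ 0)
    (hP : condP R) (hS : condS μ R)
    (θmax1 tθ1r : V)
    (hmax1 : gam S μ θmax1 = 0 ∧ ∀ θ, gam S μ θ = 0 → θ 0 ≤ θmax1 0)
    (htθ1r : (θray1 S μ R = θmax1 ∧ tθ1r = θmax1) ∨
      (θray1 S μ R ≠ θmax1 ∧ gam S μ tθ1r = 0 ∧
        tθ1r 0 = θray1 S μ R 0 ∧ tθ1r 1 ≠ θray1 S μ R 1)) :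
    0 < (S.mulVec tθ1r + μ) 1 ↔ 0 < gam2 R θmax1 := by
  obtain ⟨hg0, hmaxv⟩ := hmax1
  obtain ⟨hP00, hP11, hPdet⟩ := hP
  obtain ⟨hS1, hS2⟩ := hS
  have hb : S 1 0 = S 0 1 := hSsym.apply 0 1
  have ha : 0 < S 0 0 := by
    exact hSpd.diag_pos
  have hc : 0 < S 1 1 := by
    exact hSpd.diag_pos
  have hdet : 0 < S.det := hSpd.det_pos
  have hD : 0 < S 0 0 * S 1 1 - S 0 1 * S 0 1 := by
    rw [Matrix.det_fin_two, hb] at hdet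
    exact hdet
  have hgam_eq : ∀ θ : V, gam S μ θ =
      -(1/2) * (S 0 0 * θ 0 * θ 0 + 2 * S 0 1 * θ 0 * θ 1 + S 1 1 * θ 1 * θ 1)
        - (μ 0 * θ 0 + μ 1 * θ 1) := by
    intro θ
    simp only [gam, Matrix.mulVec, dotProduct, Fin.sum_univ_two]
    rw [hb]; ring
  have hdot1 : μ ⬝ᵥ pvec1 R = μ 0 * R 1 1 - μ 1 * R 0 1 := by
    simp [pvec1, dotProduct, Fin.sum_univ_two]
    ring
  have hdot2 : pvec1 R ⬝ᵥ S.mulVec (pvec1 R)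
      = S 0 0 * R 1 1^2 - 2*S 0 1*R 0 1*R 1 1 + S 1 1*R 0 1^2 := by
    simp only [pvec1, Matrix.mulVec, dotProduct, Fin.sum_univ_two, Matrix.cons_val_zero,
      Matrix.cons_val_one, Matrix.head_cons]
    rw [hb]; ring
  have hQpos : 0 < S 0 0 * R 1 1^2 - 2*S 0 1*R 0 1*R 1 1 + S 1 1*R 0 1^2 := by
    nlinarith [sq_nonneg (S 1 1 * R 0 1 - S 0 1 * R 1 1), mul_pos hD (mul_pos hP11 hP11), hc]
  have he : μ 0 * R 1 1 - μ 1 * R 0 1 < 0 := by linarith [hS1]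
  obtain ⟨s, hs, hsQ, hrv0, hrv1⟩ : ∃ s:ℝ, 0 < s ∧
      s * (S 0 0 * R 1 1^2 - 2*S 0 1*R 0 1*R 1 1 + S 1 1*R 0 1^2)
        = -2*(μ 0 * R 1 1 - μ 1 * R 0 1) ∧
      θray1 S μ R 0 = s * R 1 1 ∧ θray1 S μ R 1 = -(s * R 0 1) := by
    refine ⟨-2 * (μ ⬝ᵥ pvec1 R) / (pvec1 R ⬝ᵥ S.mulVec (pvec1 R)), ?_, ?_, ?_, ?_⟩
    · rw [hdot1, hdot2]
      exact div_pos (by linarith) hQpos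
    · rw [hdot1, hdot2]
      field_simp
      have hQ' : R 1 1 * (R 1 1 * S 0 0 - 2 * R 0 1 * S 0 1) + R 0 1 ^ 2 * S 1 1 ≠ 0 := by
        intro h; nlinarith [hQpos]
      rw [mul_div_cancel_right₀ _ hQ']
    · simp [θray1, pvec1]
    · simp [θray1, pvec1]
  have hgrc : -(1/2) * (S 0 0 * (s*R 1 1) * (s*R 1 1)
        + 2 * S 0 1 * (s*R 1 1) * (-(s * R 0 1)) + S 1 1 * (-(s * R 0 1)) * (-(s * R 0 1)))
      - (μ 0 * (s*R 1 1) + μ 1 * (-(s * R 0 1))) = 0 := by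
    linear_combination (-(s)/2) * hsQ
  have hgamray : gam S μ (θray1 S μ R) = 0 := by
    rw [hgam_eq, hrv0, hrv1]
    exact hgrc
  have hsq : s * R 1 1 ≤ θmax1 0 := by
    have := hmaxv (θray1 S μ R) hgamray
    rwa [hrv0] at this
  have hX : 0 < θmax1 0 := lt_of_lt_of_le (mul_pos hs hP11) hsq
  have h0c : -(1/2) * (S 0 0 * θmax1 0 * θmax1 0 + 2*S 0 1*θmax1 0*θmax1 1
      + S 1 1*θmax1 1*θmax1 1) - (μ 0*θmax1 0 + μ 1*θmax1 1) = 0 := by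
    rw [← hgam_eq]; exact hg0
  have hmaxc : ∀ x y : ℝ, -(1/2) * (S 0 0*x*x + 2*S 0 1*x*y + S 1 1*y*y)
      - (μ 0*x + μ 1*y) = 0 → x ≤ θmax1 0 := by
    intro x y h
    have hxy : gam S μ ![x, y] = 0 := by
      rw [hgam_eq]
      simpa using h
    simpa using hmaxv ![x, y] hxy
  obtain ⟨r, hr0, hr2, hDX, hgm⟩ := key_max (S 0 0) (S 0 1) (S 1 1) (μ 0) (μ 1)
    (θmax1 0) (θmax1 1) hc hD h0c hmaxc
  have hiff := key_sign (S 0 0) (S 0 1) (S 1 1) (μ 0) (μ 1) (R 0 1) (R 1 1)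
    (θmax1 0) (θmax1 1) r hc hD hP11 he hX hr0 hr2 hDX hgm
  have hg2 : gam2 R θmax1 = R 0 1 * θmax1 0 + R 1 1 * θmax1 1 := rfl
  rcases htθ1r with ⟨hre, hte⟩ | ⟨hne, hgt, ht0, ht1⟩
  · -- degenerate case: both sides are zero
    have hL : (S.mulVec tθ1r + μ) 1 = S 0 1 * θmax1 0 + S 1 1 * θmax1 1 + μ 1 := by
      rw [hte]
      simp only [Pi.add_apply, Matrix.mulVec, dotProduct, Fin.sum_univ_two]
      rw [hb]
    have hX0 : θmax1 0 = s * R 1 1 := by rw [← hre]; exact hrv0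
    have hX1 : θmax1 1 = -(s * R 0 1) := by rw [← hre]; exact hrv1
    constructor
    · intro h
      rw [hL] at h
      exfalso
      linarith [hgm]
    · intro h
      rw [hg2, hX0, hX1] at h
      exfalso
      have h0 : R 0 1 * (s * R 1 1) + R 1 1 * -(s * R 0 1) = 0 := by ring
      linarith
  · -- main case
    have ht0' : tθ1r 0 = s * R 1 1 := by rw [ht0]; exact hrv0
    have ht1' : tθ1r 1 ≠ -(s * R 0 1) := by rw [← hrv1]; exact ht1
    have hgtc : -(1/2) * (S 0 0 * (s*R 1 1) * (s*R 1 1)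
          + 2 * S 0 1 * (s*R 1 1) * (tθ1r 1) + S 1 1 * (tθ1r 1) * (tθ1r 1))
        - (μ 0 * (s*R 1 1) + μ 1 * (tθ1r 1)) = 0 := by
      rw [hgam_eq, ht0'] at hgt
      exact hgt
    have hd : (tθ1r 1 - (-(s * R 0 1)))
        * (S 0 1*(s*R 1 1) + μ 1 + S 1 1/2*(tθ1r 1 + (-(s * R 0 1)))) = 0 := by
      linear_combination hgrc - hgtc
    have hbr : S 0 1*(s*R 1 1) + μ 1 + S 1 1/2*(tθ1r 1 + (-(s * R 0 1))) = 0 := by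
      rcases mul_eq_zero.mp hd with h | h
      · exact absurd (sub_eq_zero.mp h) ht1'
      · exact h
    have hQN : (S 0 0 * R 1 1^2 - 2*S 0 1*R 0 1*R 1 1 + S 1 1*R 0 1^2)
        * (S 0 1*(s*R 1 1) + S 1 1*(-(s * R 0 1)) + μ 1)
        = 2*(μ 0 * R 1 1 - μ 1 * R 0 1)*(S 1 1*R 0 1 - S 0 1*R 1 1)
          + μ 1*(S 0 0 * R 1 1^2 - 2*S 0 1*R 0 1*R 1 1 + S 1 1*R 0 1^2) := by
      linear_combination (S 0 1 * R 1 1 - S 1 1 * R 0 1) * hsQ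
    have hL : (S.mulVec tθ1r + μ) 1 = S 0 1 * (s*R 1 1) + S 1 1 * tθ1r 1 + μ 1 := by
      simp only [Pi.add_apply, Matrix.mulVec, dotProduct, Fin.sum_univ_two]
      rw [hb, ht0']
    rw [hL, hg2]
    have hsum : (S 0 1 * (s*R 1 1) + S 1 1 * tθ1r 1 + μ 1)
        + (S 0 1*(s*R 1 1) + S 1 1*(-(s * R 0 1)) + μ 1) = 0 := by linarith [hbr]
    constructor
    · intro h
      apply hiff.mp
      have hNv : S 0 1*(s*R 1 1) + S 1 1*(-(s * R 0 1)) + μ 1 < 0 := by linarith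
      have := mul_neg_of_pos_of_neg hQpos hNv
      rw [hQN] at this
      exact this
    · intro h
      have hA := hiff.mpr h
      have hNv : S 0 1*(s*R 1 1) + S 1 1*(-(s * R 0 1)) + μ 1 < 0 := by
        by_contra hcon
        push_neg at hcon
        have := mul_nonneg hQpos.le hcon
        rw [hQN] at this
        linarith
      linarith

end
end

section
/- Assume conditions (P) and (S), and suppose that θ̃^(1,r) = θ̃^(2,r); write α = (α₁, α₂) for this common point. Then the factorization γ(θ) = (Σ₁₁ / (2 r₁₁)) γ₁(θ) (α₁ − θ₁) + (Σ₂₂ / (2 r₂₂)) γ₂(θ) (α₂ − θ₂) holds for all θ ∈ ℝ². -/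
open Matrix Set

noncomputable section

lemma tang_aux (a b c m0 m1 x y : ℝ) (hc : 0 < c) (hd : 0 < a*c - b^2)
    (hxy : -(1/2)*(a*x^2+2*b*x*y+c*y^2) - (m0*x+m1*y) = 0)
    (hmax : ∀ x' y', -(1/2)*(a*x'^2+2*b*x'*y'+c*y'^2) - (m0*x'+m1*y') = 0 → x' ≤ x) :
    c*y + b*x + m1 = 0 := by
  obtain ⟨e, he⟩ : ∃ e, e = b^2 - a*c := ⟨_, rfl⟩
  obtain ⟨f, hf⟩ : ∃ f, f = b*m1 - c*m0 := ⟨_, rfl⟩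
  have hene : e < 0 := by rw [he]; linarith
  have hDx : e*x^2 + 2*f*x + m1^2 = (c*y+b*x+m1)^2 := by
    rw [he, hf]; linear_combination (2*c)*hxy
  have hsnn : 0 ≤ f^2 - e*m1^2 := by nlinarith [sq_nonneg (c*y+b*x+m1), sq_nonneg (e*x+f)]
  obtain ⟨s, hssq, hsnn'⟩ : ∃ s : ℝ, s^2 = f^2 - e*m1^2 ∧ 0 ≤ s :=
    ⟨Real.sqrt _, Real.sq_sqrt hsnn, Real.sqrt_nonneg _⟩
  obtain ⟨xp, hexf⟩ : ∃ xp, e*xp + f = -s :=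
    ⟨(-s - f)/e, by field_simp [ne_of_lt hene]; ring⟩
  have hDxp : e*xp^2 + 2*f*xp + m1^2 = 0 := by
    have h1 : e*(e*xp^2 + 2*f*xp + m1^2) = (e*xp+f)^2 - (f^2 - e*m1^2) := by ring
    rw [hexf, ← hssq] at h1
    have h1' : e*(e*xp^2 + 2*f*xp + m1^2) = 0 := by rw [h1]; ring
    exact (mul_eq_zero.mp h1').resolve_left (ne_of_lt hene)
  obtain ⟨yp, hcyp⟩ : ∃ yp, c*yp + b*xp + m1 = 0 :=
    ⟨-(b*xp + m1)/c, by field_simp; ring⟩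
  have hgp : -(1/2)*(a*xp^2+2*b*xp*yp+c*yp^2) - (m0*xp+m1*yp) = 0 := by
    have h2 : (2*c) * (-(1/2)*(a*xp^2+2*b*xp*yp+c*yp^2) - (m0*xp+m1*yp))
        = (e*xp^2 + 2*f*xp + m1^2) - (c*yp+b*xp+m1)^2 := by
      rw [he, hf]; ring
    rw [hDxp, hcyp] at h2
    have hc2 : (2*c) ≠ 0 := by positivity
    have h2' : (2*c) * (-(1/2)*(a*xp^2+2*b*xp*yp+c*yp^2) - (m0*xp+m1*yp)) = 0 := by
      rw [h2]; ring
    exact (mul_eq_zero.mp h2').resolve_left hc2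
  have hle : xp ≤ x := hmax xp yp hgp
  have h3 : (e*x+f)^2 ≤ s^2 := by
    rw [hssq]; nlinarith [sq_nonneg (c*y+b*x+m1)]
  have h4 : -s ≤ e*x + f := by nlinarith [sq_nonneg (e*x+f+s)]
  have h5 : e*xp ≤ e*x := by linarith
  have hge : x ≤ xp := (mul_le_mul_left_of_neg hene).mp h5
  have hxx : x = xp := le_antisymm hge hle
  have hz : (c*y+b*x+m1)^2 = 0 := by rw [← hDx, hxx]; exact hDxp
  exact pow_eq_zero_iff (by norm_num) |>.mp hz

set_option maxHeartbeats 1000000 in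
/-- if `θ̃^(1,r) = θ̃^(2,r) = α`, then `γ` factorizes as
`γ(θ) = (Σ₁₁/(2r₁₁)) γ₁(θ)(α₁ − θ₁) + (Σ₂₂/(2r₂₂)) γ₂(θ)(α₂ − θ₂)` (eq. (5.14)). -/
theorem stmt_12
    (S R : Matrix (Fin 2) (Fin 2) ℝ) (μ : V)
    (hSpd : S.PosDef) (hSsym : S.IsSymm) (hμ : μ ≠ 0)
    (hP : condP R) (hS : condS μ R)
    (θmax1 θmax2 tθ1r tθ2r : V)
    (hmax1 : gam S μ θmax1 = 0 ∧ ∀ θ, gam S μ θ = 0 → θ 0 ≤ θmax1 0)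
    (hmax2 : gam S μ θmax2 = 0 ∧ ∀ θ, gam S μ θ = 0 → θ 1 ≤ θmax2 1)
    (htθ1r : (θray1 S μ R = θmax1 ∧ tθ1r = θmax1) ∨
      (θray1 S μ R ≠ θmax1 ∧ gam S μ tθ1r = 0 ∧
        tθ1r 0 = θray1 S μ R 0 ∧ tθ1r 1 ≠ θray1 S μ R 1))
    (htθ2r : (θray2 S μ R = θmax2 ∧ tθ2r = θmax2) ∨
      (θray2 S μ R ≠ θmax2 ∧ gam S μ tθ2r = 0 ∧
        tθ2r 1 = θray2 S μ R 1 ∧ tθ2r 0 ≠ θray2 S μ R 0))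
    (α : V) (hα1 : α = tθ1r) (hα2 : α = tθ2r) :
    ∀ θ : V, gam S μ θ =
      S 0 0 / (2 * R 0 0) * gam1 R θ * (α 0 - θ 0) +
      S 1 1 / (2 * R 1 1) * gam2 R θ * (α 1 - θ 1) := by
  obtain ⟨hr11, hr22, hdetR⟩ := hP
  obtain ⟨hS1, hS2⟩ := hS
  have hsym : S 1 0 = S 0 1 := hSsym.apply 0 1
  have gam_eq : ∀ θ : V, gam S μ θ =
      -(1/2)*(S 0 0*(θ 0)^2+2*(S 0 1)*(θ 0)*(θ 1)+S 1 1*(θ 1)^2) - (μ 0*θ 0+μ 1*θ 1) := by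
    intro θ
    simp [gam, dotProduct, Matrix.mulVec, Fin.sum_univ_two]
    linear_combination (θ 0*θ 1) * hsym
  -- positivity of diagonal and determinant
  have ha : 0 < S 0 0 := by
    have h := hSpd.dotProduct_mulVec_pos (x := ![1,0]) (by
      intro h; have := congrFun h 0; simp at this)
    simpa [dotProduct, Matrix.mulVec, Fin.sum_univ_two] using h
  have hc : 0 < S 1 1 := by
    have h := hSpd.dotProduct_mulVec_pos (x := ![0,1]) (by
      intro h; have := congrFun h 1; simp at this)
    simpa [dotProduct, Matrix.mulVec, Fin.sum_univ_two] using h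
  have hd : 0 < S 0 0 * S 1 1 - (S 0 1)^2 := by
    have h := hSpd.dotProduct_mulVec_pos (x := ![S 0 1, -(S 0 0)]) (by
      intro h; have := congrFun h 1; simp at this; linarith)
    have h' : (0:ℝ) < S 0 0 * (S 0 0 * S 1 1 - (S 0 1)^2) := by
      have h2 := h
      simp [dotProduct, Matrix.mulVec, Fin.sum_univ_two] at h2
      rw [hsym] at h2
      nlinarith [h2]
    rcases mul_pos_iff.mp h' with ⟨_, h⟩ | ⟨h, _⟩
    · exact h
    · linarith
  -- ray 1 data
  have hQ1e : pvec1 R ⬝ᵥ S.mulVec (pvec1 R)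
      = S 0 0*(R 1 1)^2 - 2*(S 0 1)*(R 0 1)*(R 1 1) + S 1 1*(R 0 1)^2 := by
    simp [pvec1, dotProduct, Matrix.mulVec, Fin.sum_univ_two]
    linear_combination (-(R 0 1)*(R 1 1)) * hsym
  have hm1e : μ ⬝ᵥ pvec1 R = μ 0*R 1 1 - μ 1*R 0 1 := by
    simp [pvec1, dotProduct, Fin.sum_univ_two]; ring
  have hQ1pos : 0 < S 0 0*(R 1 1)^2 - 2*(S 0 1)*(R 0 1)*(R 1 1) + S 1 1*(R 0 1)^2 := by
    have h := hSpd.dotProduct_mulVec_pos (x := pvec1 R) (by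
      intro h; have := congrFun h 0; simp [pvec1] at this; linarith)
    rw [← hQ1e]; simpa using h
  obtain ⟨t1, ht1⟩ : ∃ t : ℝ, t = -2*(μ 0*R 1 1 - μ 1*R 0 1)
      / (S 0 0*(R 1 1)^2 - 2*(S 0 1)*(R 0 1)*(R 1 1) + S 1 1*(R 0 1)^2) := ⟨_, rfl⟩
  have hray1 : θray1 S μ R = t1 • pvec1 R := by
    rw [θray1, hm1e, hQ1e, ht1]
  have hray10 : θray1 S μ R 0 = t1 * R 1 1 := by rw [hray1]; simp [pvec1]
  have hray11 : θray1 S μ R 1 = -(t1 * R 0 1) := by rw [hray1]; simp [pvec1]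
  have ht1Q : t1 * (S 0 0*(R 1 1)^2 - 2*(S 0 1)*(R 0 1)*(R 1 1) + S 1 1*(R 0 1)^2)
      = -2*(μ 0*R 1 1 - μ 1*R 0 1) := by
    rw [ht1, div_mul_cancel₀ _ (ne_of_gt hQ1pos)]
  have hm1neg : μ 0*R 1 1 - μ 1*R 0 1 < 0 := by
    rw [show μ 0*R 1 1 - μ 1*R 0 1 = R 1 1*μ 0 - R 0 1*μ 1 from by ring]; exact hS1
  have ht1pos : 0 < t1 := by
    rw [ht1]; apply div_pos (by linarith) hQ1pos
  have hγr1 : -(1/2)*(S 0 0*(t1*R 1 1)^2 + 2*(S 0 1)*(t1*R 1 1)*(-(t1*R 0 1))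
      + S 1 1*(-(t1*R 0 1))^2) - (μ 0*(t1*R 1 1) + μ 1*(-(t1*R 0 1))) = 0 := by
    linear_combination (-(t1)/2) * ht1Q
  -- ray 2 data
  have hQ2e : pvec2 R ⬝ᵥ S.mulVec (pvec2 R)
      = S 0 0*(R 1 0)^2 - 2*(S 0 1)*(R 0 0)*(R 1 0) + S 1 1*(R 0 0)^2 := by
    simp [pvec2, dotProduct, Matrix.mulVec, Fin.sum_univ_two]
    linear_combination (-(R 0 0)*(R 1 0)) * hsym
  have hm2e : μ ⬝ᵥ pvec2 R = μ 1*R 0 0 - μ 0*R 1 0 := by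
    simp [pvec2, dotProduct, Fin.sum_univ_two]; ring
  have hQ2pos : 0 < S 0 0*(R 1 0)^2 - 2*(S 0 1)*(R 0 0)*(R 1 0) + S 1 1*(R 0 0)^2 := by
    have h := hSpd.dotProduct_mulVec_pos (x := pvec2 R) (by
      intro h; have := congrFun h 1; simp [pvec2] at this; linarith)
    rw [← hQ2e]; simpa using h
  obtain ⟨t2, ht2⟩ : ∃ t : ℝ, t = -2*(μ 1*R 0 0 - μ 0*R 1 0)
      / (S 0 0*(R 1 0)^2 - 2*(S 0 1)*(R 0 0)*(R 1 0) + S 1 1*(R 0 0)^2) := ⟨_, rfl⟩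
  have hray2 : θray2 S μ R = t2 • pvec2 R := by
    rw [θray2, hm2e, hQ2e, ht2]
  have hray20 : θray2 S μ R 0 = -(t2 * R 1 0) := by rw [hray2]; simp [pvec2]
  have hray21 : θray2 S μ R 1 = t2 * R 0 0 := by rw [hray2]; simp [pvec2]
  have ht2Q : t2 * (S 0 0*(R 1 0)^2 - 2*(S 0 1)*(R 0 0)*(R 1 0) + S 1 1*(R 0 0)^2)
      = -2*(μ 1*R 0 0 - μ 0*R 1 0) := by
    rw [ht2, div_mul_cancel₀ _ (ne_of_gt hQ2pos)]
  have hm2neg : μ 1*R 0 0 - μ 0*R 1 0 < 0 := by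
    rw [show μ 1*R 0 0 - μ 0*R 1 0 = R 0 0*μ 1 - R 1 0*μ 0 from by ring]; exact hS2
  have ht2pos : 0 < t2 := by
    rw [ht2]; apply div_pos (by linarith) hQ2pos
  have hγr2 : -(1/2)*(S 0 0*(-(t2*R 1 0))^2 + 2*(S 0 1)*(-(t2*R 1 0))*(t2*R 0 0)
      + S 1 1*(t2*R 0 0)^2) - (μ 0*(-(t2*R 1 0)) + μ 1*(t2*R 0 0)) = 0 := by
    linear_combination (-(t2)/2) * ht2Q
  -- gamma(α) = 0
  have hgα : -(1/2)*(S 0 0*(α 0)^2+2*(S 0 1)*(α 0)*(α 1)+S 1 1*(α 1)^2)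
      - (μ 0*α 0+μ 1*α 1) = 0 := by
    rw [← gam_eq]
    rcases htθ1r with ⟨hrm, htm⟩ | ⟨_, hg0, _, _⟩
    · rw [hα1, htm]; exact hmax1.1
    · rw [hα1]; exact hg0
  -- key identity I1 from coordinate-1 reflection
  have hα0e : α 0 = t1 * R 1 1 := by
    rcases htθ1r with ⟨hrm, htm⟩ | ⟨_, _, he0, _⟩
    · rw [hα1, htm, ← hrm, hray10]
    · rw [hα1, he0, hray10]
  have hI1 : S 1 1*(α 1 - t1*R 0 1) + 2*(S 0 1*α 0 + μ 1) = 0 := by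
    rcases htθ1r with ⟨hrm, htm⟩ | ⟨_, _, _, hne⟩
    · -- tangency case
      have hαm : α = θmax1 := by rw [hα1, htm]
      have ht := tang_aux (S 0 0) (S 0 1) (S 1 1) (μ 0) (μ 1) (α 0) (α 1) hc hd hgα
        (by
          intro x' y' h'
          have hg' : gam S μ ![x', y'] = 0 := by
            rw [gam_eq]; simpa using h'
          have := hmax1.2 _ hg'
          simpa [hαm] using this)
      have hα1c : α 1 = -(t1 * R 0 1) := by rw [hαm, ← hrm, hray11]
      linear_combination 2*ht - S 1 1*hα1c
    · -- two-roots case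
      have hαne : α 1 ≠ -(t1 * R 0 1) := by
        rw [hα1, ← hray11]; exact hne
      rw [← hα0e] at hγr1
      have hfac : (α 1 - (-(t1*R 0 1))) *
          ((S 1 1/2)*(α 1 + (-(t1*R 0 1))) + S 0 1*α 0 + μ 1) = 0 := by
        linear_combination hγr1 - hgα
      have h2z := (mul_eq_zero.mp hfac).resolve_left (sub_ne_zero.mpr hαne)
      linear_combination 2*h2z
  -- key identity I2 from coordinate-2 reflection
  have hα1e : α 1 = t2 * R 0 0 := by
    rcases htθ2r with ⟨hrm, htm⟩ | ⟨_, _, he1, _⟩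
    · rw [hα2, htm, ← hrm, hray21]
    · rw [hα2, he1, hray21]
  have hI2 : S 0 0*(α 0 - t2*R 1 0) + 2*(S 0 1*α 1 + μ 0) = 0 := by
    rcases htθ2r with ⟨hrm, htm⟩ | ⟨_, _, _, hne⟩
    · have hαm : α = θmax2 := by rw [hα2, htm]
      have hd' : 0 < S 1 1 * S 0 0 - (S 0 1)^2 := by nlinarith [hd]
      have ht := tang_aux (S 1 1) (S 0 1) (S 0 0) (μ 1) (μ 0) (α 1) (α 0) ha hd'
        (by linear_combination hgα)
        (by
          intro x' y' h'
          have hg' : gam S μ ![y', x'] = 0 := by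
            rw [gam_eq]; simp; linear_combination h'
          have := hmax2.2 _ hg'
          simpa [hαm] using this)
      have hα0c : α 0 = -(t2 * R 1 0) := by rw [hαm, ← hrm, hray20]
      linear_combination 2*ht - S 0 0*hα0c
    · have hαne : α 0 ≠ -(t2 * R 1 0) := by
        rw [hα2, ← hray20]; exact hne
      rw [← hα1e] at hγr2
      have hfac : (α 0 - (-(t2*R 1 0))) *
          ((S 0 0/2)*(α 0 + (-(t2*R 1 0))) + S 0 1*α 1 + μ 0) = 0 := by
        linear_combination hγr2 - hgα
      have h2z := (mul_eq_zero.mp hfac).resolve_left (sub_ne_zero.mpr hαne)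
      linear_combination 2*h2z
  -- skew-symmetry identity K = 0
  have ht2K : t2 * (2*(S 0 1)*(R 0 0)*(R 1 1) - S 0 0*(R 1 0)*(R 1 1) - S 1 1*(R 0 0)*(R 0 1)) = 0 := by
    linear_combination R 1 1*hI2 - R 0 1*hI1 - ht1Q
      - (S 0 0*R 1 1 - 2*S 0 1*R 0 1)*hα0e - (2*S 0 1*R 1 1 - S 1 1*R 0 1)*hα1e
  have hK : 2*(S 0 1)*(R 0 0)*(R 1 1) - S 0 0*(R 1 0)*(R 1 1) - S 1 1*(R 0 0)*(R 0 1) = 0 :=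
    (mul_eq_zero.mp ht2K).resolve_left (ne_of_gt ht2pos)
  -- linear identities
  have hB : S 0 0*R 1 1*α 0 + S 1 1*R 0 1*α 1 + 2*μ 0*R 1 1 = 0 := by
    linear_combination R 1 1*hI2 - ht2K + (S 1 1*R 0 1 - 2*S 0 1*R 1 1)*hα1e
  have hC : S 0 0*R 1 0*α 0 + S 1 1*R 0 0*α 1 + 2*μ 1*R 0 0 = 0 := by
    linear_combination R 0 0*hI1 + (S 0 0*R 1 0 - 2*S 0 1*R 0 0)*hα0e - t1*hK
  -- conclusion
  intro θ
  have key : 2*(R 0 0)*(R 1 1)*(-(1/2)*(S 0 0*(θ 0)^2+2*(S 0 1)*(θ 0)*(θ 1)+S 1 1*(θ 1)^2)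
        - (μ 0*θ 0+μ 1*θ 1))
      = S 0 0*R 1 1*(R 0 0*θ 0 + R 1 0*θ 1)*(α 0 - θ 0)
        + S 1 1*R 0 0*(R 0 1*θ 0 + R 1 1*θ 1)*(α 1 - θ 1) := by
    linear_combination (-(θ 0*θ 1))*hK - R 0 0*θ 0*hB - R 1 1*θ 1*hC
  rw [gam_eq θ]
  simp only [gam1, gam2]
  have h11 : (R 0 0) ≠ 0 := ne_of_gt hr11
  have h22 : (R 1 1) ≠ 0 := ne_of_gt hr22
  field_simp
  linear_combination key
end
end

section
/- Assume conditions (P) and (S), and let α = (α₁, α₂) ∈ ℝ² with α₁ > 0 and α₂ > 0. Suppose that γ(θ) = (Σ₁₁ / (2 r₁₁)) γ₁(θ) (α₁ − θ₁) + (Σ₂₂ / (2 r₂₂)) γ₂(θ) (α₂ − θ₂) holds for all θ ∈ ℝ² with θ < α componentwise. Then this identity holds for all θ ∈ ℝ², γ(α) = 0, and α = θ̃^(1,r) = θ̃^(2,r). -/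
open Matrix Set

noncomputable section

lemma quad_max_unique (A B C D E : ℝ) (hA : 0 < A) (hD : 0 < D) (g : ℝ → ℝ → ℝ)
    (hg : ∀ x y, g x y = -(A/2)*x^2 + B*x*y - (D/2)*y^2 + C*x + E*y)
    (xb : ℝ) (hmax : ∀ x y, g x y = 0 → x ≤ xb)
    (y y' : ℝ) (h1 : g xb y = 0) (h2 : g xb y' = 0) : y = y' := by
  by_contra hne
  set m := (y + y')/2 with hm
  have hgm : g xb m = D*(y - y')^2/8 := by
    rw [hg] at h1 h2 ⊢
    rw [hm]; linear_combination (1/2)*h1 + (1/2)*h2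
  have hgmpos : 0 < g xb m := by
    rw [hgm]
    have h : y - y' ≠ 0 := sub_ne_zero.mpr hne
    positivity
  set b0 := -A*xb + B*m + C with hb0
  have hline : ∀ t : ℝ, g (xb+t) m = -(A/2)*t^2 + b0*t + g xb m := by
    intro t; rw [hg, hg, hb0]; ring
  set T := (2*|b0| + 2*(g xb m) + 2)/A + 1 with hT
  have hTnum : 0 ≤ (2*|b0| + 2*(g xb m) + 2)/A := by positivity
  have hT1 : 1 ≤ T := by rw [hT]; linarith
  have hTA : 2*|b0| + 2*(g xb m) + 2 ≤ A*T := by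
    have h1' : A*T = (2*|b0| + 2*(g xb m) + 2) + A := by
      rw [hT]; field_simp
    linarith
  clear_value m b0 T
  have hhT : g (xb+T) m < 0 := by
    rw [hline T]
    have p1 : T*(2*|b0| + 2*(g xb m) + 2) ≤ T*(A*T) :=
      mul_le_mul_of_nonneg_left hTA (by linarith : (0:ℝ) ≤ T)
    have p2 : 0 ≤ (T-1)*(g xb m) :=
      mul_nonneg (by linarith : (0:ℝ) ≤ T - 1) (le_of_lt hgmpos)
    have p3 : 0 ≤ T*(|b0| - b0) :=
      mul_nonneg (by linarith : (0:ℝ) ≤ T) (by linarith [le_abs_self b0] : 0 ≤ |b0| - b0)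
    nlinarith [p1, p2, p3]
  have hcont : Continuous fun t => g (xb + t) m := by
    have heq : (fun t => g (xb+t) m) =
        fun t => -(A/2)*(xb+t)^2 + B*(xb+t)*m - (D/2)*m^2 + C*(xb+t) + E*m := by
      funext t; rw [hg]
    rw [heq]; fun_prop
  have hIVT := intermediate_value_Icc' (by linarith : (0:ℝ) ≤ T) hcont.continuousOn
  have h0mem : (0:ℝ) ∈ Icc (g (xb+T) m) (g (xb+0) m) := by
    constructor
    · exact le_of_lt hhT
    · simpa using le_of_lt hgmpos
  obtain ⟨t, ht, hft⟩ := hIVT h0mem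
  have hle := hmax (xb+t) m hft
  have ht0 : t = 0 := le_antisymm (by linarith) ht.1
  rw [ht0] at hft
  simp at hft
  linarith

/-- if the factorization of `γ` holds for all `θ < α` componentwise (with
`α > 0` componentwise), then it holds everywhere, `γ(α) = 0`, and `α = θ̃^(1,r) = θ̃^(2,r)`. -/
theorem stmt_13
    (S R : Matrix (Fin 2) (Fin 2) ℝ) (μ : V)
    (hSpd : S.PosDef) (hSsym : S.IsSymm) (hμ : μ ≠ 0)
    (hP : condP R) (hS : condS μ R)
    (θmax1 θmax2 tθ1r tθ2r : V)
    (hmax1 : gam S μ θmax1 = 0 ∧ ∀ θ, gam S μ θ = 0 → θ 0 ≤ θmax1 0)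
    (hmax2 : gam S μ θmax2 = 0 ∧ ∀ θ, gam S μ θ = 0 → θ 1 ≤ θmax2 1)
    (htθ1r : (θray1 S μ R = θmax1 ∧ tθ1r = θmax1) ∨
      (θray1 S μ R ≠ θmax1 ∧ gam S μ tθ1r = 0 ∧
        tθ1r 0 = θray1 S μ R 0 ∧ tθ1r 1 ≠ θray1 S μ R 1))
    (htθ2r : (θray2 S μ R = θmax2 ∧ tθ2r = θmax2) ∨
      (θray2 S μ R ≠ θmax2 ∧ gam S μ tθ2r = 0 ∧
        tθ2r 1 = θray2 S μ R 1 ∧ tθ2r 0 ≠ θray2 S μ R 0))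
    (α : V) (hα0 : 0 < α 0) (hα1 : 0 < α 1)
    (hfac : ∀ θ : V, ltc θ α → gam S μ θ =
      S 0 0 / (2 * R 0 0) * gam1 R θ * (α 0 - θ 0) +
      S 1 1 / (2 * R 1 1) * gam2 R θ * (α 1 - θ 1)) :
    (∀ θ : V, gam S μ θ =
      S 0 0 / (2 * R 0 0) * gam1 R θ * (α 0 - θ 0) +
      S 1 1 / (2 * R 1 1) * gam2 R θ * (α 1 - θ 1)) ∧
    gam S μ α = 0 ∧ α = tθ1r ∧ α = tθ2r := by
  obtain ⟨hR00, hR11, hdR⟩ := hP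
  have hR00' : (R 0 0 : ℝ) ≠ 0 := ne_of_gt hR00
  have hR11' : (R 1 1 : ℝ) ≠ 0 := ne_of_gt hR11
  have hS10 : S 1 0 = S 0 1 := hSsym.apply 0 1
  have hS00 : 0 < S 0 0 := by
    have h := hSpd.dotProduct_mulVec_pos (x := ![1,0]) (by intro h; have := congr_fun h 0; simp at this)
    simpa [Matrix.mulVec, dotProduct, Fin.sum_univ_two] using h
  have hS11 : 0 < S 1 1 := by
    have h := hSpd.dotProduct_mulVec_pos (x := ![0,1]) (by intro h; have := congr_fun h 1; simp at this)
    simpa [Matrix.mulVec, dotProduct, Fin.sum_univ_two] using h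
  -- four instances of the factorization
  have l1 : ltc ![α 0 - 1, α 1 - 1] α := by
    intro i; fin_cases i <;> simp <;> linarith
  have l2 : ltc ![α 0 - 1, α 1 - 2] α := by
    intro i; fin_cases i <;> simp <;> linarith
  have l3 : ltc ![α 0 - 2, α 1 - 1] α := by
    intro i; fin_cases i <;> simp <;> linarith
  have l4 : ltc ![α 0 - 2, α 1 - 2] α := by
    intro i; fin_cases i <;> simp <;> linarith
  have h1 := hfac _ l1
  have h2 := hfac _ l2
  have h3 := hfac _ l3
  have h4 := hfac _ l4
  simp only [gam, gam1, gam2, dotProduct, Matrix.mulVec, Fin.sum_univ_two,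
    Matrix.cons_val_zero, Matrix.cons_val_one, Matrix.head_cons] at h1 h2 h3 h4
  have hA : S 0 0/(2*R 0 0)*R 0 0 = S 0 0/2 := by field_simp
  have hB : S 1 1/(2*R 1 1)*R 1 1 = S 1 1/2 := by field_simp
  have hc : S 0 0/(2*R 0 0)*R 1 0 + S 1 1/(2*R 1 1)*R 0 1 = (S 0 1 + S 1 0)/2 := by
    linear_combination h1 - h2 - h3 + h4
  have hE2 : S 0 0/(2*R 0 0)*R 0 0*α 0 + S 1 1/(2*R 1 1)*R 0 1*α 1 = -μ 0 := by
    linear_combination (-(1:ℝ))*(h1 - h3) + (α 1 - 1)*(h1 - h2 - h3 + h4) + (2*α 0 - 3)*hA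
  have hE3 : S 0 0/(2*R 0 0)*R 1 0*α 0 + S 1 1/(2*R 1 1)*R 1 1*α 1 = -μ 1 := by
    linear_combination (-(1:ℝ))*(h1 - h2) + (α 0 - 1)*(h1 - h2 - h3 + h4) + (2*α 1 - 3)*hB
  -- the identity everywhere
  have main1 : ∀ θ : V, gam S μ θ =
      S 0 0 / (2 * R 0 0) * gam1 R θ * (α 0 - θ 0) +
      S 1 1 / (2 * R 1 1) * gam2 R θ * (α 1 - θ 1) := by
    intro θ
    simp only [gam, gam1, gam2, dotProduct, Matrix.mulVec, Fin.sum_univ_two]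
    linear_combination (θ 0)^2*hA + (θ 1)^2*hB + (θ 0)*(θ 1)*hc - (θ 0)*hE2 - (θ 1)*hE3
  have hga : gam S μ α = 0 := by simpa using main1 α
  -- expansion helper
  have hgexp : ∀ x y : ℝ, gam S μ ![x,y] =
      -(S 0 0/2)*x^2 + (-(S 0 1 + S 1 0)/2)*x*y - (S 1 1/2)*y^2 + (-μ 0)*x + (-μ 1)*y := by
    intro x y
    simp [gam, Matrix.mulVec, dotProduct, Fin.sum_univ_two]
    ring
  ----------------------------------------------------------------
  -- ray 1 analysis
  have hp1ne : pvec1 R ≠ 0 := by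
    intro h; have := congr_fun h 0; simp [pvec1] at this; exact hR11' this
  have hq1pos : 0 < pvec1 R ⬝ᵥ S.mulVec (pvec1 R) := by
    have h := hSpd.dotProduct_mulVec_pos (x := pvec1 R) hp1ne
    simpa using h
  have hq1ne : pvec1 R ⬝ᵥ S.mulVec (pvec1 R) ≠ 0 := ne_of_gt hq1pos
  have hq1s : pvec1 R ⬝ᵥ S.mulVec (pvec1 R) =
      S 0 0*R 1 1^2 - (S 0 1 + S 1 0)*R 0 1*R 1 1 + S 1 1*R 0 1^2 := by
    simp [pvec1, Matrix.mulVec, dotProduct, Fin.sum_univ_two]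
    ring
  have hQ1ne : S 0 0*R 1 1^2 - (S 0 1 + S 1 0)*R 0 1*R 1 1 + S 1 1*R 0 1^2 ≠ 0 :=
    hq1s ▸ hq1ne
  have hd1 : μ ⬝ᵥ pvec1 R = μ 0*R 1 1 - μ 1*R 0 1 := by
    simp [pvec1, dotProduct, Fin.sum_univ_two]
    ring
  have hp10 : pvec1 R 0 = R 1 1 := by simp [pvec1]
  have hp11 : pvec1 R 1 = -(R 0 1) := by simp [pvec1]
  have hray1_0 : θray1 S μ R 0 * (S 0 0*R 1 1^2 - (S 0 1 + S 1 0)*R 0 1*R 1 1 + S 1 1*R 0 1^2)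
      = -2*(μ 0*R 1 1 - μ 1*R 0 1)*R 1 1 := by
    simp only [θray1, Pi.smul_apply, smul_eq_mul, hp10, hd1, hq1s]
    rw [mul_right_comm, div_mul_cancel₀ _ hQ1ne]
  have hray1_1 : θray1 S μ R 1 * (S 0 0*R 1 1^2 - (S 0 1 + S 1 0)*R 0 1*R 1 1 + S 1 1*R 0 1^2)
      = 2*(μ 0*R 1 1 - μ 1*R 0 1)*R 0 1 := by
    simp only [θray1, Pi.smul_apply, smul_eq_mul, hp11, hd1, hq1s]
    rw [mul_right_comm, div_mul_cancel₀ _ hQ1ne]; ring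
  have key1 : -2*(μ 0*R 1 1 - μ 1*R 0 1)*R 1 1 =
      α 0 * (S 0 0*R 1 1^2 - (S 0 1 + S 1 0)*R 0 1*R 1 1 + S 1 1*R 0 1^2) := by
    linear_combination (-2*R 1 1^2)*hE2 + 2*R 1 1*R 0 1*hE3 +
      α 0*(2*R 1 1^2*hA - 2*R 0 1*R 1 1*hc + 2*R 0 1^2*hB)
  have hray10 : θray1 S μ R 0 = α 0 :=
    mul_right_cancel₀ hQ1ne (hray1_0.trans (key1 ▸ rfl))
  have hgr1 : gam S μ (θray1 S μ R) = 0 := by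
    have htq : (-2 * (μ ⬝ᵥ pvec1 R) / (pvec1 R ⬝ᵥ S.mulVec (pvec1 R))) *
        (pvec1 R ⬝ᵥ S.mulVec (pvec1 R)) = -2 * (μ ⬝ᵥ pvec1 R) :=
      div_mul_cancel₀ _ hq1ne
    simp only [gam, θray1, smul_dotProduct, dotProduct_smul,
      Matrix.mulVec_smul, smul_eq_mul]
    linear_combination
      (-(1/2) * (-2 * (μ ⬝ᵥ pvec1 R) / (pvec1 R ⬝ᵥ S.mulVec (pvec1 R)))) * htq
  have key2 : S 1 1*(2*(μ 0*R 1 1 - μ 1*R 0 1)*R 0 1 +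
      α 1*(S 0 0*R 1 1^2 - (S 0 1 + S 1 0)*R 0 1*R 1 1 + S 1 1*R 0 1^2)) +
      ((S 0 1 + S 1 0)*α 0 + 2*μ 1)*(S 0 0*R 1 1^2 - (S 0 1 + S 1 0)*R 0 1*R 1 1 + S 1 1*R 0 1^2)
      = 0 := by
    linear_combination 2*S 1 1*R 0 1*R 1 1*hE2 +
      (2*(S 0 0*R 1 1^2 - (S 0 1 + S 1 0)*R 0 1*R 1 1 + S 1 1*R 0 1^2) - 2*S 1 1*R 0 1^2)*hE3 +
      (-4*(S 1 1/(2*R 1 1))*R 1 1^2*R 0 1*α 0)*hA +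
      (4*(S 0 0/(2*R 0 0))*R 0 1*α 0*(R 0 0*R 1 1 - R 1 0*R 0 1) - 4*(S 1 1/(2*R 1 1))*R 0 1^3*α 0
        - 2*α 1*(S 0 0*R 1 1^2 - (S 0 1 + S 1 0)*R 0 1*R 1 1 + S 1 1*R 0 1^2))*hB +
      (4*(S 1 1/(2*R 1 1))*R 0 1^2*R 1 1*α 0
        - 2*α 0*(S 0 0*R 1 1^2 - (S 0 1 + S 1 0)*R 0 1*R 1 1 + S 1 1*R 0 1^2))*hc
  have hC1 : S 1 1*(θray1 S μ R 1 + α 1) + ((S 0 1 + S 1 0)*α 0 + 2*μ 1) = 0 := by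
    have hmul : (S 1 1*(θray1 S μ R 1 + α 1) + ((S 0 1 + S 1 0)*α 0 + 2*μ 1)) *
        (S 0 0*R 1 1^2 - (S 0 1 + S 1 0)*R 0 1*R 1 1 + S 1 1*R 0 1^2) = 0 := by
      linear_combination key2 + S 1 1*hray1_1
    rcases mul_eq_zero.mp hmul with h | h
    · exact h
    · exact absurd h hQ1ne
  have hroots1 : ∀ y : ℝ, gam S μ ![α 0, y] = 0 → y ≠ θray1 S μ R 1 → y = α 1 := by
    intro y hy hne
    have hvec : ![α 0, θray1 S μ R 1] = θray1 S μ R := by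
      funext i; fin_cases i
      · simpa using hray10.symm
      · simp
    have hr0 : gam S μ ![α 0, θray1 S μ R 1] = 0 := by rw [hvec]; exact hgr1
    rw [hgexp] at hy hr0
    have hfact : (y - θray1 S μ R 1) *
        (S 1 1*(y + θray1 S μ R 1) + (S 0 1 + S 1 0)*α 0 + 2*μ 1) = 0 := by
      linear_combination (-2)*hy + 2*hr0
    rcases mul_eq_zero.mp hfact with h | h
    · exact absurd (sub_eq_zero.mp h) hne
    · have : S 1 1 * y = S 1 1 * α 1 := by linear_combination h - hC1
      exact mul_left_cancel₀ (ne_of_gt hS11) this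
  ----------------------------------------------------------------
  -- ray 2 analysis
  have hp2ne : pvec2 R ≠ 0 := by
    intro h; have := congr_fun h 1; simp [pvec2] at this; exact hR00' this
  have hq2pos : 0 < pvec2 R ⬝ᵥ S.mulVec (pvec2 R) := by
    have h := hSpd.dotProduct_mulVec_pos (x := pvec2 R) hp2ne
    simpa using h
  have hq2ne : pvec2 R ⬝ᵥ S.mulVec (pvec2 R) ≠ 0 := ne_of_gt hq2pos
  have hq2s : pvec2 R ⬝ᵥ S.mulVec (pvec2 R) =
      S 0 0*R 1 0^2 - (S 0 1 + S 1 0)*R 1 0*R 0 0 + S 1 1*R 0 0^2 := by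
    simp [pvec2, Matrix.mulVec, dotProduct, Fin.sum_univ_two]
    ring
  have hQ2ne : S 0 0*R 1 0^2 - (S 0 1 + S 1 0)*R 1 0*R 0 0 + S 1 1*R 0 0^2 ≠ 0 :=
    hq2s ▸ hq2ne
  have hd2 : μ ⬝ᵥ pvec2 R = μ 1*R 0 0 - μ 0*R 1 0 := by
    simp [pvec2, dotProduct, Fin.sum_univ_two]
    ring
  have hp20 : pvec2 R 0 = -(R 1 0) := by simp [pvec2]
  have hp21 : pvec2 R 1 = R 0 0 := by simp [pvec2]
  have hray2_0 : θray2 S μ R 0 * (S 0 0*R 1 0^2 - (S 0 1 + S 1 0)*R 1 0*R 0 0 + S 1 1*R 0 0^2)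
      = 2*(μ 1*R 0 0 - μ 0*R 1 0)*R 1 0 := by
    simp only [θray2, Pi.smul_apply, smul_eq_mul, hp20, hd2, hq2s]
    rw [mul_right_comm, div_mul_cancel₀ _ hQ2ne]; ring
  have hray2_1 : θray2 S μ R 1 * (S 0 0*R 1 0^2 - (S 0 1 + S 1 0)*R 1 0*R 0 0 + S 1 1*R 0 0^2)
      = -2*(μ 1*R 0 0 - μ 0*R 1 0)*R 0 0 := by
    simp only [θray2, Pi.smul_apply, smul_eq_mul, hp21, hd2, hq2s]
    rw [mul_right_comm, div_mul_cancel₀ _ hQ2ne]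
  have key1' : -2*(μ 1*R 0 0 - μ 0*R 1 0)*R 0 0 =
      α 1 * (S 0 0*R 1 0^2 - (S 0 1 + S 1 0)*R 1 0*R 0 0 + S 1 1*R 0 0^2) := by
    linear_combination (-2*R 0 0^2)*hE3 + 2*R 0 0*R 1 0*hE2 +
      α 1*(2*R 0 0^2*hB - 2*R 1 0*R 0 0*hc + 2*R 1 0^2*hA)
  have hray21 : θray2 S μ R 1 = α 1 :=
    mul_right_cancel₀ hQ2ne (hray2_1.trans (key1' ▸ rfl))
  have hgr2 : gam S μ (θray2 S μ R) = 0 := by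
    have htq : (-2 * (μ ⬝ᵥ pvec2 R) / (pvec2 R ⬝ᵥ S.mulVec (pvec2 R))) *
        (pvec2 R ⬝ᵥ S.mulVec (pvec2 R)) = -2 * (μ ⬝ᵥ pvec2 R) :=
      div_mul_cancel₀ _ hq2ne
    simp only [gam, θray2, smul_dotProduct, dotProduct_smul,
      Matrix.mulVec_smul, smul_eq_mul]
    linear_combination
      (-(1/2) * (-2 * (μ ⬝ᵥ pvec2 R) / (pvec2 R ⬝ᵥ S.mulVec (pvec2 R)))) * htq
  have key2' : S 0 0*(2*(μ 1*R 0 0 - μ 0*R 1 0)*R 1 0 +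
      α 0*(S 0 0*R 1 0^2 - (S 0 1 + S 1 0)*R 1 0*R 0 0 + S 1 1*R 0 0^2)) +
      ((S 0 1 + S 1 0)*α 1 + 2*μ 0)*(S 0 0*R 1 0^2 - (S 0 1 + S 1 0)*R 1 0*R 0 0 + S 1 1*R 0 0^2)
      = 0 := by
    linear_combination 2*S 0 0*R 1 0*R 0 0*hE3 +
      (2*(S 0 0*R 1 0^2 - (S 0 1 + S 1 0)*R 1 0*R 0 0 + S 1 1*R 0 0^2) - 2*S 0 0*R 1 0^2)*hE2 +
      (-4*(S 0 0/(2*R 0 0))*R 0 0^2*R 1 0*α 1)*hB +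
      (4*(S 1 1/(2*R 1 1))*R 1 0*α 1*(R 1 1*R 0 0 - R 0 1*R 1 0) - 4*(S 0 0/(2*R 0 0))*R 1 0^3*α 1
        - 2*α 0*(S 0 0*R 1 0^2 - (S 0 1 + S 1 0)*R 1 0*R 0 0 + S 1 1*R 0 0^2))*hA +
      (4*(S 0 0/(2*R 0 0))*R 1 0^2*R 0 0*α 1
        - 2*α 1*(S 0 0*R 1 0^2 - (S 0 1 + S 1 0)*R 1 0*R 0 0 + S 1 1*R 0 0^2))*hc
  have hC2 : S 0 0*(θray2 S μ R 0 + α 0) + ((S 0 1 + S 1 0)*α 1 + 2*μ 0) = 0 := by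
    have hmul : (S 0 0*(θray2 S μ R 0 + α 0) + ((S 0 1 + S 1 0)*α 1 + 2*μ 0)) *
        (S 0 0*R 1 0^2 - (S 0 1 + S 1 0)*R 1 0*R 0 0 + S 1 1*R 0 0^2) = 0 := by
      linear_combination key2' + S 0 0*hray2_0
    rcases mul_eq_zero.mp hmul with h | h
    · exact h
    · exact absurd h hQ2ne
  have hroots2 : ∀ x : ℝ, gam S μ ![x, α 1] = 0 → x ≠ θray2 S μ R 0 → x = α 0 := by
    intro x hx hne
    have hvec : ![θray2 S μ R 0, α 1] = θray2 S μ R := by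
      funext i; fin_cases i
      · simp
      · simpa using hray21.symm
    have hr0 : gam S μ ![θray2 S μ R 0, α 1] = 0 := by rw [hvec]; exact hgr2
    rw [hgexp] at hx hr0
    have hfact : (x - θray2 S μ R 0) *
        (S 0 0*(x + θray2 S μ R 0) + (S 0 1 + S 1 0)*α 1 + 2*μ 0) = 0 := by
      linear_combination (-2)*hx + 2*hr0
    rcases mul_eq_zero.mp hfact with h | h
    · exact absurd (sub_eq_zero.mp h) hne
    · have : S 0 0 * x = S 0 0 * α 0 := by linear_combination h - hC2
      exact mul_left_cancel₀ (ne_of_gt hS00) this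
  ----------------------------------------------------------------
  refine ⟨main1, hga, ?_, ?_⟩
  · -- α = tθ1r
    rcases htθ1r with ⟨hrm, hteq⟩ | ⟨_, hg0, ht0, ht1⟩
    · -- ray1 is the max point
      have hxm : θmax1 0 = α 0 := by rw [← hrm]; exact hray10
      have hmaxfun : ∀ x y : ℝ, gam S μ ![x,y] = 0 → x ≤ θmax1 0 := by
        intro x y h
        have := hmax1.2 ![x,y] h
        simpa using this
      have h1' : gam S μ ![θmax1 0, α 1] = 0 := by
        have hv : ![θmax1 0, α 1] = α := by
          funext i; fin_cases i
          · simpa using hxm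
          · simp
        rw [hv]; exact hga
      have h2' : gam S μ ![θmax1 0, θmax1 1] = 0 := by
        have hv : ![θmax1 0, θmax1 1] = θmax1 := by
          funext i; fin_cases i <;> simp
        rw [hv]; exact hmax1.1
      have hy : α 1 = θmax1 1 :=
        quad_max_unique (S 0 0) (-(S 0 1 + S 1 0)/2) (-μ 0) (S 1 1) (-μ 1) hS00 hS11
          (fun x y => gam S μ ![x,y]) hgexp (θmax1 0) hmaxfun (α 1) (θmax1 1) h1' h2'
      rw [hteq]
      funext i; fin_cases i
      · exact hxm.symm
      · exact hy
    · -- generic case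
      have hx0 : α 0 = tθ1r 0 := (ht0.trans hray10).symm
      have hv : ![α 0, tθ1r 1] = tθ1r := by
        funext i; fin_cases i
        · simpa using hx0
        · simp
      have hroot := hroots1 (tθ1r 1) (by rw [hv]; exact hg0) ht1
      funext i; fin_cases i
      · exact hx0
      · exact hroot.symm
  · -- α = tθ2r
    rcases htθ2r with ⟨hrm, hteq⟩ | ⟨_, hg0, ht0, ht1⟩
    · have hym : θmax2 1 = α 1 := by rw [← hrm]; exact hray21
      have hmaxfun : ∀ x y : ℝ, gam S μ ![y,x] = 0 → x ≤ θmax2 1 := by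
        intro x y h
        have := hmax2.2 ![y,x] h
        simpa using this
      have hgexp' : ∀ x y : ℝ, gam S μ ![y,x] =
          -(S 1 1/2)*x^2 + (-(S 0 1 + S 1 0)/2)*x*y - (S 0 0/2)*y^2 + (-μ 1)*x + (-μ 0)*y := by
        intro x y; rw [hgexp]; ring
      have h1' : gam S μ ![α 0, θmax2 1] = 0 := by
        have hv : ![α 0, θmax2 1] = α := by
          funext i; fin_cases i
          · simp
          · simpa using hym
        rw [hv]; exact hga
      have h2' : gam S μ ![θmax2 0, θmax2 1] = 0 := by
        have hv : ![θmax2 0, θmax2 1] = θmax2 := by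
          funext i; fin_cases i <;> simp
        rw [hv]; exact hmax2.1
      have hy : α 0 = θmax2 0 :=
        quad_max_unique (S 1 1) (-(S 0 1 + S 1 0)/2) (-μ 1) (S 0 0) (-μ 0) hS11 hS00
          (fun x y => gam S μ ![y,x]) hgexp' (θmax2 1) hmaxfun (α 0) (θmax2 0) h1' h2'
      rw [hteq]
      funext i; fin_cases i
      · exact hy
      · exact hym.symm
    · have hx1 : α 1 = tθ2r 1 := (ht0.trans hray21).symm
      have hv : ![tθ2r 0, α 1] = tθ2r := by
        funext i; fin_cases i
        · simp
        · simpa using hx1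
      have hroot := hroots2 (tθ2r 0) (by rw [hv]; exact hg0) ht1
      funext i; fin_cases i
      · exact hroot.symm
      · exact hx1
end
end

section
/- Let f : [0, ∞) → [0, ∞) be integrable on [0, ∞) and ultimately nonincreasing. Let n ≥ 1 be an integer, κ ∈ ℝ, b > 0 and α ≥ 0. If lim_{x→∞} Tⁿ(f)(x) / (x^κ e^{−αx}) = b, then lim_{x→∞} f(x) / (x^κ e^{−αx}) = αⁿ b. -/
open MeasureTheory Filter Set Real

noncomputable section

/-- The iterated tail-integration operator: `Titer 0 f = f` and
`Titer (n+1) f x = ∫_x^∞ Titer n f u du`. -/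
def Titer : ℕ → (ℝ → ℝ) → ℝ → ℝ
  | 0, f => f
  | n + 1, f => fun x => ∫ u in Set.Ioi x, Titer n f u

lemma tail_diff' (g : ℝ → ℝ) {X a b : ℝ} (hint : IntegrableOn g (Set.Ioi X))
    (ha : X ≤ a) (hab : a ≤ b) :
    (∫ u in Set.Ioi a, g u) - (∫ u in Set.Ioi b, g u) = ∫ u in Set.Ioc a b, g u := by
  have h1 : IntegrableOn g (Set.Ioi a) := hint.mono_set (Set.Ioi_subset_Ioi ha)
  have h2 : IntegrableOn g (Set.Ioi b) := h1.mono_set (Set.Ioi_subset_Ioi hab)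
  have h3 : IntegrableOn g (Set.Ioc a b) := h1.mono_set Set.Ioc_subset_Ioi_self
  have hu : Set.Ioi a = Set.Ioc a b ∪ Set.Ioi b := (Set.Ioc_union_Ioi_eq_Ioi hab).symm
  have hd : Disjoint (Set.Ioc a b) (Set.Ioi b) := by
    apply Set.disjoint_left.mpr
    intro u hu1 hu2
    exact absurd hu2 (not_lt.mpr hu1.2)
  rw [hu, setIntegral_union hd measurableSet_Ioi h3 h2]
  ring

lemma integral_Ioc_le' (g : ℝ → ℝ) {X a b : ℝ} (hint : IntegrableOn g (Set.Ioi X))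
    (hmono : AntitoneOn g (Set.Ici X)) (ha : X ≤ a) (hab : a ≤ b) :
    (∫ u in Set.Ioc a b, g u) ≤ (b - a) * g a := by
  have hi : IntegrableOn g (Set.Ioc a b) :=
    (hint.mono_set (Set.Ioi_subset_Ioi ha)).mono_set Set.Ioc_subset_Ioi_self
  have h := setIntegral_mono_on hi
    (integrableOn_const (C := g a) measure_Ioc_lt_top.ne) measurableSet_Ioc
    (fun u hu => hmono (Set.mem_Ici.mpr ha) (Set.mem_Ici.mpr (le_trans ha hu.1.le)) hu.1.le)
  simpa [setIntegral_const, Real.volume_Ioc, ENNReal.toReal_ofReal (sub_nonneg.mpr hab), max_eq_left (sub_nonneg.mpr hab)] using h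

lemma integral_Ioc_ge' (g : ℝ → ℝ) {X a b : ℝ} (hint : IntegrableOn g (Set.Ioi X))
    (hmono : AntitoneOn g (Set.Ici X)) (ha : X ≤ a) (hab : a ≤ b) :
    (b - a) * g b ≤ ∫ u in Set.Ioc a b, g u := by
  have hi : IntegrableOn g (Set.Ioc a b) :=
    (hint.mono_set (Set.Ioi_subset_Ioi ha)).mono_set Set.Ioc_subset_Ioi_self
  have h := setIntegral_mono_on
    (integrableOn_const (C := g b) measure_Ioc_lt_top.ne) hi measurableSet_Ioc
    (fun u hu => hmono (Set.mem_Ici.mpr (le_trans ha hu.1.le))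
      (Set.mem_Ici.mpr (le_trans ha hab)) hu.2)
  simpa [setIntegral_const, Real.volume_Ioc, ENNReal.toReal_ofReal (sub_nonneg.mpr hab), max_eq_left (sub_nonneg.mpr hab)] using h

lemma ratio_tendsto' (κ α d : ℝ) :
    Tendsto (fun x : ℝ => ((x + d) ^ κ * Real.exp (-α * (x + d))) / (x ^ κ * Real.exp (-α * x)))
      atTop (nhds (Real.exp (-α * d))) := by
  have h1 : Tendsto (fun x : ℝ => (x + d) / x) atTop (nhds 1) := by
    have h : Tendsto (fun x : ℝ => 1 + d / x) atTop (nhds (1 + 0)) :=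
      tendsto_const_nhds.add (tendsto_const_nhds.div_atTop tendsto_id)
    rw [add_zero] at h
    refine h.congr' ?_
    filter_upwards [eventually_ne_atTop (0:ℝ)] with x hx
    field_simp
  have h2 : Tendsto (fun x : ℝ => ((x + d) / x) ^ κ) atTop (nhds 1) := by
    have := h1.rpow_const (p := κ) (Or.inl one_ne_zero)
    simpa using this
  have h3 : Tendsto (fun x : ℝ => ((x + d) / x) ^ κ * Real.exp (-α * d)) atTop
      (nhds (Real.exp (-α * d))) := by
    simpa using h2.mul_const (Real.exp (-α * d))
  refine h3.congr' ?_
  filter_upwards [eventually_gt_atTop (max 0 (-d))] with x hx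
  have hx0 : (0:ℝ) < x := lt_of_le_of_lt (le_max_left _ _) hx
  have hxd : (0:ℝ) < x + d := by
    have := lt_of_le_of_lt (le_max_right 0 (-d)) hx; linarith
  rw [Real.div_rpow hxd.le hx0.le,
    show -α * d = (-α * (x + d)) - (-α * x) by ring, Real.exp_sub, div_mul_div_comm]

lemma slope_exp' (a : ℝ) :
    Tendsto (fun h : ℝ => (Real.exp (a * h) - 1) / h) (nhdsWithin 0 (Set.Ioi 0)) (nhds a) := by
  have hd : HasDerivAt (fun t : ℝ => Real.exp (a * t)) a 0 := by
    have h1 : HasDerivAt (fun t : ℝ => a * t) a 0 := by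
      simpa using (hasDerivAt_id (0:ℝ)).const_mul a
    simpa [Function.comp_def] using (Real.hasDerivAt_exp (a * 0)).comp 0 h1
  have h := hasDerivAt_iff_tendsto_slope.mp hd
  have h2 := h.mono_left (nhdsWithin_mono 0 (fun x hx => by
    simpa using (ne_of_gt hx)))
  refine h2.congr' ?_
  filter_upwards [self_mem_nhdsWithin] with h hh
  simp [slope_def_field, div_eq_mul_inv]

lemma alg1' (a b p q h : ℝ) (hp : p ≠ 0) (hq : q ≠ 0) (hh : h ≠ 0) :
    (a / p * (p / q) - b / q) / h = ((a - b) / h) / q := by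
  field_simp

lemma alg2' (a b p q h : ℝ) (hp : p ≠ 0) (hq : q ≠ 0) (hh : h ≠ 0) :
    (b / q - a / p * (p / q)) / h = ((b - a) / h) / q := by
  field_simp

lemma step' (g : ℝ → ℝ) (X : ℝ)
    (hint : IntegrableOn g (Set.Ioi X))
    (hmono : AntitoneOn g (Set.Ici X))
    (κ α c : ℝ)
    (hlim : Tendsto (fun x : ℝ => (∫ u in Set.Ioi x, g u) / (x ^ κ * Real.exp (-α * x)))
      atTop (nhds c)) :
    Tendsto (fun x : ℝ => g x / (x ^ κ * Real.exp (-α * x))) atTop (nhds (α * c)) := by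
  set φ : ℝ → ℝ := fun x => x ^ κ * Real.exp (-α * x) with hφ
  set Tg : ℝ → ℝ := fun x => ∫ u in Set.Ioi x, g u with hTgdef
  have hlim' : Tendsto (fun x : ℝ => Tg x / φ x) atTop (nhds c) := hlim
  have hφpos : ∀ y : ℝ, 0 < y → 0 < φ y := fun y hy =>
    mul_pos (Real.rpow_pos_of_pos hy κ) (Real.exp_pos _)
  rw [Metric.tendsto_nhds]
  intro ε hε
  have SU : Tendsto (fun h : ℝ => (c * Real.exp (α * h) - c) / h)
      (nhdsWithin 0 (Set.Ioi 0)) (nhds (α * c)) := by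
    have h := (slope_exp' α).const_mul c
    have heq : (fun h : ℝ => c * ((Real.exp (α * h) - 1) / h))
        = fun h : ℝ => (c * Real.exp (α * h) - c) / h := by
      funext h; ring
    rw [heq] at h
    rw [mul_comm α c]
    exact h
  have SL : Tendsto (fun h : ℝ => (c - c * Real.exp (-α * h)) / h)
      (nhdsWithin 0 (Set.Ioi 0)) (nhds (α * c)) := by
    have h := (slope_exp' (-α)).const_mul (-c)
    have heq : (fun h : ℝ => -c * ((Real.exp (-α * h) - 1) / h))
        = fun h : ℝ => (c - c * Real.exp (-α * h)) / h := by
      funext h; ring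
    rw [heq] at h
    have heq2 : -c * -α = α * c := by ring
    rw [heq2] at h
    exact h
  have hmem : ∀ᶠ h in nhdsWithin (0:ℝ) (Set.Ioi 0),
      |(c * Real.exp (α * h) - c) / h - α * c| < ε / 2 ∧
      |(c - c * Real.exp (-α * h)) / h - α * c| < ε / 2 ∧ 0 < h := by
    filter_upwards [Metric.tendsto_nhds.mp SU (ε/2) (by positivity),
      Metric.tendsto_nhds.mp SL (ε/2) (by positivity), self_mem_nhdsWithin] with h h1 h2 h3
    exact ⟨by simpa [Real.dist_eq] using h1, by simpa [Real.dist_eq] using h2, h3⟩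
  obtain ⟨h, hU2, hL2, hh⟩ := hmem.exists
  have shiftU : Tendsto (fun x : ℝ => x + (-h)) atTop atTop :=
    tendsto_atTop_add_const_right _ _ tendsto_id
  have TU : Tendsto (fun x : ℝ => Tg (x + (-h)) / φ (x + (-h))) atTop (nhds c) :=
    hlim'.comp shiftU
  have ratioU : Tendsto (fun x : ℝ => φ (x + (-h)) / φ x) atTop
      (nhds (Real.exp (α * h))) := by
    have hr := ratio_tendsto' κ α (-h)
    rw [show -α * -h = α * h by ring] at hr
    exact hr
  have U0 : Tendsto (fun x : ℝ =>
        ((Tg (x + (-h)) / φ (x + (-h))) * (φ (x + (-h)) / φ x) - Tg x / φ x) / h)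
      atTop (nhds ((c * Real.exp (α * h) - c) / h)) :=
    ((TU.mul ratioU).sub hlim').div_const h
  have UT : Tendsto (fun x : ℝ => ((Tg (x - h) - Tg x) / h) / φ x) atTop
      (nhds ((c * Real.exp (α * h) - c) / h)) := by
    refine U0.congr' ?_
    filter_upwards [eventually_gt_atTop (max 0 h)] with x hx
    have hx0 : (0:ℝ) < x := lt_of_le_of_lt (le_max_left _ _) hx
    have hxh : (0:ℝ) < x - h := by
      have := lt_of_le_of_lt (le_max_right 0 h) hx; linarith
    have hxx : x + (-h) = x - h := by ring
    rw [hxx]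
    exact alg1' _ _ _ _ _ (hφpos _ hxh).ne' (hφpos x hx0).ne' hh.ne'
  have shiftL : Tendsto (fun x : ℝ => x + h) atTop atTop :=
    tendsto_atTop_add_const_right _ _ tendsto_id
  have TL : Tendsto (fun x : ℝ => Tg (x + h) / φ (x + h)) atTop (nhds c) :=
    hlim'.comp shiftL
  have ratioL : Tendsto (fun x : ℝ => φ (x + h) / φ x) atTop
      (nhds (Real.exp (-α * h))) := ratio_tendsto' κ α h
  have L0 : Tendsto (fun x : ℝ =>
        (Tg x / φ x - (Tg (x + h) / φ (x + h)) * (φ (x + h) / φ x)) / h)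
      atTop (nhds ((c - c * Real.exp (-α * h)) / h)) :=
    (hlim'.sub (TL.mul ratioL)).div_const h
  have LT : Tendsto (fun x : ℝ => ((Tg x - Tg (x + h)) / h) / φ x) atTop
      (nhds ((c - c * Real.exp (-α * h)) / h)) := by
    refine L0.congr' ?_
    filter_upwards [eventually_gt_atTop (max 0 (-h))] with x hx
    have hx0 : (0:ℝ) < x := lt_of_le_of_lt (le_max_left _ _) hx
    have hxh : (0:ℝ) < x + h := by linarith
    exact alg2' _ _ _ _ _ (hφpos _ hxh).ne' (hφpos x hx0).ne' hh.ne'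
  have hbound : ∀ᶠ x in atTop,
      ((Tg x - Tg (x + h)) / h) / φ x ≤ g x / φ x ∧
      g x / φ x ≤ ((Tg (x - h) - Tg x) / h) / φ x := by
    filter_upwards [eventually_gt_atTop (max 0 (X + h))] with x hx
    have hx0 : (0:ℝ) < x := lt_of_le_of_lt (le_max_left _ _) hx
    have hxh : X ≤ x - h := by
      have := lt_of_le_of_lt (le_max_right 0 (X + h)) hx; linarith
    have hXx : X ≤ x := by linarith [hh.le]
    have hφx : 0 < φ x := hφpos x hx0
    have id1 : Tg (x - h) - Tg x = ∫ u in Set.Ioc (x - h) x, g u :=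
      tail_diff' g hint hxh (by linarith)
    have id2 : Tg x - Tg (x + h) = ∫ u in Set.Ioc x (x + h), g u :=
      tail_diff' g hint hXx (by linarith)
    constructor
    · refine div_le_div_of_nonneg_right ?_ hφx.le
      rw [id2, div_le_iff₀ hh]
      have hle := integral_Ioc_le' g hint hmono hXx (show x ≤ x + h by linarith)
      calc (∫ u in Set.Ioc x (x + h), g u) ≤ (x + h - x) * g x := hle
        _ = g x * h := by ring
    · refine div_le_div_of_nonneg_right ?_ hφx.le
      rw [le_div_iff₀ hh, id1]
      have hge := integral_Ioc_ge' g hint hmono hxh (show x - h ≤ x by linarith)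
      calc g x * h = (x - (x - h)) * g x := by ring
        _ ≤ ∫ u in Set.Ioc (x - h) x, g u := hge
  have hUε := Metric.tendsto_nhds.mp UT (ε/2) (by positivity)
  have hLε := Metric.tendsto_nhds.mp LT (ε/2) (by positivity)
  filter_upwards [hbound, hUε, hLε] with x hb hu hl
  obtain ⟨hb1, hb2⟩ := hb
  rw [Real.dist_eq] at hu hl ⊢
  rw [abs_lt] at hu hl ⊢
  rw [abs_lt] at hU2 hL2
  constructor
  · linarith [hl.1, hL2.1]
  · linarith [hu.2, hU2.2]

lemma Titer_zero' (f : ℝ → ℝ) (j : ℕ) (hj : ∀ x, Titer j f x = 0) :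
    ∀ k, j ≤ k → ∀ x, Titer k f x = 0 := by
  intro k hk
  induction k, hk using Nat.le_induction with
  | base => exact hj
  | succ k hk ih =>
    intro x
    show (∫ u in Set.Ioi x, Titer k f u) = 0
    simp [ih]

/-- Lemma 6.1: if `f` is nonnegative, integrable and ultimately
nonincreasing and `Tⁿ(f)(x) ~ b x^κ e^{-αx}`, then `f(x) ~ αⁿ b x^κ e^{-αx}`. -/
theorem stmt_14
    (f : ℝ → ℝ)
    (hf_nonneg : ∀ x, 0 ≤ x → 0 ≤ f x)
    (hf_int : IntegrableOn f (Set.Ici 0))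
    (hf_mono : ∃ x₀ : ℝ, 0 ≤ x₀ ∧ AntitoneOn f (Set.Ici x₀))
    (n : ℕ) (hn : 1 ≤ n) (κ : ℝ) (b : ℝ) (hb : 0 < b) (α : ℝ) (hα : 0 ≤ α)
    (hasym : Tendsto (fun x : ℝ => Titer n f x / (x ^ κ * Real.exp (-α * x)))
      atTop (nhds b)) :
    Tendsto (fun x : ℝ => f x / (x ^ κ * Real.exp (-α * x)))
      atTop (nhds (α ^ n * b)) := by
  obtain ⟨x₀, hx₀, hf_anti⟩ := hf_mono
  -- integrability, antitonicity and nonnegativity of each iterate near infinity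
  have H : ∀ m, m < n → ∃ X, 0 ≤ X ∧ IntegrableOn (Titer m f) (Set.Ioi X) ∧
      AntitoneOn (Titer m f) (Set.Ici X) ∧ ∀ x, X ≤ x → 0 ≤ Titer m f x := by
    intro m
    induction m with
    | zero =>
      intro _
      refine ⟨x₀, hx₀, hf_int.mono_set (fun x hx => le_trans hx₀ (le_of_lt hx)), hf_anti,
        fun x hx => hf_nonneg x (le_trans hx₀ hx)⟩
    | succ m ih =>
      intro hmn
      obtain ⟨X, hX0, hXi, hXa, hXp⟩ := ih (by omega)
      have hpos' : ∀ x, X ≤ x → 0 ≤ Titer (m + 1) f x := by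
        intro x hx
        show 0 ≤ ∫ u in Set.Ioi x, Titer m f u
        apply setIntegral_nonneg measurableSet_Ioi
        intro u hu
        exact hXp u (le_of_lt (lt_of_le_of_lt hx hu))
      have hanti' : AntitoneOn (Titer (m + 1) f) (Set.Ici X) := by
        intro a ha bb hbb hab
        show (∫ u in Set.Ioi bb, Titer m f u) ≤ ∫ u in Set.Ioi a, Titer m f u
        have hdiff := tail_diff' (Titer m f) hXi ha hab
        have hnn : 0 ≤ ∫ u in Set.Ioc a bb, Titer m f u := by
          apply setIntegral_nonneg measurableSet_Ioc
          intro u hu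
          exact hXp u (le_trans ha hu.1.le)
        linarith [hdiff]
      have hint' : ∃ Y, X ≤ Y ∧ IntegrableOn (Titer (m + 1) f) (Set.Ioi Y) := by
        by_contra hcon
        push_neg at hcon
        have hz : ∀ x, Titer (m + 2) f x = 0 := by
          intro x
          show (∫ u in Set.Ioi x, Titer (m + 1) f u) = 0
          apply integral_undef
          intro hI
          have hI' : IntegrableOn (Titer (m + 1) f) (Set.Ioi x) := hI
          exact hcon (max X x) (le_max_left _ _)
            (hI'.mono_set (Set.Ioi_subset_Ioi (le_max_right _ _)))
        have hzn : ∀ x, Titer n f x = 0 := Titer_zero' f (m + 2) hz n (by omega)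
        have h0 : Tendsto (fun _ : ℝ => (0:ℝ)) atTop (nhds b) := by
          refine hasym.congr ?_
          intro x
          rw [hzn x, zero_div]
        have : (0:ℝ) = b := tendsto_nhds_unique tendsto_const_nhds h0
        linarith
      obtain ⟨Y, hXY, hYint⟩ := hint'
      exact ⟨Y, le_trans hX0 hXY, hYint, hanti'.mono (Set.Ici_subset_Ici.mpr hXY),
        fun x hx => hpos' x (le_trans hXY hx)⟩
  -- downward induction
  have key : ∀ j : ℕ, ∀ m : ℕ, m + j = n →
      Tendsto (fun x : ℝ => Titer m f x / (x ^ κ * Real.exp (-α * x))) atTop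
        (nhds (α ^ j * b)) := by
    intro j
    induction j with
    | zero =>
      intro m hm
      have hmn : m = n := by omega
      subst hmn
      simpa using hasym
    | succ j ih =>
      intro m hm
      have h2 := ih (m + 1) (by omega)
      obtain ⟨X, hX0, hXi, hXa, hXp⟩ := H m (by omega)
      have h2' : Tendsto (fun x : ℝ => (∫ u in Set.Ioi x, Titer m f u) /
          (x ^ κ * Real.exp (-α * x))) atTop (nhds (α ^ j * b)) := h2
      have hstep := step' (Titer m f) X hXi hXa κ α (α ^ j * b) h2'
      have heq : α * (α ^ j * b) = α ^ (j + 1) * b := by ring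
      rw [heq] at hstep
      exact hstep
  have := key n 0 (by omega)
  simpa [Titer] using this
end
end

section
/- Let f : [0, ∞) → [0, ∞) be integrable on [0, ∞) (not necessarily monotone). Let n ≥ 1 be an integer, κ ∈ ℝ, b > 0 and α ≥ 0. If lim_{x→∞} Tⁿ(f)(x) / (x^κ e^{−αx}) = b, then lim_{x→∞} T(f)(x) / (x^κ e^{−αx}) = α^{n−1} b. -/
open MeasureTheory Filter Set Real
open Topology

noncomputable section

lemma wratio (κ α s : ℝ) :
    Tendsto (fun x : ℝ => ((x + s) ^ κ * Real.exp (-α * (x + s))) / (x ^ κ * Real.exp (-α * x)))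
      atTop (𝓝 (Real.exp (-α * s))) := by
  have h0 : Tendsto (fun x : ℝ => 1 + s / x) atTop (𝓝 1) := by
    have : Tendsto (fun x : ℝ => s / x) atTop (𝓝 0) := tendsto_const_nhds.div_atTop tendsto_id
    simpa using (tendsto_const_nhds (x := (1:ℝ))).add this
  have hc : ContinuousAt (fun t : ℝ => t ^ κ) 1 :=
    Real.continuousAt_rpow_const 1 κ (Or.inl one_ne_zero)
  have h1 : Tendsto (fun x : ℝ => (1 + s / x) ^ κ) atTop (𝓝 1) := by
    have := hc.tendsto.comp h0
    simpa [Function.comp_def] using this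
  have h2 : Tendsto (fun x : ℝ => (1 + s / x) ^ κ * Real.exp (-α * s)) atTop
      (𝓝 (Real.exp (-α * s))) := by
    simpa using h1.mul (tendsto_const_nhds (x := Real.exp (-α * s)))
  refine h2.congr' ?_
  filter_upwards [eventually_gt_atTop (max 0 (-s))] with x hx
  have hx0 : 0 < x := lt_of_le_of_lt (le_max_left _ _) hx
  have hxs : 0 < x + s := by
    have := lt_of_le_of_lt (le_max_right 0 (-s)) hx
    linarith
  have he : 1 + s / x = (x + s) / x := by field_simp
  rw [he, Real.div_rpow hxs.le hx0.le]
  rw [mul_div_mul_comm]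
  congr 1
  rw [← Real.exp_sub]
  ring_nf

lemma exists_good_h (c α ε : ℝ) (hε : 0 < ε) :
    ∃ h : ℝ, 0 < h ∧ (c * Real.exp (α * h) - c) / h < α * c + ε ∧
      α * c - ε < (c - c * Real.exp (-α * h)) / h := by
  have hlin : HasDerivAt (fun t : ℝ => α * t) α 0 := by
    simpa using (hasDerivAt_id (0:ℝ)).const_mul α
  have hF : HasDerivAt (fun t : ℝ => c * Real.exp (α * t)) (α * c) 0 := by
    have := (hlin.exp).const_mul c
    simpa [mul_comm] using this
  have hlin2 : HasDerivAt (fun t : ℝ => -α * t) (-α) 0 := by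
    simpa using (hasDerivAt_id (0:ℝ)).const_mul (-α)
  have hF2 : HasDerivAt (fun t : ℝ => -(c * Real.exp (-α * t))) (α * c) 0 := by
    have := ((hlin2.exp).const_mul c).neg
    simpa [mul_comm, Pi.neg_def] using this
  have hsub : (Set.Ioi (0:ℝ)) ⊆ {x | x ≠ 0} := fun x hx => ne_of_gt hx
  have t1 : Tendsto (slope (fun t : ℝ => c * Real.exp (α * t)) 0) (𝓝[>] 0) (𝓝 (α * c)) :=
    (hasDerivAt_iff_tendsto_slope.mp hF).mono_left (nhdsWithin_mono 0 hsub)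
  have t2 : Tendsto (slope (fun t : ℝ => -(c * Real.exp (-α * t))) 0) (𝓝[>] 0) (𝓝 (α * c)) :=
    (hasDerivAt_iff_tendsto_slope.mp hF2).mono_left (nhdsWithin_mono 0 hsub)
  have e1 := t1.eventually_lt_const (show α * c < α * c + ε by linarith)
  have e2 := t2.eventually_const_lt (show α * c - ε < α * c by linarith)
  have e3 : ∀ᶠ h : ℝ in 𝓝[>] 0, h ∈ Set.Ioi (0:ℝ) := self_mem_nhdsWithin
  obtain ⟨h, h1, h3⟩ := ((e1.and e2).and e3).exists
  refine ⟨h, h3, ?_, ?_⟩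
  · have := h1.1
    simp only [slope, sub_zero, vsub_eq_sub] at this
    rw [div_eq_inv_mul]
    simpa using this
  · have := h1.2
    simp only [slope, sub_zero, vsub_eq_sub] at this
    rw [div_eq_inv_mul]
    have heq : c - c * Real.exp (-α * h) = -(c * Real.exp (-α * h)) - -(c * Real.exp (-α * 0)) := by
      simp; ring
    rw [heq]
    simpa using this

/-- Shifted numerator limit. -/
lemma shifted_lim (G : ℝ → ℝ) (κ α c s : ℝ)
    (hG : Tendsto (fun x : ℝ => G x / (x ^ κ * Real.exp (-α * x))) atTop (𝓝 c)) :
    Tendsto (fun x : ℝ => G (x + s) / (x ^ κ * Real.exp (-α * x))) atTop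
      (𝓝 (c * Real.exp (-α * s))) := by
  have h1 : Tendsto (fun x : ℝ => G (x + s) / ((x + s) ^ κ * Real.exp (-α * (x + s))))
      atTop (𝓝 c) := hG.comp (tendsto_atTop_add_const_right atTop s tendsto_id)
  have h2 := h1.mul (wratio κ α s)
  refine h2.congr' ?_
  filter_upwards [eventually_gt_atTop (max 0 (-s))] with x hx
  have hxs : 0 < x + s := by
    have := lt_of_le_of_lt (le_max_right 0 (-s)) hx
    linarith
  have hw : (x + s) ^ κ * Real.exp (-α * (x + s)) ≠ 0 :=
    (mul_pos (Real.rpow_pos_of_pos hxs κ) (Real.exp_pos _)).ne'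
  field_simp

/-- The Tauberian step: from the asymptotics of `∫_x^∞ g` deduce asymptotics of `g`. -/
lemma tauberian (g : ℝ → ℝ) (hg0 : ∀ x ∈ Ici (0:ℝ), 0 ≤ g x)
    (hga : AntitoneOn g (Ici 0)) (hgi : IntegrableOn g (Ici 0))
    (κ c α : ℝ) (hα : 0 ≤ α)
    (hG : Tendsto (fun x : ℝ => (∫ u in Ioi x, g u) / (x ^ κ * Real.exp (-α * x)))
      atTop (𝓝 c)) :
    Tendsto (fun x : ℝ => g x / (x ^ κ * Real.exp (-α * x))) atTop (𝓝 (α * c)) := by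
  set w : ℝ → ℝ := fun x => x ^ κ * Real.exp (-α * x) with hw
  set G : ℝ → ℝ := fun x => ∫ u in Ioi x, g u with hGdef
  have hwpos : ∀ x : ℝ, 0 < x → 0 < w x := fun x hx =>
    mul_pos (Real.rpow_pos_of_pos hx κ) (Real.exp_pos _)
  -- basic integral bounds
  have key : ∀ y : ℝ, 0 ≤ y → ∀ h : ℝ, 0 < h →
      g (y + h) * h ≤ G y - G (y + h) ∧ G y - G (y + h) ≤ g y * h := by
    intro y hy h hh
    have hsub1 : Ioi y ⊆ Ici (0:ℝ) := fun u hu => le_trans hy (le_of_lt hu)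
    have hsub2 : Ioc y (y + h) ⊆ Ici (0:ℝ) := fun u hu => le_trans hy (le_of_lt hu.1)
    have hint1 : IntegrableOn g (Ioi y) := hgi.mono_set hsub1
    have hint2 : IntegrableOn g (Ioc y (y + h)) := hgi.mono_set hsub2
    have hint3 : IntegrableOn g (Ioi (y + h)) := hgi.mono_set (fun u hu => by
      exact le_trans hy (by linarith [hu.out]))
    have hsplit : G y = (∫ u in Ioc y (y + h), g u) + G (y + h) := by
      simp only [hGdef]
      have hun : Ioc y (y + h) ∪ Ioi (y + h) = Ioi y := Ioc_union_Ioi_eq_Ioi (by linarith)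
      rw [← hun, setIntegral_union (Ioc_disjoint_Ioi le_rfl) measurableSet_Ioi hint2 hint3]
    have hvol : (volume (Ioc y (y + h))).toReal = h := by
      rw [Real.volume_Ioc]
      simp [ENNReal.toReal_ofReal hh.le]
    have hub : (∫ u in Ioc y (y + h), g u) ≤ g y * h := by
      have hmono := setIntegral_mono_on hint2
        (integrableOn_const (by rw [Real.volume_Ioc]; exact ENNReal.ofReal_ne_top))
        measurableSet_Ioc (fun u hu => hga hy (hsub2 hu) hu.1.le)
      calc (∫ u in Ioc y (y + h), g u) ≤ ∫ _ in Ioc y (y + h), g y := hmono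
        _ = g y * h := by rw [setIntegral_const, measureReal_def, hvol, smul_eq_mul, mul_comm]
    have hlb : g (y + h) * h ≤ ∫ u in Ioc y (y + h), g u := by
      have hyh : (y + h) ∈ Ici (0:ℝ) := by simp only [mem_Ici]; linarith
      have hmono := setIntegral_mono_on
        (integrableOn_const (by rw [Real.volume_Ioc]; exact ENNReal.ofReal_ne_top))
        hint2 measurableSet_Ioc (fun u hu => hga (hsub2 hu) hyh hu.2)
      calc g (y + h) * h = ∫ _ in Ioc y (y + h), g (y + h) := by
            rw [setIntegral_const, measureReal_def, hvol, smul_eq_mul, mul_comm]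
        _ ≤ ∫ u in Ioc y (y + h), g u := hmono
    constructor
    · rw [hsplit]; linarith
    · rw [hsplit]; linarith
  -- now the ε-argument
  rw [Metric.tendsto_nhds]
  intro ε hε
  obtain ⟨h, hh, hup, hlo⟩ := exists_good_h c α (ε / 2) (by linarith)
  -- upper bound function and its limit
  have hUlim : Tendsto (fun x : ℝ => (G (x + (-h)) / w x - G x / w x) / h) atTop
      (𝓝 ((c * Real.exp (α * h) - c) / h)) := by
    have := ((shifted_lim G κ α c (-h) hG).sub hG).div_const h
    have heq : -α * -h = α * h := by ring
    rw [heq] at this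
    exact this
  have hLlim : Tendsto (fun x : ℝ => (G x / w x - G (x + h) / w x) / h) atTop
      (𝓝 ((c - c * Real.exp (-α * h)) / h)) := by
    exact (hG.sub (shifted_lim G κ α c h hG)).div_const h
  have hupev := hUlim.eventually_lt_const hup
  have hloev := hLlim.eventually_const_lt hlo
  filter_upwards [hupev, hloev, eventually_ge_atTop (max h 1)] with x hx1 hx2 hx3
  have hxh : h ≤ x := le_trans (le_max_left _ _) hx3
  have hx0 : 0 < x := lt_of_lt_of_le zero_lt_one (le_trans (le_max_right h 1) hx3)
  have hwx : 0 < w x := hwpos x hx0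
  -- upper bound on g x / w x
  have hgub : g x / w x ≤ (G (x + (-h)) / w x - G x / w x) / h := by
    have hbase := (key (x - h) (by linarith) h hh).1
    rw [sub_add_cancel] at hbase
    -- hbase : g x * h ≤ G (x - h) - G x
    have hxmh : x + (-h) = x - h := by ring
    rw [hxmh, div_sub_div_same, div_div]
    rw [div_le_div_iff₀ hwx (mul_pos hwx hh)]
    calc g x * (w x * h) = g x * h * w x := by ring
      _ ≤ (G (x - h) - G x) * w x := by
          exact mul_le_mul_of_nonneg_right hbase hwx.le
  have hglb : (G x / w x - G (x + h) / w x) / h ≤ g x / w x := by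
    have hbase := (key x hx0.le h hh).2
    rw [div_sub_div_same, div_div]
    rw [div_le_div_iff₀ (mul_pos hwx hh) hwx]
    calc (G x - G (x + h)) * w x ≤ g x * h * w x :=
          mul_le_mul_of_nonneg_right hbase hwx.le
      _ = g x * (w x * h) := by ring
  rw [Real.dist_eq, abs_sub_lt_iff]
  constructor
  · have : g x / w x < α * c + ε / 2 := lt_of_le_of_lt hgub hx1
    linarith
  · have : α * c - ε / 2 < g x / w x := lt_of_lt_of_le hx2 hglb
    linarith

lemma T_nonneg (g : ℝ → ℝ) (hg0 : ∀ x ∈ Ici (0:ℝ), 0 ≤ g x) :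
    ∀ x ∈ Ici (0:ℝ), 0 ≤ ∫ u in Ioi x, g u := by
  intro x hx
  exact setIntegral_nonneg measurableSet_Ioi
    (fun u hu => hg0 u (mem_Ici.mpr (le_trans (mem_Ici.mp hx) (le_of_lt (mem_Ioi.mp hu)))))

lemma Titer_nonneg (f : ℝ → ℝ) (hf : ∀ x ∈ Ici (0:ℝ), 0 ≤ f x) :
    ∀ k, ∀ x ∈ Ici (0:ℝ), 0 ≤ Titer k f x := by
  intro k
  induction k with
  | zero => exact hf
  | succ m ih => exact T_nonneg (Titer m f) ih

lemma T_antitone (g : ℝ → ℝ) (hg0 : ∀ x ∈ Ici (0:ℝ), 0 ≤ g x)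
    (hgi : IntegrableOn g (Ici 0)) :
    AntitoneOn (fun x => ∫ u in Ioi x, g u) (Ici 0) := by
  intro x hx y hy hxy
  refine setIntegral_mono_set (hgi.mono_set (fun u hu => mem_Ici.mpr (le_trans (mem_Ici.mp hx) (le_of_lt (mem_Ioi.mp hu)))))
    ?_ (HasSubset.Subset.eventuallyLE (Ioi_subset_Ioi hxy))
  refine (ae_restrict_iff' measurableSet_Ioi).2 (ae_of_all _ ?_)
  exact fun u hu => hg0 u (mem_Ici.mpr (le_trans (mem_Ici.mp hx) (le_of_lt (mem_Ioi.mp hu))))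

/-- If `g` is antitone and nonneg on `[0,∞)` but not integrable there, its tail
integrals all vanish. -/
lemma T_of_nonintegrable (g : ℝ → ℝ) (hga : AntitoneOn g (Ici 0))
    (hgi : ¬ IntegrableOn g (Ici 0)) (x : ℝ) (hx : 0 ≤ x) :
    (∫ u in Ioi x, g u) = 0 := by
  refine integral_undef (fun hint => hgi ?_)
  have h1 : IntegrableOn g (Icc 0 x) :=
    AntitoneOn.integrableOn_isCompact isCompact_Icc (hga.mono Icc_subset_Ici_self)
  have h2 : Ici (0:ℝ) ⊆ Icc 0 x ∪ Ioi x := by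
    intro u hu
    rcases le_or_gt u x with h | h
    · exact Or.inl ⟨hu, h⟩
    · exact Or.inr h
  exact (h1.union hint).mono_set h2


/-- second part of Lemma 6.1: for any nonnegative integrable `f`
(not necessarily monotone), `Tⁿ(f)(x) ~ b x^κ e^{-αx}` implies
`T(f)(x) ~ α^{n-1} b x^κ e^{-αx}`. -/
theorem stmt_15
    (f : ℝ → ℝ)
    (hf_nonneg : ∀ x, 0 ≤ x → 0 ≤ f x)
    (hf_int : IntegrableOn f (Set.Ici 0))
    (n : ℕ) (hn : 1 ≤ n) (κ : ℝ) (b : ℝ) (hb : 0 < b) (α : ℝ) (hα : 0 ≤ α)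
    (hasym : Tendsto (fun x : ℝ => Titer n f x / (x ^ κ * Real.exp (-α * x)))
      atTop (nhds b)) :
    Tendsto (fun x : ℝ => Titer 1 f x / (x ^ κ * Real.exp (-α * x)))
      atTop (nhds (α ^ (n - 1) * b)) := by
  have hnn : ∀ k, ∀ x ∈ Ici (0:ℝ), 0 ≤ Titer k f x :=
    Titer_nonneg f (fun x hx => hf_nonneg x hx)
  -- integrability of all iterates below n
  have hint : ∀ k, k < n → IntegrableOn (Titer k f) (Ici 0) := by
    intro k
    induction k with
    | zero => intro _; exact hf_int
    | succ m ih =>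
      intro hkn
      have hmQ : IntegrableOn (Titer m f) (Ici 0) := ih (by omega)
      by_contra hk
      have hanti : AntitoneOn (Titer (m + 1) f) (Ici 0) :=
        T_antitone (Titer m f) (hnn m) hmQ
      -- Titer (m+2) f vanishes on [0,∞)
      have hzero : ∀ x ∈ Ici (0:ℝ), Titer (m + 2) f x = 0 := by
        intro x hx
        exact T_of_nonintegrable (Titer (m + 1) f) hanti hk x hx
      -- propagate zeros upward
      have hzero' : ∀ j, ∀ x ∈ Ici (0:ℝ), Titer (m + 2 + j) f x = 0 := by
        intro j
        induction j with
        | zero => exact hzero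
        | succ i ihz =>
          intro x hx
          have heq : Titer (m + 2 + (i + 1)) f x = ∫ u in Ioi x, Titer (m + 2 + i) f u := rfl
          rw [heq]
          rw [setIntegral_congr_fun measurableSet_Ioi
            (fun u hu => ihz u (le_trans hx (le_of_lt hu)))]
          exact integral_zero _ _
      have hzn : ∀ x ∈ Ici (0:ℝ), Titer n f x = 0 := by
        have hsum : m + 2 + (n - (m + 2)) = n := by omega
        intro x hx
        have h := hzero' (n - (m + 2)) x hx
        rwa [hsum] at h
      have h0 : Tendsto (fun x : ℝ => Titer n f x / (x ^ κ * Real.exp (-α * x))) atTop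
          (𝓝 0) := by
        refine tendsto_const_nhds.congr' ?_
        filter_upwards [eventually_ge_atTop (0:ℝ)] with x hx
        rw [hzn x hx, zero_div]
      exact absurd (tendsto_nhds_unique hasym h0) hb.ne'
  -- downward induction
  have main : ∀ j, j < n → Tendsto (fun x : ℝ => Titer (n - j) f x / (x ^ κ * Real.exp (-α * x)))
      atTop (𝓝 (α ^ j * b)) := by
    intro j
    induction j with
    | zero => intro _; simpa using hasym
    | succ i ih =>
      intro hin
      have hIH := ih (by omega)
      obtain ⟨m, hm⟩ : ∃ m, n - (i + 1) = m + 1 := ⟨n - (i + 1) - 1, by omega⟩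
      have hant : AntitoneOn (Titer (m + 1) f) (Ici 0) :=
        T_antitone (Titer m f) (hnn m) (hint m (by omega))
      have hGint : IntegrableOn (Titer (m + 1) f) (Ici 0) := by
        have := hint (m + 1) (by omega)
        exact this
      have hkey : n - i = (m + 1) + 1 := by omega
      have hG : Tendsto (fun x : ℝ => (∫ u in Ioi x, Titer (m + 1) f u) /
          (x ^ κ * Real.exp (-α * x))) atTop (𝓝 (α ^ i * b)) := by
        have heq : (fun x : ℝ => Titer (n - i) f x) =
            fun x : ℝ => ∫ u in Ioi x, Titer (m + 1) f u := by
          rw [hkey]; rfl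
        refine hIH.congr fun x => ?_
        rw [congrFun heq x]
      have := tauberian (Titer (m + 1) f) (hnn (m + 1)) hant hGint κ (α ^ i * b) α hα hG
      rw [← hm] at this
      have hpow : α * (α ^ i * b) = α ^ (i + 1) * b := by ring
      rwa [hpow] at this
  have hfin := main (n - 1) (by omega)
  have : n - (n - 1) = 1 := by omega
  rwa [this] at hfin
end
end
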